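/- arXiv:1801.02957 — 5 statements merged into one kernel-verified Lean document; each statement's English description precedes it below -/
import Mathlib

section
/- Let A, B ∈ ℤ with 0 < A ≤ B, B ≥ 2 and 2A − B ≥ 5 (so A ≥ 5), let M = [[0, −B], [1, −A]] acting on ℝ², and let T be the tile for M and digits {0, …, B−1}·e₁. Then the point z = Σ_{k≥0} ( M^{−(2k+1)}·((A−3)·e₁) + M^{−(2k+2)}·((B−A+2)·e₁) ) belongs to T and is a cut point of T, i.e., T ∖ {z} is not preconnected. -/
noncomputable section

/-- The matrix `[[0, -B], [1, -A]]` as a real matrix. -/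
def M' (A B : ℤ) : Matrix (Fin 2) (Fin 2) ℝ := !![0, -(B : ℝ); 1, -(A : ℝ)]

/-- `e₁ = (1, 0) ∈ ℝ²`. -/
def e1 : Fin 2 → ℝ := ![1, 0]

/-- The cut point `z = Σ_{k≥0} (M^{-(2k+1)}((A-3)e₁) + M^{-(2k+2)}((B-A+2)e₁))`. -/
def cutPt (A B : ℤ) : Fin 2 → ℝ :=
  ∑' k : ℕ, (((M' A B)⁻¹ ^ (2 * k + 1)).mulVec (((A : ℝ) - 3) • e1)
    + ((M' A B)⁻¹ ^ (2 * k + 2)).mulVec (((B : ℝ) - (A : ℝ) + 2) • e1))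

namespace TileCut

open Filter Finset

/-- Left eigen-functional. -/
def fl (l : ℝ) (x : Fin 2 → ℝ) : ℝ := x 0 + l * x 1

lemma fl_cont (l : ℝ) : Continuous (fl l) :=
  (continuous_apply 0).add (continuous_const.mul (continuous_apply 1))

lemma fl_add (l : ℝ) (x y : Fin 2 → ℝ) : fl l (x + y) = fl l x + fl l y := by
  simp [fl]; ring

lemma fl_smul_e1 (l c : ℝ) : fl l (c • e1) = c := by
  simp [fl, e1]

lemma fl_add_smul_e1 (l : ℝ) (x : Fin 2 → ℝ) (c : ℝ) : fl l (x + c • e1) = fl l x + c := by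
  rw [fl_add, fl_smul_e1]

lemma M_mulVec (A B : ℤ) (x : Fin 2 → ℝ) :
    (M' A B).mulVec x = ![-(B:ℝ) * x 1, x 0 - (A:ℝ) * x 1] := by
  funext i
  fin_cases i <;>
    simp [M', Matrix.mulVec, dotProduct, Fin.sum_univ_two] <;> ring

lemma fl_M {A B : ℤ} {l : ℝ} (hl : l^2 + A*l + B = 0) (x : Fin 2 → ℝ) :
    fl l ((M' A B).mulVec x) = l * fl l x := by
  rw [M_mulVec]
  simp only [fl, Matrix.cons_val_zero, Matrix.cons_val_one, Matrix.head_cons]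
  linear_combination (-(x 1)) * hl

lemma det_M (A B : ℤ) : (M' A B).det = (B : ℝ) := by
  rw [M', Matrix.det_fin_two_of]; ring

lemma M_mul_inv {A B : ℤ} (hB : (B:ℝ) ≠ 0) (y : Fin 2 → ℝ) :
    (M' A B).mulVec ((M' A B)⁻¹.mulVec y) = y := by
  rw [Matrix.mulVec_mulVec, Matrix.mul_nonsing_inv _
    (by rw [det_M]; exact isUnit_iff_ne_zero.2 hB), Matrix.one_mulVec]

lemma Minv_mul {A B : ℤ} (hB : (B:ℝ) ≠ 0) (y : Fin 2 → ℝ) :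
    (M' A B)⁻¹.mulVec ((M' A B).mulVec y) = y := by
  rw [Matrix.mulVec_mulVec, Matrix.nonsing_inv_mul _
    (by rw [det_M]; exact isUnit_iff_ne_zero.2 hB), Matrix.one_mulVec]

lemma fl_Minv {A B : ℤ} {l : ℝ} (hl : l^2 + A*l + B = 0) (hB : (B:ℝ) ≠ 0) (hl0 : l ≠ 0)
    (y : Fin 2 → ℝ) : fl l ((M' A B)⁻¹.mulVec y) = l⁻¹ * fl l y := by
  have h := fl_M hl ((M' A B)⁻¹.mulVec y)
  rw [M_mul_inv hB] at h
  rw [h, inv_mul_cancel_left₀ hl0]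

lemma fl_Minv_pow {A B : ℤ} {l : ℝ} (hl : l^2 + A*l + B = 0) (hB : (B:ℝ) ≠ 0) (hl0 : l ≠ 0)
    (n : ℕ) (y : Fin 2 → ℝ) :
    fl l (((M' A B)⁻¹ ^ n).mulVec y) = l⁻¹^n * fl l y := by
  induction n generalizing y with
  | zero => simp [Matrix.one_mulVec]
  | succ n ih =>
      rw [pow_succ, ← Matrix.mulVec_mulVec, ih ((M' A B)⁻¹.mulVec y), fl_Minv hl hB hl0]
      ring

lemma summable_aux {r : ℝ} (hr : |r| < 1) {C : ℝ} (u : ℕ → ℝ) (hu : ∀ k, |u k| ≤ C) :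
    Summable (fun k => r^(k+1) * u k) := by
  apply Summable.of_norm_bounded (g := fun k => (C * |r|) * |r|^k)
    ((summable_geometric_of_lt_one (abs_nonneg r) hr).mul_left _)
  intro k
  rw [Real.norm_eq_abs, abs_mul, abs_pow]
  calc |r|^(k+1) * |u k| ≤ |r|^(k+1) * C :=
        mul_le_mul_of_nonneg_left (hu k) (pow_nonneg (abs_nonneg r) _)
    _ = C * |r| * |r|^k := by ring

lemma tsum_aux_le {r : ℝ} (hr : |r| < 1) {C : ℝ} (u : ℕ → ℝ) (hu : ∀ k, |u k| ≤ C) :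
    |∑' k : ℕ, r^(k+1) * u k| ≤ C * |r| / (1 - |r|) := by
  have hgeo : Summable (fun k : ℕ => (C * |r|) * |r|^k) :=
    (summable_geometric_of_lt_one (abs_nonneg r) hr).mul_left _
  have hnorm : ∀ k : ℕ, ‖r^(k+1) * u k‖ ≤ (C * |r|) * |r|^k := by
    intro k
    rw [Real.norm_eq_abs, abs_mul, abs_pow]
    calc |r|^(k+1) * |u k| ≤ |r|^(k+1) * C :=
          mul_le_mul_of_nonneg_left (hu k) (pow_nonneg (abs_nonneg r) _)
      _ = C * |r| * |r|^k := by ring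
  have hsab : Summable (fun k : ℕ => ‖r^(k+1) * u k‖) :=
    Summable.of_norm_bounded hgeo (fun k => by rw [norm_norm]; exact hnorm k)
  calc |∑' k : ℕ, r^(k+1) * u k| ≤ ∑' k : ℕ, ‖r^(k+1) * u k‖ := norm_tsum_le_tsum_norm hsab
    _ ≤ ∑' k : ℕ, (C * |r|) * |r|^k := Summable.tsum_le_tsum hnorm hsab hgeo
    _ = (C * |r|) * (1 - |r|)⁻¹ := by
        rw [tsum_mul_left, tsum_geometric_of_lt_one (abs_nonneg r) hr]
    _ = C * |r| / (1 - |r|) := by rw [div_eq_mul_inv]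

/-- The scalar value of a digit expansion. -/
def SS (r : ℝ) (dd : ℕ → ℤ) : ℝ := ∑' k : ℕ, r^(k+1) * (dd k : ℝ)

lemma coord1 {l1 l2 : ℝ} (h : l1 ≠ l2) (x : Fin 2 → ℝ) :
    x 1 = (fl l1 x - fl l2 x) / (l1 - l2) ∧ x 0 = (l1 * fl l2 x - l2 * fl l1 x) / (l1 - l2) := by
  have h0 : l1 - l2 ≠ 0 := sub_ne_zero.2 h
  constructor <;> field_simp [fl] <;> simp only [fl] <;> ring

lemma point_eq {l1 l2 : ℝ} (h : l1 ≠ l2) (x y : Fin 2 → ℝ)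
    (h1 : fl l1 x = fl l1 y) (h2 : fl l2 x = fl l2 y) : x = y := by
  have e1' : x 1 = y 1 := by
    rw [(coord1 h x).1, (coord1 h y).1, h1, h2]
  have e0' : x 0 = y 0 := by
    rw [(coord1 h x).2, (coord1 h y).2, h1, h2]
  funext i
  fin_cases i
  · exact e0'
  · exact e1'

end TileCut

namespace TileCut

open Filter Finset

/-- tile equation -/
def TileEq (A B : ℤ) (T : Set (Fin 2 → ℝ)) : Prop :=
  (M' A B).mulVec '' T =
    ⋃ j ∈ Set.Icc (0 : ℤ) (B - 1), (fun x => x + (j : ℝ) • e1) '' T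

lemma step_forward {A B : ℤ} {T : Set (Fin 2 → ℝ)} (hT : TileEq A B T)
    {x : Fin 2 → ℝ} (hx : x ∈ T) :
    ∃ j : ℤ, j ∈ Set.Icc 0 (B-1) ∧ ∃ y ∈ T, (M' A B).mulVec x = y + (j:ℝ) • e1 := by
  have h : (M' A B).mulVec x ∈ (M' A B).mulVec '' T := Set.mem_image_of_mem _ hx
  rw [hT] at h
  simp only [Set.mem_iUnion, Set.mem_image, exists_prop] at h
  obtain ⟨j, hj, y, hy, hxy⟩ := h
  exact ⟨j, hj, y, hy, hxy.symm⟩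

lemma step_backward {A B : ℤ} (hB0 : (B:ℝ) ≠ 0) {T : Set (Fin 2 → ℝ)} (hT : TileEq A B T)
    {y : Fin 2 → ℝ} (hy : y ∈ T) {j : ℤ} (hj : j ∈ Set.Icc 0 (B-1)) :
    (M' A B)⁻¹.mulVec (y + (j:ℝ) • e1) ∈ T := by
  have h : y + (j:ℝ) • e1 ∈
      ⋃ j ∈ Set.Icc (0:ℤ) (B-1), (fun x => x + (j:ℝ) • e1) '' T :=
    Set.mem_iUnion₂.2 ⟨j, hj, ⟨y, hy, rfl⟩⟩
  rw [← hT] at h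
  obtain ⟨x, hx, hMx⟩ := h
  rw [← hMx, Minv_mul hB0]
  exact hx

lemma digit_abs_le {B : ℤ} {d : ℕ → ℤ} (hd : ∀ k, d k ∈ Set.Icc 0 (B-1)) :
    ∀ k, |((d k : ℤ) : ℝ)| ≤ (B:ℝ) - 1 := by
  intro k
  have h := hd k
  rw [Set.mem_Icc] at h
  have h2 : |d k| ≤ B - 1 := abs_le.2 ⟨by omega, h.2⟩
  calc |((d k : ℤ):ℝ)| = ((|d k| : ℤ) : ℝ) := by rw [Int.cast_abs]
    _ ≤ ((B - 1 : ℤ) : ℝ) := by exact_mod_cast h2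
    _ = (B:ℝ) - 1 := by push_cast; ring

lemma repr_digits {A B : ℤ} (hB0 : (B:ℝ) ≠ 0) {T : Set (Fin 2 → ℝ)}
    (hTcp : IsCompact T) (hT : TileEq A B T) {x : Fin 2 → ℝ} (hx : x ∈ T) :
    ∃ d : ℕ → ℤ, (∀ k, d k ∈ Set.Icc 0 (B-1)) ∧
      ∀ l : ℝ, l^2 + (A:ℝ)*l + (B:ℝ) = 0 → l ≠ 0 → |l⁻¹| < 1 → fl l x = SS l⁻¹ d := by
  have key : ∀ p : {v // v ∈ T}, ∃ q : ℤ × {v // v ∈ T},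
      q.1 ∈ Set.Icc 0 (B-1) ∧ (M' A B).mulVec p.1 = q.2.1 + (q.1:ℝ) • e1 := by
    rintro ⟨p, hp⟩
    obtain ⟨j, hj, y, hy, h⟩ := step_forward hT hp
    exact ⟨(j, ⟨y, hy⟩), hj, h⟩
  choose st hst1 hst2 using key
  let o : ℕ → {v // v ∈ T} := fun n => (fun p => (st p).2)^[n] ⟨x, hx⟩
  let d : ℕ → ℤ := fun n => (st (o n)).1
  refine ⟨d, fun k => hst1 _, ?_⟩
  intro l hl hl0 hr
  have hosucc : ∀ n, o (n+1) = (st (o n)).2 := fun n => Function.iterate_succ_apply' _ _ _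
  have hrec : ∀ n, fl l ((o n).1) = l⁻¹ * (fl l ((o (n+1)).1) + (d n : ℝ)) := by
    intro n
    have h2 : fl l ((M' A B).mulVec (o n).1) = fl l ((o (n+1)).1) + (d n:ℝ) := by
      rw [hst2 (o n), hosucc n]
      exact fl_add_smul_e1 _ _ _
    rw [fl_M hl] at h2
    rw [← h2, inv_mul_cancel_left₀ hl0]
  have hpart : ∀ n, fl l x =
      (∑ k ∈ Finset.range n, (l⁻¹)^(k+1) * (d k:ℝ)) + (l⁻¹)^n * fl l ((o n).1) := by
    intro n
    induction n with
    | zero => simp [o]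
    | succ n ih =>
      rw [Finset.sum_range_succ, ih, hrec n]; ring
  obtain ⟨R, hR⟩ := isBounded_iff_forall_norm_le.1 hTcp.isBounded
  have hbd : ∀ n, |fl l ((o n).1)| ≤ (1 + |l|) * R := by
    intro n
    have h0 : |(o n).1 0| ≤ R := le_trans (norm_le_pi_norm ((o n).1) 0) (hR _ (o n).2)
    have h1 : |(o n).1 1| ≤ R := le_trans (norm_le_pi_norm ((o n).1) 1) (hR _ (o n).2)
    calc |fl l ((o n).1)| ≤ |(o n).1 0| + |l * (o n).1 1| := abs_add_le _ _
      _ ≤ R + |l| * R := by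
          rw [abs_mul]
          exact add_le_add h0 (mul_le_mul_of_nonneg_left h1 (abs_nonneg l))
      _ = (1 + |l|) * R := by ring
  have hsum : Summable (fun k => (l⁻¹)^(k+1) * ((d k : ℤ):ℝ)) :=
    summable_aux hr _ (digit_abs_le (fun k => hst1 _))
  have hlim2 : Tendsto (fun n => (l⁻¹)^n * fl l ((o n).1)) atTop (nhds 0) := by
    apply squeeze_zero_norm (a := fun n => ((1 + |l|) * R) * |l⁻¹|^n)
    · intro n
      rw [Real.norm_eq_abs, abs_mul, abs_pow]
      calc |l⁻¹|^n * |fl l ((o n).1)| ≤ |l⁻¹|^n * ((1 + |l|) * R) :=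
            mul_le_mul_of_nonneg_left (hbd n) (pow_nonneg (abs_nonneg _) _)
        _ = ((1 + |l|) * R) * |l⁻¹|^n := by ring
    · have := (tendsto_pow_atTop_nhds_zero_of_norm_lt_one
        (x := |l⁻¹|) (by rwa [Real.norm_eq_abs, abs_abs])).const_mul ((1 + |l|) * R)
      rwa [mul_zero] at this
  have hfinal : Tendsto (fun _ : ℕ => fl l x) atTop (nhds (SS l⁻¹ d + 0)) := by
    have h3 := hsum.hasSum.tendsto_sum_nat.add hlim2
    exact h3.congr (fun n => (hpart n).symm)
  have h4 := tendsto_nhds_unique tendsto_const_nhds hfinal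
  rwa [add_zero] at h4

end TileCut

namespace TileCut

open Filter Finset

/-- backward iteration along a digit sequence -/
def G (A B : ℤ) (t0 : Fin 2 → ℝ) : ℕ → (ℕ → ℤ) → Fin 2 → ℝ
  | 0, _ => t0
  | n+1, dd => (M' A B)⁻¹.mulVec (G A B t0 n (fun k => dd (k+1)) + ((dd 0 : ℤ):ℝ) • e1)

lemma mem_of_digits {A B : ℤ} (hB0 : (B:ℝ) ≠ 0) {T : Set (Fin 2 → ℝ)}
    (hTcp : IsCompact T) (hT : TileEq A B T) {t0 : Fin 2 → ℝ} (ht0 : t0 ∈ T)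
    (d : ℕ → ℤ) (hd : ∀ k, d k ∈ Set.Icc 0 (B-1)) :
    ∃ x ∈ T, ∀ l : ℝ, l^2 + (A:ℝ)*l + (B:ℝ) = 0 → l ≠ 0 → |l⁻¹| < 1 →
      fl l x = SS l⁻¹ d := by
  have hGmem : ∀ n (dd : ℕ → ℤ), (∀ k, dd k ∈ Set.Icc 0 (B-1)) → G A B t0 n dd ∈ T := by
    intro n
    induction n with
    | zero => intro dd _; exact ht0
    | succ n ih =>
        intro dd hdd
        exact step_backward hB0 hT (ih _ (fun k => hdd (k+1))) (hdd 0)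
  have hGfl : ∀ (l:ℝ), l^2 + (A:ℝ)*l + (B:ℝ) = 0 → l ≠ 0 → ∀ n (dd : ℕ → ℤ),
      fl l (G A B t0 n dd) =
        (∑ k ∈ Finset.range n, (l⁻¹)^(k+1) * (dd k:ℝ)) + (l⁻¹)^n * fl l t0 := by
    intro l hl hl0 n
    induction n with
    | zero => intro dd; simp [G]
    | succ n ih =>
        intro dd
        have hGs : G A B t0 (n+1) dd
            = (M' A B)⁻¹.mulVec (G A B t0 n (fun k => dd (k+1)) + ((dd 0:ℤ):ℝ) • e1) := rfl
        rw [hGs, fl_Minv hl hB0 hl0, fl_add_smul_e1, ih (fun k => dd (k+1)),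
          Finset.sum_range_succ']
        have hsum : ∑ k ∈ Finset.range n, (l⁻¹)^(k+1+1) * ((dd (k+1) : ℤ):ℝ)
            = l⁻¹ * ∑ k ∈ Finset.range n, (l⁻¹)^(k+1) * ((dd (k+1):ℤ):ℝ) := by
          rw [Finset.mul_sum]
          exact Finset.sum_congr rfl (fun k _ => by ring)
        rw [hsum]; ring
  obtain ⟨p, hpT, φ, hφ, hconv⟩ := hTcp.tendsto_subseq
    (x := fun n => G A B t0 n d) (fun n => hGmem n d hd)
  refine ⟨p, hpT, ?_⟩
  intro l hl hl0 hr
  have hsum : Summable (fun k => (l⁻¹)^(k+1) * ((d k:ℤ):ℝ)) :=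
    summable_aux hr _ (digit_abs_le hd)
  have hfull : Tendsto (fun n => fl l (G A B t0 n d)) atTop (nhds (SS l⁻¹ d)) := by
    have h2 : Tendsto (fun n : ℕ => (l⁻¹)^n * fl l t0) atTop (nhds 0) := by
      have := (tendsto_pow_atTop_nhds_zero_of_norm_lt_one
        (x := l⁻¹) (by rwa [Real.norm_eq_abs])).mul_const (fl l t0)
      rwa [zero_mul] at this
    have h3 := hsum.hasSum.tendsto_sum_nat.add h2
    rw [add_zero] at h3
    exact h3.congr (fun n => (hGfl l hl hl0 n d).symm)
  have hsub1 : Tendsto (fun n => fl l (G A B t0 (φ n) d)) atTop (nhds (SS l⁻¹ d)) :=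
    hfull.comp hφ.tendsto_atTop
  have hsub2 : Tendsto (fun n => fl l (G A B t0 (φ n) d)) atTop (nhds (fl l p)) :=
    ((fl_cont l).tendsto p).comp hconv
  exact tendsto_nhds_unique hsub2 hsub1

end TileCut

namespace TileCut

open Filter Finset

lemma SS_alt {r : ℝ} (hr : |r| < 1) (u v : ℤ) :
    SS r (fun n => if n % 2 = 0 then u else v) = ((u:ℝ) * r + (v:ℝ) * r^2) * (1 - r^2)⁻¹ := by
  have hq0 : (0:ℝ) ≤ r^2 := sq_nonneg r
  have hq1 : r^2 < 1 := by
    have h := abs_lt.1 hr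
    nlinarith [h.1, h.2]
  set f : ℕ → ℝ := fun n => r^(n+1) * (((if n % 2 = 0 then u else v) : ℤ):ℝ) with hf
  have hev : (fun k => f (2*k)) = fun k => ((u:ℝ) * r) * (r^2)^k := by
    funext k
    have h2 : (2*k) % 2 = 0 := Nat.mul_mod_right 2 k
    simp only [hf, if_pos h2]
    rw [← pow_mul]
    ring
  have hod : (fun k => f (2*k+1)) = fun k => ((v:ℝ) * r^2) * (r^2)^k := by
    funext k
    have h2 : ¬((2*k+1) % 2 = 0) := by omega
    simp only [hf, if_neg h2]
    rw [← pow_mul]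
    ring
  have hse : Summable (fun k => f (2*k)) := by
    rw [hev]; exact (summable_geometric_of_lt_one hq0 hq1).mul_left _
  have hso : Summable (fun k => f (2*k+1)) := by
    rw [hod]; exact (summable_geometric_of_lt_one hq0 hq1).mul_left _
  have hkey := tsum_even_add_odd hse hso
  calc SS r (fun n => if n % 2 = 0 then u else v) = ∑' k, f k := rfl
    _ = ∑' k, f (2*k) + ∑' k, f (2*k+1) := hkey.symm
    _ = ((u:ℝ) * r) * (1 - r^2)⁻¹ + ((v:ℝ) * r^2) * (1 - r^2)⁻¹ := by
        rw [hev, hod, tsum_mul_left, tsum_mul_left,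
          tsum_geometric_of_lt_one hq0 hq1]
    _ = ((u:ℝ) * r + (v:ℝ) * r^2) * (1 - r^2)⁻¹ := by ring

lemma SS_zero (r : ℝ) : SS r (fun _ => (0:ℤ)) = 0 := by
  simp [SS]

lemma digits_unique {A B : ℤ} (hAB : A ≤ B) (h5 : 5 ≤ 2*A - B)
    {r : ℝ} (hr0 : |r| < 1) (hrne : r ≠ 0)
    (hrb : ((A:ℝ)-3) * |r| / (1 - |r|) < 1)
    (d : ℕ → ℤ) (hd : ∀ k, d k ∈ Set.Icc 0 (B-1))
    (hS : SS r d = SS r (fun n => if n % 2 = 0 then A - 3 else B - A + 2)) :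
    ∀ n, d n = if n % 2 = 0 then A - 3 else B - A + 2 := by
  set ez : ℕ → ℤ := fun n => if n % 2 = 0 then A - 3 else B - A + 2 with hez
  set δ : ℕ → ℝ := fun k => ((d k - ez k : ℤ):ℝ) with hδ
  have hδbd : ∀ k, |δ k| ≤ (A:ℝ) - 3 := by
    intro k
    have h := hd k; rw [Set.mem_Icc] at h
    have h6 : |d k - ez k| ≤ A - 3 := by
      simp only [hez]
      by_cases hk : k % 2 = 0
      · rw [if_pos hk]; exact abs_le.2 ⟨by omega, by omega⟩
      · rw [if_neg hk]; exact abs_le.2 ⟨by omega, by omega⟩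
    have h7 : ((|d k - ez k|:ℤ):ℝ) ≤ (((A - 3:ℤ)):ℝ) := by exact_mod_cast h6
    rw [Int.cast_abs] at h7
    simp only [hδ]
    push_cast at h7 ⊢
    exact h7
  have hez_valid : ∀ k, ez k ∈ Set.Icc 0 (B-1) := by
    intro k
    by_cases hk : k % 2 = 0 <;> simp [hez, hk, Set.mem_Icc] <;> omega
  have hsd : Summable (fun k => r^(k+1) * ((d k:ℤ):ℝ)) :=
    summable_aux hr0 _ (digit_abs_le hd)
  have hse : Summable (fun k => r^(k+1) * ((ez k:ℤ):ℝ)) :=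
    summable_aux hr0 _ (digit_abs_le hez_valid)
  have hsδ : Summable (fun k => r^(k+1) * δ k) := summable_aux hr0 _ hδbd
  have h0 : ∑' k:ℕ, r^(k+1) * δ k = 0 := by
    have h1 : ∀ k:ℕ, r^(k+1) * δ k = r^(k+1) * ((d k:ℤ):ℝ) - r^(k+1) * ((ez k:ℤ):ℝ) := by
      intro k; simp only [hδ]; push_cast; ring
    calc ∑' k:ℕ, r^(k+1) * δ k
        = ∑' k:ℕ, (r^(k+1) * ((d k:ℤ):ℝ) - r^(k+1) * ((ez k:ℤ):ℝ)) := tsum_congr h1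
      _ = SS r d - SS r ez := Summable.tsum_sub hsd hse
      _ = 0 := by rw [hS]; ring
  intro n
  induction n using Nat.strong_induction_on with
  | _ n ih =>
  have htail := Summable.sum_add_tsum_nat_add (f := fun k => r^(k+1) * δ k) (n+1) hsδ
  rw [h0] at htail
  have hrange : ∑ k ∈ Finset.range (n+1), r^(k+1) * δ k = r^(n+1) * δ n := by
    rw [Finset.sum_range_succ]
    have hzero : ∑ k ∈ Finset.range n, r^(k+1) * δ k = 0 :=
      Finset.sum_eq_zero (fun k hk => by
        have hke : d k = ez k := ih k (Finset.mem_range.1 hk)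
        simp [hδ, hke])
    rw [hzero, zero_add]
  have htail2 : (∑' j:ℕ, r^((j+(n+1))+1) * δ (j+(n+1)))
      = r^(n+1) * ∑' j:ℕ, r^(j+1) * δ (j+(n+1)) := by
    rw [← tsum_mul_left]
    exact tsum_congr (fun j => by ring)
  rw [hrange, htail2] at htail
  have hpow : (r:ℝ)^(n+1) ≠ 0 := pow_ne_zero _ hrne
  have hδn : δ n = -∑' j:ℕ, r^(j+1) * δ (j+(n+1)) := by
    apply mul_left_cancel₀ hpow
    rw [mul_neg]; linarith [htail]
  have hbnd : |δ n| ≤ ((A:ℝ)-3) * |r| / (1-|r|) := by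
    rw [hδn, abs_neg]
    exact tsum_aux_le hr0 _ (fun j => hδbd _)
  have hlt : |δ n| < 1 := lt_of_le_of_lt hbnd hrb
  have hint : |d n - ez n| < 1 := by
    have h8 : |((d n - ez n : ℤ):ℝ)| < 1 := by rw [hδ] at hlt; exact hlt
    rw [← Int.cast_abs] at h8
    exact_mod_cast h8
  have h9 : d n = ez n := by
    have h10 := abs_lt.1 hint
    omega
  rw [h9, hez]

end TileCut

namespace TileCut

open Filter Finset

lemma fl_cutPt {A B : ℤ} (hB0 : (B:ℝ) ≠ 0) {l1 l2 : ℝ}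
    (h1 : l1^2 + (A:ℝ)*l1 + (B:ℝ) = 0) (h2 : l2^2 + (A:ℝ)*l2 + (B:ℝ) = 0) (h12 : l1 ≠ l2)
    (h1n : l1 ≠ 0) (h2n : l2 ≠ 0) (hr1 : |l1⁻¹| < 1) (hr2 : |l2⁻¹| < 1) :
    ∀ l : ℝ, l^2 + (A:ℝ)*l + (B:ℝ) = 0 → l ≠ 0 → |l⁻¹| < 1 →
      fl l (cutPt A B) =
        (((A:ℝ)-3) * l⁻¹ + ((B:ℝ)-(A:ℝ)+2) * (l⁻¹)^2) * (1 - (l⁻¹)^2)⁻¹ := by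
  set g : ℕ → Fin 2 → ℝ := fun k =>
    (((M' A B)⁻¹ ^ (2 * k + 1)).mulVec (((A : ℝ) - 3) • e1)
      + ((M' A B)⁻¹ ^ (2 * k + 2)).mulVec (((B : ℝ) - (A : ℝ) + 2) • e1)) with hg
  have hflg : ∀ (l:ℝ), l^2 + (A:ℝ)*l + (B:ℝ) = 0 → l ≠ 0 → ∀ k,
      fl l (g k) = (((A:ℝ)-3) * l⁻¹ + ((B:ℝ)-(A:ℝ)+2) * (l⁻¹)^2) * ((l⁻¹)^2)^k := by
    intro l hl hln k
    simp only [hg]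
    rw [fl_add, fl_Minv_pow hl hB0 hln, fl_Minv_pow hl hB0 hln, fl_smul_e1, fl_smul_e1,
      ← pow_mul]
    ring
  have hq : ∀ (l:ℝ), |l⁻¹| < 1 →
      Summable (fun k:ℕ =>
        (((A:ℝ)-3) * l⁻¹ + ((B:ℝ)-(A:ℝ)+2) * (l⁻¹)^2) * ((l⁻¹)^2)^k) := by
    intro l hr
    refine (summable_geometric_of_lt_one (sq_nonneg _) ?_).mul_left _
    have h := abs_lt.1 hr
    nlinarith [h.1, h.2]
  have hsF1 : Summable (fun k => fl l1 (g k)) := by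
    rw [show (fun k => fl l1 (g k)) = _ from funext (hflg l1 h1 h1n)]
    exact hq l1 hr1
  have hsF2 : Summable (fun k => fl l2 (g k)) := by
    rw [show (fun k => fl l2 (g k)) = _ from funext (hflg l2 h2 h2n)]
    exact hq l2 hr2
  have hc0 : Summable (fun k => g k 0) := by
    have he : (fun k => g k 0) = fun k => (l1 * fl l2 (g k) - l2 * fl l1 (g k)) * (l1-l2)⁻¹ :=
      funext (fun k => by rw [(coord1 h12 (g k)).2, div_eq_mul_inv])
    rw [he]
    exact ((hsF2.mul_left l1).sub (hsF1.mul_left l2)).mul_right _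
  have hc1 : Summable (fun k => g k 1) := by
    have he : (fun k => g k 1) = fun k => (fl l1 (g k) - fl l2 (g k)) * (l1-l2)⁻¹ :=
      funext (fun k => by rw [(coord1 h12 (g k)).1, div_eq_mul_inv])
    rw [he]
    exact (hsF1.sub hsF2).mul_right _
  have hsg : Summable g := Pi.summable.2 (fun i => by fin_cases i
                                                      · exact hc0
                                                      · exact hc1)
  intro l hl hln hr
  have happ0 : (∑' k, g k) 0 = ∑' k, g k 0 := tsum_apply hsg
  have happ1 : (∑' k, g k) 1 = ∑' k, g k 1 := tsum_apply hsg
  calc fl l (cutPt A B) = (∑' k, g k) 0 + l * (∑' k, g k) 1 := rfl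
    _ = (∑' k, g k 0) + ∑' k, l * (g k 1) := by rw [happ0, happ1, tsum_mul_left]
    _ = ∑' k, (g k 0 + l * g k 1) := (Summable.tsum_add hc0 (hc1.mul_left l)).symm
    _ = ∑' k, fl l (g k) := rfl
    _ = ∑' k, (((A:ℝ)-3) * l⁻¹ + ((B:ℝ)-(A:ℝ)+2) * (l⁻¹)^2) * ((l⁻¹)^2)^k :=
        tsum_congr (hflg l hl hln)
    _ = (((A:ℝ)-3) * l⁻¹ + ((B:ℝ)-(A:ℝ)+2) * (l⁻¹)^2) * (1 - (l⁻¹)^2)⁻¹ := by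
        rw [tsum_mul_left, tsum_geometric_of_lt_one (sq_nonneg _)
          (by { have h := abs_lt.1 hr; nlinarith [h.1, h.2] })]

end TileCut

set_option maxHeartbeats 1000000 in
open TileCut in
/-- For `0 < A ≤ B`, `B ≥ 2`, `2A - B ≥ 5`, the point `z` belongs to
the tile `T` of `M = [[0,-B],[1,-A]]` with digits `{0,…,B-1}·e₁` and is a cut
point of `T`. -/
theorem tile_cutPoint_explicit
    (A B : ℤ) (hA : 0 < A) (hAB : A ≤ B) (hB : 2 ≤ B) (h5 : 5 ≤ 2 * A - B)
    (T : Set (Fin 2 → ℝ)) (hTne : T.Nonempty) (hTcp : IsCompact T)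
    (hT : (M' A B).mulVec '' T =
      ⋃ j ∈ Set.Icc (0 : ℤ) (B - 1), (fun x => x + (j : ℝ) • e1) '' T) :
    cutPt A B ∈ T ∧ ¬ IsPreconnected (T \ {cutPt A B}) := by
  have hT' : TileEq A B T := hT
  have hA5 : (5:ℤ) ≤ A := by omega
  have cA : (5:ℝ) ≤ (A:ℝ) := by exact_mod_cast hA5
  have cAB : (A:ℝ) ≤ (B:ℝ) := by exact_mod_cast hAB
  have cB : (2:ℝ) ≤ (B:ℝ) := by exact_mod_cast hB
  have c5 : (5:ℝ) ≤ 2*(A:ℝ) - (B:ℝ) := by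
    have : ((5:ℤ):ℝ) ≤ ((2*A - B : ℤ):ℝ) := by exact_mod_cast h5
    push_cast at this; linarith
  have hB0 : (B:ℝ) ≠ 0 := by linarith
  have hdisc : (0:ℝ) ≤ (A:ℝ)^2 - 4*(B:ℝ) := by nlinarith
  set D := Real.sqrt ((A:ℝ)^2 - 4*(B:ℝ)) with hDd
  have hD2 : D^2 = (A:ℝ)^2 - 4*(B:ℝ) := Real.sq_sqrt hdisc
  have hD0 : 0 ≤ D := Real.sqrt_nonneg _
  have hDlt : D < (A:ℝ) - 2 := by nlinarith
  have hDgt : (A:ℝ) - 4 < D := by nlinarith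
  set b1 : ℝ := ((A:ℝ) + D)/2 with hb1d
  set b2 : ℝ := ((A:ℝ) - D)/2 with hb2d
  set l1 : ℝ := -b1 with hl1d
  set l2 : ℝ := -b2 with hl2d
  have hroot1 : l1^2 + (A:ℝ)*l1 + (B:ℝ) = 0 := by
    rw [hl1d, hb1d]; linear_combination hD2/4
  have hroot2 : l2^2 + (A:ℝ)*l2 + (B:ℝ) = 0 := by
    rw [hl2d, hb2d]; linear_combination hD2/4
  have hb1 : (A:ℝ) - 2 < b1 := by rw [hb1d]; linarith
  have hb2 : 1 < b2 := by rw [hb2d]; linarith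
  have hb1pos : 0 < b1 := by linarith
  have hb1gt1 : 1 < b1 := by linarith
  have h1n : l1 ≠ 0 := by rw [hl1d]; exact neg_ne_zero.2 (ne_of_gt hb1pos)
  have h2n : l2 ≠ 0 := by rw [hl2d]; exact neg_ne_zero.2 (ne_of_gt (by linarith))
  have h12 : l1 ≠ l2 := by
    rw [hl1d, hl2d]
    intro h
    have h' : b1 = b2 := neg_injective h
    rw [hb1d, hb2d] at h'
    have : D = 0 := by linarith
    linarith [hDgt]
  have habs : ∀ b : ℝ, 1 < b → |(-b)⁻¹| < 1 := by
    intro b hbgt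
    rw [abs_inv, abs_neg, abs_of_pos (by linarith)]
    exact inv_lt_one_of_one_lt₀ hbgt
  have hr1 : |l1⁻¹| < 1 := by rw [hl1d]; exact habs b1 hb1gt1
  have hr2 : |l2⁻¹| < 1 := by rw [hl2d]; exact habs b2 hb2
  have hrneg : l1⁻¹ < 0 := inv_lt_zero.2 (by rw [hl1d]; linarith)
  have hrgtm1 : -1 < l1⁻¹ := (abs_lt.1 hr1).1
  have hq1' : (l1⁻¹)^2 < 1 := by nlinarith [(abs_lt.1 hr1).2]
  have hden : 0 < 1 - (l1⁻¹)^2 := by linarith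
  -- digit sequences
  set ez : ℕ → ℤ := fun n => if n % 2 = 0 then A - 3 else B - A + 2 with hezd
  have hez_valid : ∀ k, ez k ∈ Set.Icc 0 (B-1) := by
    intro k
    by_cases hk : k % 2 = 0 <;> simp [hezd, hk, Set.mem_Icc] <;> omega
  set dmin : ℕ → ℤ := fun n => if n % 2 = 0 then B - 1 else 0 with hdmind
  have hdmin_valid : ∀ k, dmin k ∈ Set.Icc 0 (B-1) := by
    intro k
    by_cases hk : k % 2 = 0 <;> simp [hdmind, hk, Set.mem_Icc] <;> omega
  have hdz_valid : ∀ k:ℕ, (fun _:ℕ => (0:ℤ)) k ∈ Set.Icc 0 (B-1) := by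
    intro k; simp [Set.mem_Icc]; omega
  -- fl values of cutPt
  have hflcut := fl_cutPt hB0 hroot1 hroot2 h12 h1n h2n hr1 hr2
  have hcut1 : fl l1 (cutPt A B) = SS l1⁻¹ ez := by
    rw [hflcut l1 hroot1 h1n hr1, hezd, SS_alt hr1]
    push_cast; ring
  have hcut2 : fl l2 (cutPt A B) = SS l2⁻¹ ez := by
    rw [hflcut l2 hroot2 h2n hr2, hezd, SS_alt hr2]
    push_cast; ring
  obtain ⟨t0, ht0⟩ := hTne
  obtain ⟨p, hpT, hpfl⟩ := mem_of_digits hB0 hTcp hT' ht0 ez hez_valid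
  have hpz : p = cutPt A B := point_eq h12 p (cutPt A B)
    (by rw [hpfl l1 hroot1 h1n hr1, hcut1]) (by rw [hpfl l2 hroot2 h2n hr2, hcut2])
  have hzT : cutPt A B ∈ T := hpz ▸ hpT
  refine ⟨hzT, ?_⟩
  set c : ℝ := fl l1 (cutPt A B) with hcd
  have hcval : c = (((A:ℝ)-3) * l1⁻¹ + ((B:ℝ)-(A:ℝ)+2) * (l1⁻¹)^2) * (1-(l1⁻¹)^2)⁻¹ := by
    rw [hcd, hflcut l1 hroot1 h1n hr1]
  obtain ⟨pm, hpmT, hpmfl⟩ := mem_of_digits hB0 hTcp hT' ht0 dmin hdmin_valid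
  obtain ⟨p0, hp0T, hp0fl⟩ := mem_of_digits hB0 hTcp hT' ht0 (fun _ => 0) hdz_valid
  have hpm1 : fl l1 pm = (((B:ℝ)-1) * l1⁻¹ + 0 * (l1⁻¹)^2) * (1 - (l1⁻¹)^2)⁻¹ := by
    rw [hpmfl l1 hroot1 h1n hr1, hdmind, SS_alt hr1]
    push_cast; ring
  have hp01 : fl l1 p0 = 0 := by rw [hp0fl l1 hroot1 h1n hr1, SS_zero]
  have hclt0 : c < 0 := by
    rw [hcval]
    apply mul_neg_of_neg_of_pos ?_ (inv_pos.2 hden)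
    have hS : 0 < ((A:ℝ)-3) + ((B:ℝ)-(A:ℝ)+2) * l1⁻¹ := by
      nlinarith [mul_pos (show (0:ℝ) < (B:ℝ)-(A:ℝ)+2 by linarith)
        (show (0:ℝ) < l1⁻¹ + 1 by linarith)]
    have hfac : ((A:ℝ)-3) * l1⁻¹ + ((B:ℝ)-(A:ℝ)+2) * (l1⁻¹)^2
        = l1⁻¹ * (((A:ℝ)-3) + ((B:ℝ)-(A:ℝ)+2) * l1⁻¹) := by ring
    rw [hfac]
    exact mul_neg_of_neg_of_pos hrneg hS
  have hpmlt : fl l1 pm < c := by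
    rw [hpm1, hcval]
    apply mul_lt_mul_of_pos_right ?_ (inv_pos.2 hden)
    nlinarith [mul_pos (mul_pos (show (0:ℝ) < (B:ℝ)-(A:ℝ)+2 by linarith)
      (show (0:ℝ) < -l1⁻¹ by linarith)) (show (0:ℝ) < 1 - l1⁻¹ by linarith)]
  have hp0gt : c < fl l1 p0 := by rw [hp01]; exact hclt0
  -- uniqueness of the fl l1 = c point
  have hrb : ((A:ℝ)-3) * |l1⁻¹| / (1 - |l1⁻¹|) < 1 := by
    have habs1 : |l1⁻¹| = b1⁻¹ := by
      rw [abs_inv, hl1d, abs_neg, abs_of_pos hb1pos]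
    have hb1inv : b1 * b1⁻¹ = 1 := mul_inv_cancel₀ (ne_of_gt hb1pos)
    have hbinvpos : 0 < b1⁻¹ := inv_pos.2 hb1pos
    have hbinvlt : b1⁻¹ < 1 := inv_lt_one_of_one_lt₀ hb1gt1
    rw [habs1, div_lt_one (by linarith)]
    nlinarith [mul_lt_mul_of_pos_right hb1 hbinvpos]
  have huniq : ∀ x ∈ T, fl l1 x = c → x = cutPt A B := by
    intro x hxT hxc
    obtain ⟨d, hdval, hdfl⟩ := repr_digits hB0 hTcp hT' hxT
    have hSd : SS l1⁻¹ d = SS l1⁻¹ (fun n => if n % 2 = 0 then A - 3 else B - A + 2) := by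
      rw [← hezd, ← hdfl l1 hroot1 h1n hr1, hxc]
      exact hcd.symm ▸ hcut1
    have hdez : d = ez := by
      funext n
      rw [digits_unique hAB h5 hr1 (inv_ne_zero h1n) hrb d hdval hSd n, hezd]
    apply point_eq h12 x (cutPt A B)
      (by rw [hxc, hcd])
      (by rw [hdfl l2 hroot2 h2n hr2, hdez, hcut2])
  have hpmne : pm ≠ cutPt A B := by
    intro h
    rw [h] at hpmlt
    rw [hcd] at hpmlt
    exact lt_irrefl _ hpmlt
  have hp0ne : p0 ≠ cutPt A B := by
    intro h
    rw [h] at hp0gt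
    rw [hcd] at hp0gt
    exact lt_irrefl _ hp0gt
  intro hpc
  obtain ⟨w, hws, hwu, hwv⟩ := hpc {v | fl l1 v < c} {v | c < fl l1 v}
    (isOpen_lt (fl_cont l1) continuous_const)
    (isOpen_lt continuous_const (fl_cont l1))
    (by
      intro v hv
      rcases lt_trichotomy (fl l1 v) c with h|h|h
      · exact Or.inl h
      · exact absurd (huniq v hv.1 h) hv.2
      · exact Or.inr h)
    ⟨pm, ⟨hpmT, hpmne⟩, hpmlt⟩
    ⟨p0, ⟨hp0T, hp0ne⟩, hp0gt⟩
  simp only [Set.mem_setOf_eq] at hwu hwv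
  exact absurd hwu (not_lt.2 (le_of_lt hwv))
end
end

section
/- Let A, B ∈ ℤ with 0 < A ≤ B, B ≥ 2 and 2A − B ≥ 5 (so A ≥ 5), let M = [[0, −B], [1, −A]] acting on ℝ², and let D₁, D₂ be the subsets of the tile T determined by the lexicographic digit conditions below. Then D₁ ∩ D₂ = {z}, where z = Σ_{k≥0} ( M^{−(2k+1)}·((A−3)·e₁) + M^{−(2k+2)}·((B−A+2)·e₁) ); in particular this intersection is a single point. -/
noncomputable section

/-- The flipped digit sequence: here `a n` denotes the digit `a_{n+1}` (so the
index `j = n + 1` is odd exactly when `n` is even), and the flipped sequence is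
`b_j = a_j` for odd `j` and `b_j = B - 1 - a_j` for even `j`. -/
def flipSeq (B : ℤ) (a : ℕ → ℤ) : ℕ → ℤ :=
  fun n => if n % 2 = 0 then a n else B - 1 - a n

/-- `D₁`: points whose flipped digit sequence is lexicographically `≤` the
constant sequence `(A-3, A-3, …)`. -/
def D1 (A B : ℤ) : Set (Fin 2 → ℝ) :=
  {x | ∃ a : ℕ → ℤ, (∀ n, a n ∈ Set.Icc (0 : ℤ) (B - 1)) ∧
    (∀ n : ℕ, (∀ m < n, flipSeq B a m = A - 3) → flipSeq B a n ≤ A - 3) ∧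
    x = ∑' n : ℕ, ((M' A B)⁻¹ ^ (n + 1)).mulVec ((a n : ℝ) • e1)}

/-- `D₂`: points whose flipped digit sequence is lexicographically `≥` the
constant sequence `(A-3, A-3, …)`. -/
def D2 (A B : ℤ) : Set (Fin 2 → ℝ) :=
  {x | ∃ a : ℕ → ℤ, (∀ n, a n ∈ Set.Icc (0 : ℤ) (B - 1)) ∧
    (∀ n : ℕ, (∀ m < n, flipSeq B a m = A - 3) → A - 3 ≤ flipSeq B a n) ∧
    x = ∑' n : ℕ, ((M' A B)⁻¹ ^ (n + 1)).mulVec ((a n : ℝ) • e1)}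

namespace DAux

set_option linter.unusedSectionVars false

def sD (A B : ℤ) : ℝ := Real.sqrt ((A:ℝ)^2 - 4*(B:ℝ))
def Lr (A B : ℤ) : ℝ := (-(A:ℝ) - sD A B)/2
def Ls (A B : ℤ) : ℝ := (-(A:ℝ) + sD A B)/2
def w1 (A B : ℤ) : Fin 2 → ℝ := ![Lr A B + (A:ℝ), 1]
def w2 (A B : ℤ) : Fin 2 → ℝ := ![Ls A B + (A:ℝ), 1]
def gv (A B : ℤ) (m : ℕ) : Fin 2 → ℝ :=
  (sD A B)⁻¹ • (((Ls A B)⁻¹)^m • w2 A B - ((Lr A B)⁻¹)^m • w1 A B)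
def phi (A B : ℤ) (v : Fin 2 → ℝ) : ℝ := v 0 + Lr A B * v 1
def tm (A B : ℤ) (a : ℕ → ℤ) (n : ℕ) : Fin 2 → ℝ :=
  ((M' A B)⁻¹ ^ (n+1)).mulVec ((a n : ℝ) • e1)
def astar (A B : ℤ) : ℕ → ℤ := fun n => if n % 2 = 0 then A - 3 else B - A + 2

/-! ### general scalar lemmas -/

lemma summable_aux' {C r : ℝ} (hr : |r| < 1) {u : ℕ → ℝ} (hu : ∀ n, |u n| ≤ C) :
    Summable fun n => u n * r^(n+1) := by
  apply Summable.of_norm_bounded (g := fun n => (C * |r|) * |r|^n)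
  · exact (summable_geometric_of_lt_one (abs_nonneg r) hr).mul_left _
  · intro n
    have h1 : ‖u n * r^(n+1)‖ = |u n| * |r|^(n+1) := by
      rw [Real.norm_eq_abs, abs_mul, abs_pow]
    rw [h1, pow_succ']
    have : |u n| * (|r| * |r|^n) ≤ C * (|r| * |r|^n) := by
      apply mul_le_mul_of_nonneg_right (hu n)
      positivity
    linarith [this]

set_option maxHeartbeats 1000000 in
lemma tail_neg {μ K U : ℝ} (hμ : 1 < μ) (c : ℕ → ℝ) (hK : ∀ n, |c n| ≤ K)
    (hU : ∀ n, c n ≤ U) (h0 : c 0 ≤ -1) (hU0 : 0 ≤ U) (hUμ : U < μ - 1) :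
    ∑' n, c n * (μ⁻¹)^(n+1) < 0 := by
  have hμ0 : (0:ℝ) < μ := by linarith
  have hr0 : 0 < μ⁻¹ := inv_pos.2 hμ0
  have hr1 : μ⁻¹ < 1 := by rw [inv_lt_one_iff₀]; right; exact hμ
  have hrabs : |μ⁻¹| < 1 := by rw [abs_of_pos hr0]; exact hr1
  have hmr : μ * μ⁻¹ = 1 := mul_inv_cancel₀ hμ0.ne'
  have h1r : 0 < 1 - μ⁻¹ := by linarith
  have hsum : Summable fun n => c n * (μ⁻¹)^(n+1) := summable_aux' hrabs hK
  rw [Summable.tsum_eq_zero_add hsum]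
  have hf0 : c 0 * (μ⁻¹)^(0+1) ≤ -μ⁻¹ := by
    have h := mul_le_mul_of_nonneg_right h0 hr0.le
    calc c 0 * (μ⁻¹)^(0+1) = c 0 * μ⁻¹ := by ring
      _ ≤ (-1) * μ⁻¹ := h
      _ = -μ⁻¹ := by ring
  have hs1 : Summable fun n => c (n+1) * (μ⁻¹)^(n+1+1) :=
    (summable_nat_add_iff 1).2 hsum
  have hs2 : Summable fun n : ℕ => (U * (μ⁻¹)^2) * (μ⁻¹)^n :=
    (summable_geometric_of_lt_one hr0.le hr1).mul_left _
  have htail : ∑' n, c (n+1) * (μ⁻¹)^(n+1+1) ≤ (U * (μ⁻¹)^2) * (1-μ⁻¹)⁻¹ := by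
    have heq : ∀ n : ℕ, c (n+1) * (μ⁻¹)^(n+1+1) ≤ (U * (μ⁻¹)^2) * (μ⁻¹)^n := by
      intro n
      have h1 : c (n+1) * (μ⁻¹)^(n+2) ≤ U * (μ⁻¹)^(n+2) :=
        mul_le_mul_of_nonneg_right (hU _) (by positivity)
      calc c (n+1) * (μ⁻¹)^(n+1+1) = c (n+1) * (μ⁻¹)^(n+2) := by ring
        _ ≤ U * (μ⁻¹)^(n+2) := h1
        _ = (U * (μ⁻¹)^2) * (μ⁻¹)^n := by ring
    calc ∑' n, c (n+1) * (μ⁻¹)^(n+1+1) ≤ ∑' n : ℕ, (U * (μ⁻¹)^2) * (μ⁻¹)^n :=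
          Summable.tsum_le_tsum heq hs1 hs2
      _ = (U * (μ⁻¹)^2) * (1-μ⁻¹)⁻¹ := by
          rw [tsum_mul_left, tsum_geometric_of_lt_one hr0.le hr1]
  have hfinal : (U * (μ⁻¹)^2) * (1-μ⁻¹)⁻¹ < μ⁻¹ := by
    rw [inv_eq_one_div (1-μ⁻¹), mul_one_div, div_lt_iff₀ h1r]
    have key : U * μ⁻¹ < 1 - μ⁻¹ := by
      have h2 : U * μ⁻¹ < (μ - 1) * μ⁻¹ := mul_lt_mul_of_pos_right hUμ hr0
      nlinarith [h2, hmr]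
    nlinarith [key, hr0, sq_nonneg (μ⁻¹)]
  linarith [hf0, htail, hfinal]

lemma shift_neg {μ K U : ℝ} (hμ : 1 < μ) (c : ℕ → ℝ) (hK : ∀ n, |c n| ≤ K)
    (hU : ∀ n, c n ≤ U) (hU0 : 0 ≤ U) (hUμ : U < μ - 1) (n₀ : ℕ)
    (hzero : ∀ m < n₀, c m = 0) (hneg : c n₀ ≤ -1) :
    ∑' n, c n * (μ⁻¹)^(n+1) < 0 := by
  have hr0 : 0 < μ⁻¹ := inv_pos.2 (by linarith)
  have hrabs : |μ⁻¹| < 1 := by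
    rw [abs_of_pos hr0, inv_lt_one_iff₀]; right; exact hμ
  have hsum : Summable fun n => c n * (μ⁻¹)^(n+1) := summable_aux' hrabs hK
  rw [← Summable.sum_add_tsum_nat_add n₀ hsum]
  have hpre : ∑ i ∈ Finset.range n₀, c i * (μ⁻¹)^(i+1) = 0 := by
    apply Finset.sum_eq_zero
    intro i hi
    rw [hzero i (Finset.mem_range.1 hi)]
    ring
  rw [hpre, zero_add]
  have heq : (fun i => c (i+n₀) * (μ⁻¹)^(i+n₀+1))
      = fun i => (μ⁻¹)^n₀ * (c (i+n₀) * (μ⁻¹)^(i+1)) := by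
    funext i; ring
  rw [heq, tsum_mul_left]
  apply mul_neg_of_pos_of_neg (pow_pos hr0 n₀)
  exact tail_neg hμ (fun k => c (k+n₀)) (fun k => hK _) (fun k => hU _)
    (by simpa using hneg) hU0 hUμ

/-! ### basic numeric facts -/

variable {A B : ℤ} (hAB : A ≤ B) (h5 : 5 ≤ 2 * A - B)
include hAB h5

lemma hA5 : (5:ℤ) ≤ A := by omega
lemma hra : (5:ℝ) ≤ (A:ℝ) := by exact_mod_cast hA5 hAB h5
lemma hrb : (A:ℝ) ≤ (B:ℝ) := by exact_mod_cast hAB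
lemma hrc : (B:ℝ) ≤ 2*(A:ℝ) - 5 := by
  have : B ≤ 2*A - 5 := by omega
  exact_mod_cast this

lemma hD : 0 < (A:ℝ)^2 - 4*(B:ℝ) := by
  have h1 := hra hAB h5; have h3 := hrc hAB h5
  nlinarith [sq_nonneg ((A:ℝ) - 4)]

lemma hs2 : (sD A B)^2 = (A:ℝ)^2 - 4*(B:ℝ) := Real.sq_sqrt (hD hAB h5).le
lemma hs0 : 0 < sD A B := Real.sqrt_pos.2 (hD hAB h5)

lemma root_Lr : (Lr A B)^2 + (A:ℝ)*(Lr A B) + (B:ℝ) = 0 := by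
  have h := hs2 hAB h5
  simp only [Lr]; linear_combination (1/4) * h

lemma root_Ls : (Ls A B)^2 + (A:ℝ)*(Ls A B) + (B:ℝ) = 0 := by
  have h := hs2 hAB h5
  simp only [Ls]; linear_combination (1/4) * h

lemma Lr_lt : Lr A B < -((A:ℝ) - 2) := by
  have h1 := hra hAB h5; have h3 := hrc hAB h5
  have h2 := hs2 hAB h5; have h0 := hs0 hAB h5
  have hs : (A:ℝ) - 4 < sD A B := by
    by_contra hc
    push_neg at hc
    nlinarith
  simp only [Lr]; linarith

lemma Lr_lt' : Lr A B < -((B:ℝ) - (A:ℝ) + 3) := by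
  have h1 := hra hAB h5; have h2 := hrb hAB h5; have h3 := hrc hAB h5
  have hs2' := hs2 hAB h5; have h0 := hs0 hAB h5
  have hs : 2*(B:ℝ) - 3*(A:ℝ) + 6 < sD A B := by
    by_contra hc
    push_neg at hc
    nlinarith [mul_nonneg (by linarith : (0:ℝ) ≤ 2*(A:ℝ)-(B:ℝ)-5)
      (by linarith : (0:ℝ) ≤ (B:ℝ)+2-(A:ℝ))]
  simp only [Lr]; linarith

lemma Ls_lt : Ls A B < -1 := by
  have h1 := hra hAB h5; have h2 := hrb hAB h5
  have hs2' := hs2 hAB h5; have h0 := hs0 hAB h5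
  have hs : sD A B < (A:ℝ) - 2 := by
    by_contra hc
    push_neg at hc
    nlinarith
  simp only [Ls]; linarith

lemma Lr_neg : Lr A B < -3 := by have := Lr_lt hAB h5; have := hra hAB h5; linarith
lemma Lr_ne : Lr A B ≠ 0 := by have := Lr_neg hAB h5; linarith
lemma Ls_ne : Ls A B ≠ 0 := by have := Ls_lt hAB h5; linarith
lemma hrb0 : (B:ℝ) ≠ 0 := by have := hra hAB h5; have := hrb hAB h5; linarith

/-! ### matrix facts -/

lemma Minv_eq : (M' A B)⁻¹ = !![-(A:ℝ)/B, 1; -1/B, 0] := by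
  apply Matrix.inv_eq_right_inv
  rw [M', Matrix.mul_fin_two, Matrix.one_fin_two]
  have := hrb0 hAB h5
  congr 1 <;> field_simp <;> simp [this]

lemma eig1 : (M' A B)⁻¹.mulVec (w1 A B) = (Lr A B)⁻¹ • w1 A B := by
  have hr := root_Lr hAB h5; have h0 := Lr_ne hAB h5; have hb := hrb0 hAB h5
  rw [Minv_eq hAB h5]
  funext i
  fin_cases i
  · simp [w1, Matrix.mulVec, dotProduct, Fin.sum_univ_two]
    field_simp
    linear_combination (-(A:ℝ)) * hr
  · simp [w1, Matrix.mulVec, dotProduct, Fin.sum_univ_two]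
    field_simp
    linear_combination -hr

lemma eig2 : (M' A B)⁻¹.mulVec (w2 A B) = (Ls A B)⁻¹ • w2 A B := by
  have hr := root_Ls hAB h5; have h0 := Ls_ne hAB h5; have hb := hrb0 hAB h5
  rw [Minv_eq hAB h5]
  funext i
  fin_cases i
  · simp [w2, Matrix.mulVec, dotProduct, Fin.sum_univ_two]
    field_simp
    linear_combination (-(A:ℝ)) * hr
  · simp [w2, Matrix.mulVec, dotProduct, Fin.sum_univ_two]
    field_simp
    linear_combination -hr

lemma powE : ∀ m : ℕ, ((M' A B)⁻¹ ^ m).mulVec e1 = gv A B m := by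
  intro m
  induction m with
  | zero =>
      funext i
      have h0 := (hs0 hAB h5).ne'
      fin_cases i <;> simp [gv, w1, w2, e1, Lr, Ls] <;> field_simp <;> ring
  | succ m ih =>
      rw [pow_succ', ← Matrix.mulVec_mulVec, ih]
      simp only [gv, Matrix.mulVec_smul, Matrix.mulVec_sub, eig1 hAB h5, eig2 hAB h5]
      rw [pow_succ' ((Ls A B)⁻¹), pow_succ' ((Lr A B)⁻¹)]
      module

/-! ### summability and the linear functional -/

lemma abs_inv_Lr : |(Lr A B)⁻¹| < 1 := by
  have h := Lr_neg hAB h5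
  rw [abs_inv, abs_of_neg (by linarith)]
  rw [inv_lt_one_iff₀]; right; linarith

lemma abs_inv_Ls : |(Ls A B)⁻¹| < 1 := by
  have h := Ls_lt hAB h5
  rw [abs_inv, abs_of_neg (by linarith), inv_lt_one_iff₀]
  right; linarith

lemma tm_eq (a : ℕ → ℤ) (n : ℕ) : tm A B a n = (a n : ℝ) • gv A B (n+1) := by
  rw [tm, Matrix.mulVec_smul, powE hAB h5]

omit hAB h5 in
lemma digit_abs {a : ℕ → ℤ} (ha : ∀ n, a n ∈ Set.Icc (0:ℤ) (B-1)) (n : ℕ) :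
    |(a n : ℝ)| ≤ (B:ℝ) := by
  obtain ⟨h1, h2⟩ := ha n
  rw [abs_of_nonneg (by exact_mod_cast h1)]
  have : (a n : ℝ) ≤ (B:ℝ) - 1 := by exact_mod_cast h2
  linarith

lemma summable_tm_comp {a : ℕ → ℤ} (ha : ∀ n, a n ∈ Set.Icc (0:ℤ) (B-1)) (i : Fin 2) :
    Summable fun n => tm A B a n i := by
  have h : (fun n => tm A B a n i) =
      fun n => ((a n : ℝ) * ((sD A B)⁻¹ * w2 A B i)) * ((Ls A B)⁻¹)^(n+1)
        - ((a n : ℝ) * ((sD A B)⁻¹ * w1 A B i)) * ((Lr A B)⁻¹)^(n+1) := by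
    funext n
    simp [tm_eq hAB h5, gv, Pi.smul_apply, Pi.sub_apply]
    ring
  rw [h]
  apply Summable.sub
  · apply summable_aux' (abs_inv_Ls hAB h5)
      (C := (B:ℝ) * |(sD A B)⁻¹ * w2 A B i|)
    intro n
    rw [abs_mul]
    exact mul_le_mul_of_nonneg_right (digit_abs ha n) (abs_nonneg _)
  · apply summable_aux' (abs_inv_Lr hAB h5)
      (C := (B:ℝ) * |(sD A B)⁻¹ * w1 A B i|)
    intro n
    rw [abs_mul]
    exact mul_le_mul_of_nonneg_right (digit_abs ha n) (abs_nonneg _)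

lemma summable_tm {a : ℕ → ℤ} (ha : ∀ n, a n ∈ Set.Icc (0:ℤ) (B-1)) :
    Summable (tm A B a) := Pi.summable.2 (summable_tm_comp hAB h5 ha)

lemma summable_phi {a : ℕ → ℤ} (ha : ∀ n, a n ∈ Set.Icc (0:ℤ) (B-1)) :
    Summable fun n => (a n : ℝ) * ((Lr A B)⁻¹)^(n+1) :=
  summable_aux' (abs_inv_Lr hAB h5) (digit_abs ha)

lemma phi_gv (m : ℕ) : phi A B (gv A B m) = ((Lr A B)⁻¹)^m := by
  have hs : 0 < sD A B := hs0 hAB h5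
  have hsum : Ls A B + (A:ℝ) + Lr A B = 0 := by simp [Lr, Ls]; ring
  have h2 : Lr A B + (A:ℝ) + Lr A B = -(sD A B) := by simp [Lr, Ls]; ring
  have hinv : (sD A B)⁻¹ * sD A B = 1 := inv_mul_cancel₀ hs.ne'
  simp only [phi, gv, Pi.smul_apply, Pi.sub_apply]
  simp only [w1, w2, Matrix.cons_val_zero, Matrix.cons_val_one, Matrix.head_cons,
    smul_eq_mul]
  linear_combination ((sD A B)⁻¹ * ((Ls A B)⁻¹)^m) * hsum
    - ((sD A B)⁻¹ * ((Lr A B)⁻¹)^m) * h2 + ((Lr A B)⁻¹)^m * hinv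

lemma phi_tsum {a : ℕ → ℤ} (ha : ∀ n, a n ∈ Set.Icc (0:ℤ) (B-1)) :
    phi A B (∑' n, tm A B a n) = ∑' n, (a n : ℝ) * ((Lr A B)⁻¹)^(n+1) := by
  have hst := summable_tm hAB h5 ha
  have h0 : (∑' n, tm A B a n) 0 = ∑' n, tm A B a n 0 := tsum_apply hst
  have h1 : (∑' n, tm A B a n) 1 = ∑' n, tm A B a n 1 := tsum_apply hst
  rw [phi, h0, h1, ← tsum_mul_left, ← Summable.tsum_add (summable_tm_comp hAB h5 ha 0)
    ((summable_tm_comp hAB h5 ha 1).mul_left _)]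
  congr 1
  funext n
  have := phi_gv hAB h5 (n+1)
  simp only [tm_eq hAB h5, Pi.smul_apply, smul_eq_mul]
  rw [phi] at this
  linear_combination ((a n : ℝ)) * this

/-! ### the special sequence -/

lemma astar_mem : ∀ n, astar A B n ∈ Set.Icc (0:ℤ) (B-1) := by
  intro n
  have := hA5 hAB h5
  simp only [astar, Set.mem_Icc]
  split <;> omega

omit hAB h5 in
lemma flip_astar (n : ℕ) : flipSeq B (astar A B) n = A - 3 := by
  simp only [flipSeq, astar]
  split <;> ring

omit hAB h5 in
lemma cz_iff (a : ℕ → ℤ) (n : ℕ) :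
    flipSeq B a n - (A - 3) = 0 ↔ a n = astar A B n := by
  simp only [flipSeq, astar]
  split <;> omega

omit hAB h5 in
lemma flip_mem {a : ℕ → ℤ} (ha : ∀ n, a n ∈ Set.Icc (0:ℤ) (B-1)) (n : ℕ) :
    flipSeq B a n ∈ Set.Icc (0:ℤ) (B-1) := by
  have h := ha n
  simp only [Set.mem_Icc] at *
  simp only [flipSeq]
  split <;> omega

lemma term_eq (a : ℕ → ℤ) (n : ℕ) :
    ((a n : ℝ) - (astar A B n : ℝ)) * ((Lr A B)⁻¹)^(n+1)
      = -(((flipSeq B a n - (A-3) : ℤ) : ℝ) * ((-(Lr A B))⁻¹)^(n+1)) := by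
  have hL : (Lr A B)⁻¹ = -((-(Lr A B))⁻¹) := by rw [inv_neg, neg_neg]
  rw [hL, neg_pow]
  rcases Nat.even_or_odd n with he | ho
  · have h2 : n % 2 = 0 := Nat.even_iff.mp he
    rw [(he.add_one).neg_one_pow]
    simp only [flipSeq, astar, if_pos h2]
    push_cast
    ring
  · have h2 : ¬ (n % 2 = 0) := by rw [Nat.odd_iff] at ho; omega
    rw [(ho.add_one).neg_one_pow]
    simp only [flipSeq, astar, if_neg h2]
    push_cast
    ring

lemma Sdiff {a : ℕ → ℤ} (ha : ∀ n, a n ∈ Set.Icc (0:ℤ) (B-1)) :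
    (∑' n, (a n : ℝ) * ((Lr A B)⁻¹)^(n+1))
      - ∑' n, (astar A B n : ℝ) * ((Lr A B)⁻¹)^(n+1)
    = -∑' n, ((flipSeq B a n - (A-3) : ℤ) : ℝ) * ((-(Lr A B))⁻¹)^(n+1) := by
  rw [← Summable.tsum_sub (summable_phi hAB h5 ha) (summable_phi hAB h5 (astar_mem hAB h5)),
    ← tsum_neg]
  apply tsum_congr
  intro n
  rw [← term_eq hAB h5]
  ring

/-! ### the lex sign lemmas -/

lemma side_neg {a : ℕ → ℤ} (ha : ∀ n, a n ∈ Set.Icc (0:ℤ) (B-1))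
    (hne : ¬ ∀ n, a n = astar A B n)
    (hlex : ∀ n : ℕ, (∀ m < n, flipSeq B a m = A - 3) → flipSeq B a n ≤ A - 3) :
    ∑' n, ((flipSeq B a n - (A-3) : ℤ) : ℝ) * ((-(Lr A B))⁻¹)^(n+1) < 0 := by
  have hA := hA5 hAB h5
  have hex : ∃ n, flipSeq B a n - (A-3) ≠ 0 := by
    by_contra h
    push_neg at h
    exact hne fun n => (cz_iff a n).mp (h n)
  obtain ⟨n₀, hspec, hzero⟩ : ∃ n₀, flipSeq B a n₀ - (A-3) ≠ 0 ∧
      ∀ m < n₀, flipSeq B a m - (A-3) = 0 := by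
    refine ⟨Nat.find hex, Nat.find_spec hex, fun m hm => ?_⟩
    have := Nat.find_min hex hm
    push_neg at this
    exact this
  have hlexn : flipSeq B a n₀ ≤ A - 3 := by
    apply hlex
    intro m hm
    have := hzero m hm
    omega
  have hneg : flipSeq B a n₀ - (A-3) ≤ -1 := by omega
  have hμ : 1 < -(Lr A B) := by have := Lr_neg hAB h5; linarith
  have hUμ : (B:ℝ) - (A:ℝ) + 2 < -(Lr A B) - 1 := by
    have := Lr_lt' hAB h5; linarith
  apply shift_neg hμ _ (K := (B:ℝ)) (U := (B:ℝ) - (A:ℝ) + 2) _ _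
    (by have := hrb hAB h5; have := hra hAB h5; linarith) hUμ n₀ _ _
  · intro n
    have hf := flip_mem ha n
    simp only [Set.mem_Icc] at hf
    have habs : |flipSeq B a n - (A-3)| ≤ B := abs_le.mpr ⟨by omega, by omega⟩
    calc |((flipSeq B a n - (A-3) : ℤ) : ℝ)| = ((|flipSeq B a n - (A-3)| : ℤ) : ℝ) := by
          rw [Int.cast_abs]
      _ ≤ (B:ℝ) := by exact_mod_cast habs
  · intro n
    have hf := flip_mem ha n
    simp only [Set.mem_Icc] at hf
    have : flipSeq B a n - (A-3) ≤ B - A + 2 := by omega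
    have h2 : ((flipSeq B a n - (A-3) : ℤ) : ℝ) ≤ ((B - A + 2 : ℤ) : ℝ) := by
      exact_mod_cast this
    push_cast at h2 ⊢
    linarith
  · intro m hm
    have := hzero m hm
    exact_mod_cast congrArg (fun z : ℤ => (z : ℝ)) this
  · have h2 : ((flipSeq B a n₀ - (A-3) : ℤ) : ℝ) ≤ ((-1 : ℤ) : ℝ) := by
      exact_mod_cast hneg
    push_cast at h2 ⊢
    linarith

lemma side_pos {a : ℕ → ℤ} (ha : ∀ n, a n ∈ Set.Icc (0:ℤ) (B-1))
    (hne : ¬ ∀ n, a n = astar A B n)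
    (hlex : ∀ n : ℕ, (∀ m < n, flipSeq B a m = A - 3) → A - 3 ≤ flipSeq B a n) :
    0 < ∑' n, ((flipSeq B a n - (A-3) : ℤ) : ℝ) * ((-(Lr A B))⁻¹)^(n+1) := by
  have hA := hA5 hAB h5
  have hex : ∃ n, flipSeq B a n - (A-3) ≠ 0 := by
    by_contra h
    push_neg at h
    exact hne fun n => (cz_iff a n).mp (h n)
  obtain ⟨n₀, hspec, hzero⟩ : ∃ n₀, flipSeq B a n₀ - (A-3) ≠ 0 ∧
      ∀ m < n₀, flipSeq B a m - (A-3) = 0 := by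
    refine ⟨Nat.find hex, Nat.find_spec hex, fun m hm => ?_⟩
    have := Nat.find_min hex hm
    push_neg at this
    exact this
  have hlexn : A - 3 ≤ flipSeq B a n₀ := by
    apply hlex
    intro m hm
    have := hzero m hm
    omega
  have hneg : -(flipSeq B a n₀ - (A-3)) ≤ -1 := by omega
  have hμ : 1 < -(Lr A B) := by have := Lr_neg hAB h5; linarith
  have hUμ : (A:ℝ) - 3 < -(Lr A B) - 1 := by
    have := Lr_lt hAB h5; linarith
  have key : ∑' n, (-((flipSeq B a n - (A-3) : ℤ) : ℝ)) * ((-(Lr A B))⁻¹)^(n+1) < 0 := by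
    apply shift_neg hμ _ (K := (B:ℝ)) (U := (A:ℝ) - 3) _ _
      (by have := hra hAB h5; linarith) hUμ n₀ _ _
    · intro n
      have hf := flip_mem ha n
      simp only [Set.mem_Icc] at hf
      have habs : |(-(flipSeq B a n - (A-3)))| ≤ B := abs_le.mpr ⟨by omega, by omega⟩
      calc |(-((flipSeq B a n - (A-3) : ℤ) : ℝ))|
          = (((|(-(flipSeq B a n - (A-3)))| : ℤ)) : ℝ) := by
            rw [Int.cast_abs]; push_cast; ring_nf
        _ ≤ (B:ℝ) := by exact_mod_cast habs
    · intro n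
      have hf := flip_mem ha n
      simp only [Set.mem_Icc] at hf
      have : -(flipSeq B a n - (A-3)) ≤ A - 3 := by omega
      have h2 : ((-(flipSeq B a n - (A-3)) : ℤ) : ℝ) ≤ ((A - 3 : ℤ) : ℝ) := by
        exact_mod_cast this
      push_cast at h2 ⊢
      linarith
    · intro m hm
      have := hzero m hm
      have h2 : ((flipSeq B a m - (A-3) : ℤ) : ℝ) = 0 := by exact_mod_cast this
      linarith
    · have h2 : ((-(flipSeq B a n₀ - (A-3)) : ℤ) : ℝ) ≤ ((-1 : ℤ) : ℝ) := by
        exact_mod_cast hneg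
      push_cast at h2 ⊢
      linarith
  have key2 : ∑' n, -(((flipSeq B a n - (A-3) : ℤ) : ℝ) * ((-(Lr A B))⁻¹)^(n+1)) < 0 := by
    simpa only [neg_mul] using key
  rw [tsum_neg] at key2
  linarith

/-! ### identification of the cut point -/

lemma zPt : ∑' n, tm A B (astar A B) n = cutPt A B := by
  have hsum := summable_tm hAB h5 (astar_mem hAB h5)
  have hinj2 : Function.Injective (fun k : ℕ => 2*k) := fun x y h => by
    dsimp only at h; omega
  have hinj2' : Function.Injective (fun k : ℕ => 2*k+1) := fun x y h => by
    dsimp only at h; omega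
  have he : Summable fun k => tm A B (astar A B) (2*k) := hsum.comp_injective hinj2
  have ho : Summable fun k => tm A B (astar A B) (2*k+1) := hsum.comp_injective hinj2'
  rw [← tsum_even_add_odd he ho, cutPt, ← Summable.tsum_add he ho]
  apply tsum_congr
  intro k
  have h1 : tm A B (astar A B) (2*k)
      = ((M' A B)⁻¹ ^ (2*k+1)).mulVec (((A:ℝ) - 3) • e1) := by
    rw [tm]
    congr 1
    have : astar A B (2*k) = A - 3 := by
      simp [astar, Nat.mul_mod_right]
    rw [this]
    push_cast
    ring_nf
  have h2 : tm A B (astar A B) (2*k+1)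
      = ((M' A B)⁻¹ ^ (2*k+2)).mulVec (((B:ℝ) - (A:ℝ) + 2) • e1) := by
    have hmod : (2*k+1) % 2 = 1 := by omega
    have ha2 : ((astar A B (2*k+1) : ℤ) : ℝ) = (B:ℝ) - (A:ℝ) + 2 := by
      simp only [astar, hmod]
      norm_num
    rw [tm, ha2]
  rw [h1, h2]

end DAux

open DAux in
/-- For `0 < A ≤ B`, `B ≥ 2`, `2A - B ≥ 5`, the intersection
`D₁ ∩ D₂` is the singleton `{z}`. -/
theorem D1_inter_D2_eq_singleton
    (A B : ℤ) (hA : 0 < A) (hAB : A ≤ B) (hB : 2 ≤ B) (h5 : 5 ≤ 2 * A - B) :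
    D1 A B ∩ D2 A B = {cutPt A B} := by
  ext x
  simp only [Set.mem_inter_iff, Set.mem_singleton_iff, D1, D2, Set.mem_setOf_eq]
  constructor
  · rintro ⟨⟨a, ha, hlex, hxa⟩, a', ha', hlex', hxa'⟩
    have hxa2 : x = ∑' n, tm A B a n := hxa
    have hxa2' : x = ∑' n, tm A B a' n := hxa'
    by_cases hall : ∀ n, a n = astar A B n
    · have : (∑' n, tm A B a n) = ∑' n, tm A B (astar A B) n :=
        tsum_congr fun n => by rw [tm, tm, hall n]
      rw [hxa2, this, zPt hAB h5]
    · by_cases hall' : ∀ n, a' n = astar A B n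
      · have : (∑' n, tm A B a' n) = ∑' n, tm A B (astar A B) n :=
          tsum_congr fun n => by rw [tm, tm, hall' n]
        rw [hxa2', this, zPt hAB h5]
      · exfalso
        have hp : phi A B x = ∑' n, (a n : ℝ) * ((Lr A B)⁻¹)^(n+1) := by
          rw [hxa2]; exact phi_tsum hAB h5 ha
        have hp' : phi A B x = ∑' n, (a' n : ℝ) * ((Lr A B)⁻¹)^(n+1) := by
          rw [hxa2']; exact phi_tsum hAB h5 ha'
        have hd := Sdiff hAB h5 ha
        have hd' := Sdiff hAB h5 ha'
        have hsn := side_neg hAB h5 ha hall hlex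
        have hsp := side_pos hAB h5 ha' hall' hlex'
        -- S a - S astar = -(negative) > 0 ; S a' - S astar = -(positive) < 0
        rw [← hp] at hd
        rw [← hp'] at hd'
        linarith
  · rintro rfl
    have hmem := astar_mem hAB h5
    have hflip : ∀ n, flipSeq B (astar A B) n = A - 3 := flip_astar
    have hz : cutPt A B = ∑' n : ℕ, ((M' A B)⁻¹ ^ (n + 1)).mulVec
        (((astar A B n : ℤ) : ℝ) • e1) := (zPt hAB h5).symm
    exact ⟨⟨astar A B, hmem, fun n _ => (hflip n).le, hz⟩,
      ⟨astar A B, hmem, fun n _ => (hflip n).ge, hz⟩⟩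
end
end

section
/- Let A, B ∈ ℤ with 0 < A ≤ B, B ≥ 2 and 2A − B ≥ 5 (so A ≥ 5), let M = [[0, −B], [1, −A]] acting on ℝ², let T be the tile for M and digits {0, …, B−1}·e₁, and let D₁, D₂ be defined by the lexicographic digit conditions below. Then D₁ and D₂ are compact subsets of T and T = D₁ ∪ D₂. -/
noncomputable section

/-! ### Auxiliary material -/
set_option maxHeartbeats 1000000

/-- The inverse of `M'`, written explicitly. -/
def Ninv (A B : ℤ) : Matrix (Fin 2) (Fin 2) ℝ := !![-(A:ℝ)/B, 1; -(1:ℝ)/B, 0]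

lemma M_mul_Ninv (A B : ℤ) (hB : (B:ℝ) ≠ 0) : M' A B * Ninv A B = 1 := by
  ext i j
  fin_cases i <;> fin_cases j <;>
    simp [M', Ninv, Matrix.mul_apply, Fin.sum_univ_two] <;> field_simp <;> ring

lemma Ninv_mul_M (A B : ℤ) (hB : (B:ℝ) ≠ 0) : Ninv A B * M' A B = 1 :=
  mul_eq_one_comm.mp (M_mul_Ninv A B hB)

lemma M_inv_eq (A B : ℤ) (hB : (B:ℝ) ≠ 0) : (M' A B)⁻¹ = Ninv A B :=
  Matrix.inv_eq_right_inv (M_mul_Ninv A B hB)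

lemma Ninv_sq (A B : ℤ) (hB : (B:ℝ) ≠ 0) :
    (Ninv A B)^2 = (-(A:ℝ)/B) • Ninv A B + (-(1:ℝ)/B) • (1 : Matrix (Fin 2) (Fin 2) ℝ) := by
  ext i j
  fin_cases i <;> fin_cases j <;>
    simp [Ninv, pow_two, Matrix.mul_apply, Fin.sum_univ_two] <;> field_simp

lemma rec_closed (c1 c2 μ ν : ℝ) (hμ : μ^2 = c1*μ + c2) (hν : ν^2 = c1*ν + c2)
    (hne : μ ≠ ν) (u : ℕ → ℝ) (hu : ∀ n, u (n+2) = c1 * u (n+1) + c2 * u n) :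
    ∀ n, u n = ((u 1 - ν * u 0)/(μ - ν)) * μ^n + ((μ * u 0 - u 1)/(μ - ν)) * ν^n := by
  have hd : μ - ν ≠ 0 := sub_ne_zero.mpr hne
  have key : ∀ n, (μ - ν) * u n = (u 1 - ν * u 0) * μ^n + (μ * u 0 - u 1) * ν^n ∧
      (μ - ν) * u (n+1) = (u 1 - ν * u 0) * μ^(n+1) + (μ * u 0 - u 1) * ν^(n+1) := by
    intro n
    induction n with
    | zero => exact ⟨by ring_nf, by ring_nf⟩
    | succ n ih =>
      refine ⟨ih.2, ?_⟩
      have h2 := hu n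
      have e : (μ - ν) * u (n+2) = c1 * ((μ - ν) * u (n+1)) + c2 * ((μ - ν) * u n) := by
        rw [h2]; ring
      rw [e, ih.1, ih.2]
      linear_combination (-((u 1 - ν * u 0) * μ^n)) * hμ - ((μ * u 0 - u 1) * ν^n) * hν
  intro n
  have h := (key n).1
  field_simp
  linarith [h]

lemma rec_bound (c1 c2 μ ν ρ : ℝ) (hμ : μ^2 = c1*μ + c2) (hν : ν^2 = c1*ν + c2)
    (hne : μ ≠ ν) (hμρ : |μ| ≤ ρ) (hνρ : |ν| ≤ ρ) (u : ℕ → ℝ)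
    (hu : ∀ n, u (n+2) = c1 * u (n+1) + c2 * u n) :
    ∃ C, 0 < C ∧ ∀ n, |u n| ≤ C * ρ^n := by
  have hρ0 : 0 ≤ ρ := le_trans (abs_nonneg μ) hμρ
  set α := (u 1 - ν * u 0)/(μ - ν)
  set β := (μ * u 0 - u 1)/(μ - ν)
  refine ⟨|α| + |β| + 1, by positivity, fun n => ?_⟩
  rw [rec_closed c1 c2 μ ν hμ hν hne u hu n]
  have h1 : |α * μ^n| ≤ |α| * ρ^n := by
    rw [abs_mul, abs_pow]
    exact mul_le_mul_of_nonneg_left (pow_le_pow_left₀ (abs_nonneg μ) hμρ n) (abs_nonneg α)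
  have h2 : |β * ν^n| ≤ |β| * ρ^n := by
    rw [abs_mul, abs_pow]
    exact mul_le_mul_of_nonneg_left (pow_le_pow_left₀ (abs_nonneg ν) hνρ n) (abs_nonneg β)
  calc |α * μ^n + β * ν^n| ≤ |α * μ^n| + |β * ν^n| := abs_add_le _ _
    _ ≤ |α| * ρ^n + |β| * ρ^n := add_le_add h1 h2
    _ ≤ (|α| + |β| + 1) * ρ^n := by nlinarith [pow_nonneg hρ0 n]

lemma params (A B : ℤ) (hA : 0 < A) (hAB : A ≤ B) (h5 : 5 ≤ 2*A - B) :
    ∃ ρ μ ν : ℝ, 0 ≤ ρ ∧ ρ < 1 ∧ μ ≠ ν ∧ |μ| ≤ ρ ∧ |ν| ≤ ρ ∧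
      μ^2 = (-(A:ℝ)/B)*μ + (-(1:ℝ)/B) ∧ ν^2 = (-(A:ℝ)/B)*ν + (-(1:ℝ)/B) := by
  have hBR : (0:ℝ) < B := by exact_mod_cast lt_of_lt_of_le hA hAB
  have hAR : (0:ℝ) < A := by exact_mod_cast hA
  have hABR : (A:ℝ) ≤ B := by exact_mod_cast hAB
  have hBle : (B:ℝ) ≤ 2*A - 5 := by
    have : B ≤ 2*A - 5 := by omega
    exact_mod_cast this
  have hdisc : 0 < (A:ℝ)^2 - 4*B := by nlinarith
  set s : ℝ := Real.sqrt ((A:ℝ)^2 - 4*B) with hs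
  have hs2 : s^2 = (A:ℝ)^2 - 4*B := Real.sq_sqrt hdisc.le
  have hs0 : 0 < s := Real.sqrt_pos.mpr hdisc
  refine ⟨((A:ℝ) + s)/(2*B), (-(A:ℝ) + s)/(2*B), (-(A:ℝ) - s)/(2*B), ?_, ?_, ?_, ?_, ?_, ?_, ?_⟩
  · positivity
  · rw [div_lt_one (by positivity)]
    have h2 : (0:ℝ) < 2*B - A := by linarith
    have h1 : s < 2*B - A := by
      have h3 : s < Real.sqrt ((2*(B:ℝ) - A)^2) := Real.sqrt_lt_sqrt hdisc.le (by nlinarith)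
      rwa [Real.sqrt_sq h2.le] at h3
    linarith
  · intro h
    rw [div_eq_div_iff (by positivity) (by positivity)] at h
    nlinarith
  · rw [abs_div, abs_of_pos (by positivity : (0:ℝ) < 2*B),
      div_le_div_iff_of_pos_right (by positivity)]
    rw [abs_le]; constructor <;> linarith
  · rw [abs_div, abs_of_pos (by positivity : (0:ℝ) < 2*B),
      div_le_div_iff_of_pos_right (by positivity)]
    rw [abs_le]; constructor <;> linarith
  · field_simp
    linear_combination hs2
  · field_simp
    linear_combination hs2

lemma entry_bound (A B : ℤ) (hA : 0 < A) (hAB : A ≤ B) (h5 : 5 ≤ 2*A - B) :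
    ∃ C ρ : ℝ, 0 < C ∧ 0 ≤ ρ ∧ ρ < 1 ∧
      ∀ (n : ℕ) (i j : Fin 2), |((Ninv A B)^n) i j| ≤ C * ρ^n := by
  have hB : (B:ℝ) ≠ 0 := by
    have : (0:ℝ) < B := by exact_mod_cast lt_of_lt_of_le hA hAB
    exact this.ne'
  obtain ⟨ρ, μ, ν, hρ0, hρ1, hne, hμρ, hνρ, hμ, hν⟩ := params A B hA hAB h5
  have hrec : ∀ (i j : Fin 2) (n : ℕ), ((Ninv A B)^(n+2)) i j =
      (-(A:ℝ)/B) * (((Ninv A B)^(n+1)) i j) + (-(1:ℝ)/B) * (((Ninv A B)^n) i j) := by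
    intro i j n
    have h : (Ninv A B)^(n+2) = (-(A:ℝ)/B) • (Ninv A B)^(n+1) + (-(1:ℝ)/B) • (Ninv A B)^n := by
      rw [pow_add, Ninv_sq A B hB, Matrix.mul_add, Matrix.mul_smul, Matrix.mul_smul, mul_one,
        ← pow_succ]
    rw [h]
    simp [Matrix.add_apply, Matrix.smul_apply, smul_eq_mul]
  have hC : ∀ i j : Fin 2, ∃ C, 0 < C ∧ ∀ n, |((Ninv A B)^n) i j| ≤ C * ρ^n := by
    intro i j
    exact rec_bound _ _ μ ν ρ hμ hν hne hμρ hνρ (fun n => ((Ninv A B)^n) i j) (hrec i j)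
  choose C hCpos hCb using hC
  refine ⟨∑ i : Fin 2, ∑ j : Fin 2, C i j, ρ,
    Finset.sum_pos (fun i _ => Finset.sum_pos (fun j _ => hCpos i j) Finset.univ_nonempty)
      Finset.univ_nonempty, hρ0, hρ1, ?_⟩
  intro n i j
  refine (hCb i j n).trans (mul_le_mul_of_nonneg_right ?_ (pow_nonneg hρ0 n))
  calc C i j ≤ ∑ j : Fin 2, C i j :=
        Finset.single_le_sum (fun k _ => (hCpos i k).le) (Finset.mem_univ j)
    _ ≤ ∑ i : Fin 2, ∑ j : Fin 2, C i j :=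
        Finset.single_le_sum (fun k _ => Finset.sum_nonneg fun l _ => (hCpos k l).le)
          (Finset.mem_univ i)

lemma mulVec_norm_le (P : Matrix (Fin 2) (Fin 2) ℝ) (c : ℝ)
    (hc : ∀ i j, |P i j| ≤ c) (v : Fin 2 → ℝ) : ‖P.mulVec v‖ ≤ 2*c*‖v‖ := by
  have hc0 : 0 ≤ c := le_trans (abs_nonneg _) (hc 0 0)
  rw [pi_norm_le_iff_of_nonneg (by positivity)]
  intro i
  have h : P.mulVec v i = P i 0 * v 0 + P i 1 * v 1 := by
    simp [Matrix.mulVec, dotProduct, Fin.sum_univ_two]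
  rw [Real.norm_eq_abs, h]
  have h0 : |v 0| ≤ ‖v‖ := by
    have := norm_le_pi_norm v 0; rwa [Real.norm_eq_abs] at this
  have h1 : |v 1| ≤ ‖v‖ := by
    have := norm_le_pi_norm v 1; rwa [Real.norm_eq_abs] at this
  calc |P i 0 * v 0 + P i 1 * v 1| ≤ |P i 0 * v 0| + |P i 1 * v 1| := abs_add_le _ _
    _ = |P i 0| * |v 0| + |P i 1| * |v 1| := by rw [abs_mul, abs_mul]
    _ ≤ c * ‖v‖ + c * ‖v‖ := add_le_add
        (mul_le_mul (hc i 0) h0 (abs_nonneg _) hc0)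
        (mul_le_mul (hc i 1) h1 (abs_nonneg _) hc0)
    _ = 2*c*‖v‖ := by ring

lemma lex_total (b : ℕ → ℤ) (c : ℤ) :
    (∀ n, (∀ m < n, b m = c) → b n ≤ c) ∨ (∀ n, (∀ m < n, b m = c) → c ≤ b n) := by
  by_cases h : ∀ n, (∀ m < n, b m = c) → b n ≤ c
  · exact Or.inl h
  · right
    push_neg at h
    obtain ⟨n₀, h₀, hlt⟩ := h
    intro n hn
    rcases lt_trichotomy n n₀ with h1 | h1 | h1
    · exact le_of_eq (h₀ n h1).symm
    · subst h1; exact hlt.le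
    · exact absurd (hn n₀ h1) (by omega)

/-- For `0 < A ≤ B`, `B ≥ 2`, `2A - B ≥ 5`, the sets `D₁` and `D₂`
are compact subsets of the tile `T` and `T = D₁ ∪ D₂`. -/
theorem D1_D2_compact_cover
    (A B : ℤ) (hA : 0 < A) (hAB : A ≤ B) (hB : 2 ≤ B) (h5 : 5 ≤ 2 * A - B)
    (T : Set (Fin 2 → ℝ)) (hTne : T.Nonempty) (hTcp : IsCompact T)
    (hT : (M' A B).mulVec '' T =
      ⋃ j ∈ Set.Icc (0 : ℤ) (B - 1), (fun x => x + (j : ℝ) • e1) '' T) :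
    IsCompact (D1 A B) ∧ IsCompact (D2 A B) ∧
      D1 A B ⊆ T ∧ D2 A B ⊆ T ∧ T = D1 A B ∪ D2 A B := by
  classical
  have hB0 : (0:ℝ) < B := by exact_mod_cast lt_of_lt_of_le hA hAB
  have hBne : (B:ℝ) ≠ 0 := hB0.ne'
  have hInv : (M' A B)⁻¹ = Ninv A B := M_inv_eq A B hBne
  obtain ⟨C, ρ, hC, hρ0, hρ1, hent⟩ := entry_bound A B hA hAB h5
  set N : Matrix (Fin 2) (Fin 2) ℝ := Ninv A B with hNdef
  -- the summands
  set term : (ℕ → ℤ) → ℕ → (Fin 2 → ℝ) :=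
    fun a n => (N^(n+1)).mulVec ((a n : ℝ) • e1) with hterm
  -- norm bound on mulVec by powers
  have hvec : ∀ (m : ℕ) (v : Fin 2 → ℝ), ‖(N^m).mulVec v‖ ≤ 2*C*‖v‖*ρ^m := by
    intro m v
    calc ‖(N^m).mulVec v‖ ≤ 2*(C*ρ^m)*‖v‖ :=
          mulVec_norm_le (N^m) (C*ρ^m) (fun i j => hent m i j) v
      _ = 2*C*‖v‖*ρ^m := by ring
  have he1 : ‖e1‖ ≤ 1 := by
    rw [pi_norm_le_iff_of_nonneg (by norm_num)]
    intro i
    fin_cases i <;> simp [e1]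
  have htermb : ∀ (a : ℕ → ℤ), (∀ n, a n ∈ Set.Icc (0:ℤ) (B-1)) →
      ∀ n, ‖term a n‖ ≤ (2*C*B*ρ) * ρ^n := by
    intro a ha n
    have hab : |(a n : ℝ)| ≤ B := by
      have h1 := (ha n).1; have h2 := (ha n).2
      rw [abs_le]; constructor <;> [exact_mod_cast le_trans (by omega : -B ≤ (0:ℤ)) h1;
        exact_mod_cast le_trans h2 (by omega : B - 1 ≤ B)]
    have hsm : ‖(a n : ℝ) • e1‖ ≤ (B:ℝ) := by
      rw [norm_smul, Real.norm_eq_abs]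
      calc |(a n:ℝ)| * ‖e1‖ ≤ (B:ℝ) * 1 :=
            mul_le_mul hab he1 (norm_nonneg _) (by positivity)
        _ = B := by ring
    calc ‖term a n‖ ≤ 2*C*‖(a n : ℝ) • e1‖*ρ^(n+1) := hvec (n+1) _
      _ ≤ 2*C*B*ρ^(n+1) := by gcongr
      _ = (2*C*B*ρ) * ρ^n := by ring
  have hsummg : Summable (fun n : ℕ => (2*C*B*ρ) * ρ^n) :=
    (summable_geometric_of_lt_one hρ0 hρ1).mul_left _
  have hsum : ∀ a : ℕ → ℤ, (∀ n, a n ∈ Set.Icc (0:ℤ) (B-1)) → Summable (term a) :=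
    fun a ha => Summable.of_norm_bounded hsummg (htermb a ha)
  -- membership step
  have hTstep : ∀ y ∈ T, ∀ j ∈ Set.Icc (0:ℤ) (B-1), N.mulVec (y + (j:ℝ) • e1) ∈ T := by
    intro y hy j hj
    have hmem : y + (j:ℝ) • e1 ∈ (M' A B).mulVec '' T := by
      rw [hT]
      exact Set.mem_biUnion hj ⟨y, hy, rfl⟩
    obtain ⟨z, hz, hzeq⟩ := hmem
    have hid : N.mulVec (y + (j:ℝ) • e1) = z := by
      rw [← hzeq, Matrix.mulVec_mulVec, hNdef, Ninv_mul_M A B hBne, Matrix.one_mulVec]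
    rwa [hid]
  -- distributing mulVec over finite sums
  have hdist : ∀ (P : Matrix (Fin 2) (Fin 2) ℝ) (s : Finset ℕ) (f : ℕ → Fin 2 → ℝ),
      P.mulVec (∑ n ∈ s, f n) = ∑ n ∈ s, P.mulVec (f n) := by
    intro P s f
    induction s using Finset.induction_on with
    | empty => simp
    | insert _ _ hns ih => rw [Finset.sum_insert hns, Finset.sum_insert hns, Matrix.mulVec_add, ih]
  -- partial sums with a seed in T stay in T
  have hPt : ∀ t ∈ T, ∀ (k : ℕ) (a : ℕ → ℤ), (∀ n, a n ∈ Set.Icc (0:ℤ) (B-1)) →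
      (∑ n ∈ Finset.range k, term a n) + (N^k).mulVec t ∈ T := by
    intro t ht k
    induction k with
    | zero => intro a ha; simpa using ht
    | succ k ih =>
      intro a ha
      have hy := ih (fun n => a (n+1)) (fun n => ha (n+1))
      set y := (∑ n ∈ Finset.range k, term (fun n => a (n+1)) n) + (N^k).mulVec t with hy_def
      have hmem := hTstep y hy (a 0) (ha 0)
      have heq : N.mulVec (y + ((a 0 : ℤ):ℝ) • e1) =
          (∑ n ∈ Finset.range (k+1), term a n) + (N^(k+1)).mulVec t := by
        rw [hy_def, Matrix.mulVec_add, Matrix.mulVec_add, hdist,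
          Finset.sum_range_succ']
        have h1 : ∀ n, N.mulVec (term (fun n => a (n+1)) n) = term a (n+1) := by
          intro n
          simp only [hterm, Matrix.mulVec_mulVec, ← pow_succ']
        have h2 : N.mulVec ((N^k).mulVec t) = (N^(k+1)).mulVec t := by
          rw [Matrix.mulVec_mulVec, ← pow_succ']
        have h3 : N.mulVec (((a 0 : ℤ):ℝ) • e1) = term a 0 := by
          simp [hterm]
        rw [h2, h3]
        simp only [h1]
        abel
      rwa [heq] at hmem
  -- powers of N kill vectors
  have hNk0 : ∀ v : Fin 2 → ℝ, Filter.Tendsto (fun k => (N^k).mulVec v) Filter.atTop (nhds 0) := by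
    intro v
    apply squeeze_zero_norm (fun k => hvec k v)
    have h := tendsto_pow_atTop_nhds_zero_of_lt_one hρ0 hρ1
    simpa [mul_comm] using h.const_mul (2*C*‖v‖)
  -- all digit sums lie in T
  have hinT : ∀ a : ℕ → ℤ, (∀ n, a n ∈ Set.Icc (0:ℤ) (B-1)) → (∑' n, term a n) ∈ T := by
    intro a ha
    obtain ⟨t, ht⟩ := hTne
    have h1 : Filter.Tendsto (fun k => (∑ n ∈ Finset.range k, term a n) + (N^k).mulVec t)
        Filter.atTop (nhds (∑' n, term a n)) := by
      have h2 := (hsum a ha).hasSum.tendsto_sum_nat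
      simpa using h2.add (hNk0 t)
    exact hTcp.isClosed.mem_of_tendsto h1
      (Filter.Eventually.of_forall (fun k => hPt t ht k a ha))
  -- digit expansion of points of T
  have hstep' : ∀ x : {x // x ∈ T}, ∃ (j : ℤ) (y : {x // x ∈ T}),
      j ∈ Set.Icc (0:ℤ) (B-1) ∧ (x : Fin 2 → ℝ) = N.mulVec y + (j:ℝ) • N.mulVec e1 := by
    rintro ⟨x, hx⟩
    have hmem : (M' A B).mulVec x ∈ ⋃ j ∈ Set.Icc (0:ℤ) (B-1),
        (fun x => x + (j:ℝ) • e1) '' T := by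
      rw [← hT]; exact ⟨x, hx, rfl⟩
    simp only [Set.mem_iUnion, Set.mem_image] at hmem
    obtain ⟨j, hj, y, hy, hyx⟩ := hmem
    refine ⟨j, ⟨y, hy⟩, hj, ?_⟩
    have hxy : x = N.mulVec (y + (j:ℝ) • e1) := by
      rw [hyx, Matrix.mulVec_mulVec, hNdef, Ninv_mul_M A B hBne, Matrix.one_mulVec]
    show x = N.mulVec y + (j:ℝ) • N.mulVec e1
    rw [hxy, Matrix.mulVec_add, Matrix.mulVec_smul]
  choose dig nxt hdig hrel using hstep'
  obtain ⟨R, hR⟩ : ∃ R, ∀ y ∈ T, ‖y‖ ≤ R := hTcp.isBounded.exists_norm_le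
  have hexpand : ∀ x ∈ T, ∃ a : ℕ → ℤ, (∀ n, a n ∈ Set.Icc (0:ℤ) (B-1)) ∧
      x = ∑' n, term a n := by
    intro x hx
    set xs : ℕ → {x // x ∈ T} := fun n => nxt^[n] ⟨x, hx⟩ with hxs_def
    set a : ℕ → ℤ := fun n => dig (xs n) with ha_def
    have hxs : ∀ n, xs (n+1) = nxt (xs n) := by
      intro n
      simp only [hxs_def, Function.iterate_succ_apply']
    refine ⟨a, fun n => hdig (xs n), ?_⟩
    have hexp : ∀ k, x = (∑ n ∈ Finset.range k, term a n) + (N^k).mulVec (xs k) := by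
      intro k
      induction k with
      | zero => simp [hxs_def]
      | succ k ih =>
        rw [ih, Finset.sum_range_succ]
        have h1 : ((xs k : Fin 2 → ℝ)) = N.mulVec (xs (k+1)) + ((a k : ℤ):ℝ) • N.mulVec e1 := by
          rw [hxs k]; exact hrel (xs k)
        rw [h1, Matrix.mulVec_add, Matrix.mulVec_smul, Matrix.mulVec_mulVec,
          Matrix.mulVec_mulVec, ← pow_succ]
        have h3 : term a k = ((a k : ℤ):ℝ) • (N^(k+1)).mulVec e1 := by
          simp only [hterm, Matrix.mulVec_smul]
        rw [h3]
        abel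
    have htend : Filter.Tendsto (fun k => ∑ n ∈ Finset.range k, term a n)
        Filter.atTop (nhds x) := by
      have h3 : Filter.Tendsto (fun k => (N^k).mulVec (xs k : Fin 2 → ℝ))
          Filter.atTop (nhds 0) := by
        apply squeeze_zero_norm (a := fun k => (2*C*R)*ρ^k)
        · intro k
          calc ‖(N^k).mulVec (xs k : Fin 2 → ℝ)‖ ≤ 2*C*‖(xs k : Fin 2 → ℝ)‖*ρ^k := hvec k _
            _ ≤ (2*C*R)*ρ^k := by
                have hR0 : 0 ≤ R := le_trans (norm_nonneg _) (hR _ (xs k).2)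
                gcongr
                exact hR _ (xs k).2
        · have h := tendsto_pow_atTop_nhds_zero_of_lt_one hρ0 hρ1
          simpa using h.const_mul (2*C*R)
      have h4 : ∀ k, (∑ n ∈ Finset.range k, term a n) = x - (N^k).mulVec (xs k : Fin 2 → ℝ) := by
        intro k
        rw [hexp k]; abel
      have h5 : Filter.Tendsto (fun k => x - (N^k).mulVec (xs k : Fin 2 → ℝ))
          Filter.atTop (nhds x) := by
        simpa using Filter.Tendsto.sub (tendsto_const_nhds (x := x)) h3
      exact h5.congr (fun k => (h4 k).symm)
    exact tendsto_nhds_unique htend ((hsum a (fun n => hdig (xs n))).hasSum.tendsto_sum_nat)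
  -- rewrite D1/D2 in terms of `term`
  have hD1 : D1 A B = {x | ∃ a : ℕ → ℤ, (∀ n, a n ∈ Set.Icc (0 : ℤ) (B - 1)) ∧
      (∀ n : ℕ, (∀ m < n, flipSeq B a m = A - 3) → flipSeq B a n ≤ A - 3) ∧
      x = ∑' n, term a n} := by
    simp only [D1, hInv, hterm, hNdef]
  have hD2 : D2 A B = {x | ∃ a : ℕ → ℤ, (∀ n, a n ∈ Set.Icc (0 : ℤ) (B - 1)) ∧
      (∀ n : ℕ, (∀ m < n, flipSeq B a m = A - 3) → A - 3 ≤ flipSeq B a n) ∧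
      x = ∑' n, term a n} := by
    simp only [D2, hInv, hterm, hNdef]
  -- subsets of T
  have hD1T : D1 A B ⊆ T := by
    rw [hD1]
    rintro x ⟨a, ha, -, rfl⟩
    exact hinT a ha
  have hD2T : D2 A B ⊆ T := by
    rw [hD2]
    rintro x ⟨a, ha, -, rfl⟩
    exact hinT a ha
  -- coverage
  have hcover : T = D1 A B ∪ D2 A B := by
    apply Set.Subset.antisymm
    · intro x hx
      obtain ⟨a, ha, hval⟩ := hexpand x hx
      rcases lex_total (flipSeq B a) (A - 3) with hl | hl
      · left; rw [hD1]; exact ⟨a, ha, hl, hval⟩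
      · right; rw [hD2]; exact ⟨a, ha, hl, hval⟩
    · exact Set.union_subset hD1T hD2T
  -- compactness via the digit space
  have hfin : (Set.Icc (0:ℤ) (B-1)).Finite := Set.finite_Icc _ _
  haveI hfin' : Finite ↥(Set.Icc (0:ℤ) (B-1)) := hfin.to_subtype
  haveI : CompactSpace ↥(Set.Icc (0:ℤ) (B-1)) := Finite.compactSpace
  set X := (ℕ → ↥(Set.Icc (0:ℤ) (B-1))) with hX
  set Φ : X → (Fin 2 → ℝ) := fun σ => ∑' n, term (fun k => ((σ k : ℤ))) n with hΦdef
  have hΦ : Continuous Φ := by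
    apply continuous_tsum (u := fun n : ℕ => (2*C*B*ρ)*ρ^n)
    · intro n
      have hfe : (fun σ : X => term (fun k => ((σ k : ℤ))) n) =
          (fun z : ↥(Set.Icc (0:ℤ) (B-1)) => (N^(n+1)).mulVec (((z:ℤ):ℝ) • e1)) ∘
            (fun σ : X => σ n) := by
        funext σ; rfl
      rw [hfe]
      exact (continuous_of_discreteTopology).comp (continuous_apply n)
    · exact hsummg
    · intro n σ
      exact htermb _ (fun k => (σ k).2) n
  -- closedness of the lexicographic conditions
  have hbasic : ∀ (m : ℕ) (s : Set ↥(Set.Icc (0:ℤ) (B-1))),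
      IsClosed {σ : X | σ m ∈ s} ∧ IsOpen {σ : X | σ m ∈ s} :=
    fun m s => ⟨(isClosed_discrete s).preimage (continuous_apply m),
      (isOpen_discrete s).preimage (continuous_apply m)⟩
  have hflipdep : ∀ (σ : X) (m : ℕ), flipSeq B (fun k => ((σ k : ℤ))) m =
      (if m % 2 = 0 then ((σ m : ℤ)) else B - 1 - (σ m : ℤ)) := by
    intro σ m; simp [flipSeq]
  have hEset : ∀ (m : ℕ) (P : ℤ → Prop),
      {σ : X | P (flipSeq B (fun k => ((σ k : ℤ))) m)} =
      {σ : X | σ m ∈ {z : ↥(Set.Icc (0:ℤ) (B-1)) |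
        P (if m % 2 = 0 then ((z:ℤ)) else B - 1 - (z:ℤ))}} := by
    intro m P
    ext σ
    simp only [Set.mem_setOf_eq, hflipdep]
  have hKclosed : ∀ (P : ℕ → ℤ → Prop),
      IsClosed {σ : X | ∀ n, (∀ m < n, flipSeq B (fun k => ((σ k : ℤ))) m = A - 3) →
        P n (flipSeq B (fun k => ((σ k : ℤ))) n)} := by
    intro P
    have : {σ : X | ∀ n, (∀ m < n, flipSeq B (fun k => ((σ k : ℤ))) m = A - 3) →
        P n (flipSeq B (fun k => ((σ k : ℤ))) n)} =
        ⋂ n, ({σ : X | ∀ m < n, flipSeq B (fun k => ((σ k : ℤ))) m = A - 3}ᶜ ∪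
          {σ : X | P n (flipSeq B (fun k => ((σ k : ℤ))) n)}) := by
      ext σ
      simp only [Set.mem_iInter, Set.mem_union, Set.mem_compl_iff, Set.mem_setOf_eq,
        imp_iff_not_or]
    rw [this]
    apply isClosed_iInter
    intro n
    apply IsClosed.union
    · apply IsOpen.isClosed_compl
      have h2 : {σ : X | ∀ m < n, flipSeq B (fun k => ((σ k : ℤ))) m = A - 3} =
          ⋂ m : Fin n, {σ : X | flipSeq B (fun k => ((σ k : ℤ))) (m : ℕ) = A - 3} := by
        ext σ
        simp only [Set.mem_iInter, Set.mem_setOf_eq]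
        exact ⟨fun h m => h m m.2, fun h m hm => h ⟨m, hm⟩⟩
      rw [h2]
      apply isOpen_iInter_of_finite
      intro m
      rw [hEset (m : ℕ) (fun z => z = A - 3)]
      exact (hbasic _ _).2
    · rw [hEset n (fun z => P n z)]
      exact (hbasic _ _).1
  -- D1 as a continuous image
  have himage : ∀ (P : ℕ → ℤ → Prop),
      {x | ∃ a : ℕ → ℤ, (∀ n, a n ∈ Set.Icc (0 : ℤ) (B - 1)) ∧
        (∀ n : ℕ, (∀ m < n, flipSeq B a m = A - 3) → P n (flipSeq B a n)) ∧
        x = ∑' n, term a n} =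
      Φ '' {σ : X | ∀ n, (∀ m < n, flipSeq B (fun k => ((σ k : ℤ))) m = A - 3) →
        P n (flipSeq B (fun k => ((σ k : ℤ))) n)} := by
    intro P
    ext x
    constructor
    · rintro ⟨a, ha, hlex, rfl⟩
      exact ⟨fun n => ⟨a n, ha n⟩, hlex, rfl⟩
    · rintro ⟨σ, hσ, rfl⟩
      exact ⟨fun n => ((σ n : ℤ)), fun n => (σ n).2, hσ, rfl⟩
  have hcpt1 : IsCompact (D1 A B) := by
    rw [hD1, himage (fun n z => z ≤ A - 3)]
    exact ((hKclosed (fun n z => z ≤ A - 3)).isCompact).image hΦ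
  have hcpt2 : IsCompact (D2 A B) := by
    rw [hD2, himage (fun n z => A - 3 ≤ z)]
    exact ((hKclosed (fun n z => A - 3 ≤ z)).isCompact).image hΦ
  exact ⟨hcpt1, hcpt2, hD1T, hD2T, hcover⟩
end
end

section
/- Let A, B ∈ ℤ with 0 < A ≤ B, B ≥ 2, 2A − B = 3 and A ≠ B, let M = [[0, −B], [1, −A]] acting on ℝ², and let T be the tile for M and digits {0, …, B−1}·e₁. For digits a₁, a₁' ∈ {0, …, B−1} with a₁ ≠ a₁', the subdivision pieces T_{a₁} = M⁻¹·(T + a₁·e₁) and T_{a₁'} = M⁻¹·(T + a₁'·e₁) have nonempty intersection if and only if a₁ − a₁' = 1 or a₁ − a₁' = −1. -/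
noncomputable section

/-- The subdivision piece `T_{a₁…a_m} = M⁻¹(a₁e₁) + ⋯ + M^{-m}(a_m e₁) + M^{-m}·T`. -/
def subPiece (A B : ℤ) (T : Set (Fin 2 → ℝ)) {m : ℕ} (a : Fin m → ℤ) :
    Set (Fin 2 → ℝ) :=
  (fun x => (∑ i : Fin m, ((M' A B)⁻¹ ^ ((i : ℕ) + 1)).mulVec ((a i : ℝ) • e1))
    + ((M' A B)⁻¹ ^ m).mulVec x) '' T

open Filter Topology Matrix

/-- Second basis vector. -/
def e2 : Fin 2 → ℝ := ![0, 1]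

/-- Explicit inverse of `M'`. -/
def Nv (A B : ℤ) : Matrix (Fin 2) (Fin 2) ℝ := !![-(A:ℝ)/B, 1; -(1:ℝ)/B, 0]

section
variable (A B : ℤ)

lemma hMN (hB : (B:ℝ) ≠ 0) : M' A B * Nv A B = 1 := by
  rw [M', Nv, Matrix.mul_fin_two]
  ext i j
  fin_cases i <;> fin_cases j <;> simp <;> field_simp <;> ring

lemma hNM (hB : (B:ℝ) ≠ 0) : Nv A B * M' A B = 1 := by
  rw [M', Nv, Matrix.mul_fin_two]
  ext i j
  fin_cases i <;> fin_cases j <;> simp <;> field_simp <;> ring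

lemma hinv (hB : (B:ℝ) ≠ 0) : (M' A B)⁻¹ = Nv A B :=
  Matrix.inv_eq_right_inv (hMN A B hB)

lemma Nrec (hB : (B:ℝ) ≠ 0) : Nv A B ^ 2 = (-(A:ℝ)/B) • Nv A B + (-(1:ℝ)/B) • (1 : Matrix (Fin 2) (Fin 2) ℝ) := by
  rw [pow_two, Nv, Matrix.mul_fin_two]
  ext i j
  fin_cases i <;> fin_cases j <;>
    simp [Matrix.add_apply, Matrix.smul_apply, Matrix.one_apply, smul_eq_mul] <;> field_simp

lemma N_mulVec_inj (hB : (B:ℝ) ≠ 0) : Function.Injective ((Nv A B).mulVec) := by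
  intro x y h
  have : ∀ z, (M' A B).mulVec ((Nv A B).mulVec z) = z := by
    intro z
    rw [Matrix.mulVec_mulVec, hMN A B hB, Matrix.one_mulVec]
  rw [← this x, ← this y, h]

end


lemma scalar_decay (a b : ℝ) (ha : 0 ≤ a) (hb : 0 ≤ b) (hab : a + b ≤ 1)
    (hba : b ≤ a^2) (hθ1 : a^2 + a*b - b < 1) (u : ℕ → ℝ)
    (hu : ∀ n, u (n+2) = -a * u (n+1) - b * u n) :
    Tendsto u atTop (𝓝 0) := by
  set θ : ℝ := a^2 + a*b - b with hθdef
  have hθ0 : 0 ≤ θ := by nlinarith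
  set m : ℕ → ℝ := fun n => max |u n| |u (n+1)| with hm
  have hm0 : ∀ n, 0 ≤ m n := fun n => le_trans (abs_nonneg _) (le_max_left _ _)
  have hstep : ∀ n, |u (n+2)| ≤ m n := by
    intro n
    rw [hu n]
    have h1 : |u (n+1)| ≤ m n := le_max_right _ _
    have h2 : |u n| ≤ m n := le_max_left _ _
    calc |-a * u (n+1) - b * u n| ≤ |a * u (n+1)| + |b * u n| := by
          rw [neg_mul]; exact (abs_sub _ _).trans (by rw [abs_neg])
      _ = a * |u (n+1)| + b * |u n| := by rw [abs_mul, abs_mul, abs_of_nonneg ha, abs_of_nonneg hb]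
      _ ≤ a * m n + b * m n := by
          gcongr
      _ ≤ 1 * m n := by nlinarith [hm0 n]
      _ = m n := one_mul _
  have hmono : ∀ n, m (n+1) ≤ m n := by
    intro n
    exact max_le (le_max_right _ _) (hstep n)
  have hmono' : Antitone m := antitone_nat_of_succ_le hmono
  have hstep3 : ∀ n, |u (n+3)| ≤ θ * m n := by
    intro n
    have h3 : u (n+3) = (a^2 - b) * u (n+1) + (a*b) * u n := by
      have e1 := hu (n+1)
      have e2 := hu n
      have : n + 1 + 2 = n + 3 := by ring
      rw [this] at e1
      rw [e1, e2]; ring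
    have h1 : |u (n+1)| ≤ m n := le_max_right _ _
    have h2 : |u n| ≤ m n := le_max_left _ _
    calc |u (n+3)| ≤ |(a^2-b) * u (n+1)| + |(a*b) * u n| := by rw [h3]; exact abs_add_le _ _
      _ = (a^2-b) * |u (n+1)| + (a*b) * |u n| := by
          have k1 : |(a^2-b) * u (n+1)| = (a^2-b) * |u (n+1)| := by
            rw [abs_mul, abs_of_nonneg (show (0:ℝ) ≤ a^2 - b by linarith)]
          have k2 : |(a*b) * u n| = (a*b) * |u n| := by
            rw [abs_mul, abs_of_nonneg (mul_nonneg ha hb)]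
          rw [k1, k2]
      _ ≤ (a^2-b) * m n + (a*b) * m n := by gcongr <;> linarith
      _ = θ * m n := by ring
  have hm3 : ∀ n, m (n+3) ≤ θ * m n := by
    intro n
    apply max_le
    · exact hstep3 n
    · calc |u (n+4)| ≤ θ * m (n+1) := hstep3 (n+1)
        _ ≤ θ * m n := by nlinarith [hmono n]
  have hgeo : ∀ j, m (3*j) ≤ θ^j * m 0 := by
    intro j
    induction j with
    | zero => simp
    | succ j ih =>
      have : 3*(j+1) = 3*j + 3 := by ring
      rw [this]
      calc m (3*j+3) ≤ θ * m (3*j) := hm3 _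
        _ ≤ θ * (θ^j * m 0) := by nlinarith
        _ = θ^(j+1) * m 0 := by ring
  have hdiv : Tendsto (fun n : ℕ => n / 3) atTop atTop := by
    apply tendsto_atTop_atTop.2
    intro b
    exact ⟨3*b, fun n hn => Nat.le_div_iff_mul_le (by norm_num) |>.2 (by omega)⟩
  have hpow : Tendsto (fun n : ℕ => θ^(n/3) * m 0) atTop (𝓝 0) := by
    have := (tendsto_pow_atTop_nhds_zero_of_lt_one hθ0 hθ1).comp hdiv
    simpa using this.mul_const (m 0)
  apply squeeze_zero_norm _ hpow
  intro n
  have h1 : m n ≤ θ^(n/3) * m 0 := by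
    calc m n ≤ m (3*(n/3)) := hmono' (by omega)
      _ ≤ θ^(n/3) * m 0 := hgeo _
  calc ‖u n‖ = |u n| := rfl
    _ ≤ m n := le_max_left _ _
    _ ≤ _ := h1

lemma tendsto_Npow (A B : ℤ) (hA4 : 4 ≤ A) (hB3 : B = 2*A - 3) (v : Fin 2 → ℝ) :
    Tendsto (fun n => ((Nv A B)^n).mulVec v) atTop (𝓝 0) := by
  have hAr : (4:ℝ) ≤ (A:ℝ) := by exact_mod_cast hA4
  have hBr : (B:ℝ) = 2*(A:ℝ) - 3 := by rw [hB3]; push_cast; ring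
  have hBpos : (0:ℝ) < B := by rw [hBr]; linarith
  have hB : (B:ℝ) ≠ 0 := ne_of_gt hBpos
  set a : ℝ := (A:ℝ)/B with hadef
  set b : ℝ := 1/B with hbdef
  have hrec : ∀ n, (Nv A B)^(n+2) = (-a) • (Nv A B)^(n+1) + (-b) • (Nv A B)^n := by
    intro n
    have h2 : (Nv A B)^(n+2) = (Nv A B)^n * (Nv A B)^2 := by rw [← pow_add]
    rw [h2, Nrec A B hB, Matrix.mul_add, mul_smul_comm, mul_smul_comm, Matrix.mul_one,
      ← pow_succ]
    congr 1
    · congr 1; rw [hadef]; ring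
    · congr 1; rw [hbdef]; ring
  rw [tendsto_pi_nhds]
  intro i
  have : Tendsto (fun n => (((Nv A B)^n).mulVec v) i) atTop (𝓝 0) := by
    apply scalar_decay a b
    · positivity
    · positivity
    · rw [hadef, hbdef, ← add_div, div_le_one hBpos]; linarith
    · rw [hadef, hbdef, div_pow, div_le_div_iff₀ hBpos (by positivity)]
      nlinarith
    · rw [hadef, hbdef]
      rw [div_pow]
      have expand : (A:ℝ)^2/(B:ℝ)^2 + (A:ℝ)/B * (1/B) - 1/B = ((A:ℝ)^2 + A - B)/B^2 := by
        field_simp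
      rw [expand, div_lt_one (by positivity)]
      nlinarith
    · intro n
      rw [hrec n, Matrix.add_mulVec, Matrix.smul_mulVec, Matrix.smul_mulVec]
      simp only [Pi.add_apply, Pi.smul_apply, Pi.neg_apply, smul_eq_mul, neg_smul]
      ring
  simpa using this

-- membership of pieces
lemma mem_piece (A B : ℤ) (hB : (B:ℝ) ≠ 0) (T : Set (Fin 2 → ℝ))
    (hT : (M' A B).mulVec '' T =
      ⋃ j ∈ Set.Icc (0 : ℤ) (B - 1), (fun x => x + (j : ℝ) • e1) '' T)
    (d : ℤ) (hd : d ∈ Set.Icc (0:ℤ) (B-1)) (x : Fin 2 → ℝ) (hx : x ∈ T) :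
    (Nv A B).mulVec (x + (d:ℝ) • e1) ∈ T := by
  have hmem : x + (d:ℝ) • e1 ∈ ⋃ j ∈ Set.Icc (0 : ℤ) (B - 1), (fun x => x + (j : ℝ) • e1) '' T := by
    exact Set.mem_biUnion hd ⟨x, hx, rfl⟩
  rw [← hT] at hmem
  obtain ⟨t, htT, hteq⟩ := hmem
  have : (Nv A B).mulVec ((M' A B).mulVec t) = t := by
    rw [Matrix.mulVec_mulVec]
    have hNM : Nv A B * M' A B = 1 := by
      rw [M', Nv, Matrix.mul_fin_two]
      ext i j
      fin_cases i <;> fin_cases j <;> simp <;> field_simp <;> ring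
    rw [hNM, Matrix.one_mulVec]
  rw [← hteq, this]
  exact htT

-- explicit powers applied to e1
lemma Nv_e1 (A B : ℤ) : (Nv A B).mulVec e1 = ![-(A:ℝ)/B, -(1:ℝ)/B] := by
  funext i
  fin_cases i <;> simp [Nv, e1, Matrix.mulVec, dotProduct, Fin.sum_univ_two]

lemma Nv2_e1 (A B : ℤ) : ((Nv A B)^2).mulVec e1 =
    ![(A:ℝ)^2/B^2 - 1/B, (A:ℝ)/B^2] := by
  rw [pow_two, ← Matrix.mulVec_mulVec, Nv_e1]
  funext i
  fin_cases i <;>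
    simp [Nv, Matrix.mulVec, dotProduct, Fin.sum_univ_two] <;> ring

lemma Nv3_e1 (A B : ℤ) : ((Nv A B)^3).mulVec e1 =
    ![-(A:ℝ)^3/B^3 + 2*(A:ℝ)/B^2, -(A:ℝ)^2/B^3 + 1/B^2] := by
  have h3 : (Nv A B)^3 = Nv A B * (Nv A B)^2 := by rw [pow_succ']
  rw [h3, ← Matrix.mulVec_mulVec, Nv2_e1]
  funext i
  fin_cases i <;>
    simp [Nv, Matrix.mulVec, dotProduct, Fin.sum_univ_two] <;> ring

-- key cycle identity, uses B = 2A-3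
lemma cycle_id (A B : ℤ) (hA4 : 4 ≤ A) (hB3 : B = 2*A - 3) :
    ((B:ℝ)-1) • ((Nv A B)^3).mulVec e1 =
      ((A:ℝ)-3) • ((Nv A B)^2).mulVec e1 + ((A:ℝ)-1) • (Nv A B).mulVec e1
        + e1 - ((Nv A B)^3).mulVec e1 := by
  have hBr : (B:ℝ) = 2*(A:ℝ) - 3 := by rw [hB3]; push_cast; ring
  have hAr : (4:ℝ) ≤ (A:ℝ) := by exact_mod_cast hA4
  have hB0 : (B:ℝ) ≠ 0 := by rw [hBr]; intro h; nlinarith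
  have h1 : (2*(A:ℝ)-3) ≠ 0 := by intro h; nlinarith
  rw [Nv_e1, Nv2_e1, Nv3_e1]
  funext i
  fin_cases i <;>
    simp [e1, Matrix.smul_cons, Matrix.smul_empty, smul_eq_mul] <;>
    rw [hBr] <;> field_simp <;> ring

lemma not_eleven (u v : ℤ) (h : u^2 + v^2 = 11) : False := by
  have hu1 : -3 ≤ u := by nlinarith [sq_nonneg v]
  have hu2 : u ≤ 3 := by nlinarith [sq_nonneg v]
  have hv1 : -3 ≤ v := by nlinarith [sq_nonneg u]
  have hv2 : v ≤ 3 := by nlinarith [sq_nonneg u]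
  interval_cases u <;> interval_cases v <;> norm_num at h

-- growth step for A = 4 : if Φ ≥ 12 then next Φ is strictly bigger
lemma growth4 (u v e : ℤ) (he : e^2 ≤ 16) (hP : 12 ≤ u^2 + v^2)
    (hle : 5*(u^2+v^2) + e^2 + 2*e*(2*u+v) ≤ u^2 + v^2) : False := by
  -- from hle : -2e(2u+v) ≥ 4S + e² ≥ 0 where S = u²+v²
  have h1 : 0 ≤ 4*(u^2+v^2) + e^2 := by positivity
  have h2 : 4*(u^2+v^2) + e^2 ≤ -(2*e*(2*u+v)) := by linarith
  have h3 : (4*(u^2+v^2) + e^2)^2 ≤ (2*e*(2*u+v))^2 := by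
    calc (4*(u^2+v^2) + e^2)^2 ≤ (-(2*e*(2*u+v)))^2 := by
          apply sq_le_sq' _ h2; linarith
      _ = (2*e*(2*u+v))^2 := by ring
  have h4 : (2*u+v)^2 ≤ 5*(u^2+v^2) := by nlinarith [sq_nonneg (u - 2*v)]
  have h5 : (2*e*(2*u+v))^2 ≤ 4*e^2*(5*(u^2+v^2)) := by nlinarith [sq_nonneg e]
  -- so (4S+e²)² ≤ 20 e² S, with e² ≤ 16, S ≥ 12 : contradiction
  nlinarith [sq_nonneg (u^2+v^2 - 12), sq_nonneg (e^2 - 16), sq_nonneg (u^2+v^2), sq_nonneg e]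

lemma flip_pos (A : ℤ) (hA5 : 5 ≤ A) (Q y z e : ℤ) (hQ2 : 2 ≤ Q)
    (hrec : z + A * y + (2*A-3) * Q = -e) (he : |e| ≤ (2*A-3) - 1)
    (hy : |y| ≤ Q) (hz : |z| ≤ Q) : y = -Q := by
  have he' := abs_le.1 he
  have hy' := abs_le.1 hy
  have hz' := abs_le.1 hz
  by_contra hne
  have hy1 : -Q + 1 ≤ y := by omega
  have hApos : (0:ℤ) ≤ A := by omega
  have hmul : A * (-Q + 1) ≤ A * y := mul_le_mul_of_nonneg_left hy1 hApos
  have key : (A - 4) * (Q - 1) ≤ 0 := by nlinarith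
  have hpos : 1 * (Q - 1) ≤ (A - 4) * (Q - 1) :=
    mul_le_mul_of_nonneg_right (by omega) (by omega)
  omega

lemma no_bounded_walk (A B : ℤ) (hA4 : 4 ≤ A) (hB3 : B = 2*A - 3)
    (q e : ℕ → ℤ) (Qm : ℕ) (hq : ∀ n, (q n).natAbs ≤ Qm)
    (hrec : ∀ n, q (n+2) + A * q (n+1) + B * q n = - e n)
    (he : ∀ n, |e n| ≤ B - 1) (h0 : q 0 = 0) (h1 : 2 ≤ |q 1|) : False := by
  subst hB3
  rcases eq_or_lt_of_le hA4 with hA4' | hA5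
  · -- A = 4, B = 5
    have hA : A = 4 := hA4'.symm
    subst hA
    have hq' : ∀ n, |q n| ≤ (Qm : ℤ) := by
      intro n
      rw [Int.abs_eq_natAbs]
      exact_mod_cast hq n
    set Φ : ℕ → ℤ := fun n => (q (n+1) + 2 * q n)^2 + (q n)^2 with hΦ
    have hΦn : ∀ n, Φ n = (q (n+1) + 2 * q n)^2 + (q n)^2 := fun n => rfl
    have hΦ0 : ∀ n, 0 ≤ Φ n := fun n => by rw [hΦn]; positivity
    have hΦid : ∀ n, Φ (n+1) =
        5 * ((q (n+1) + 2*q n)^2 + (q n)^2) + (e n)^2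
          + 2 * (e n) * (2*(q (n+1) + 2*q n) + (q n)) := by
      intro n
      have hr := hrec n
      have hq2 : q (n+2) = - e n - 4 * q (n+1) - 5 * q n := by linarith
      have : Φ (n+1) = (q (n+2) + 2 * q (n+1))^2 + (q (n+1))^2 := rfl
      rw [this, hq2]; ring
    have hΦbdd : ∀ n, (Φ n).toNat ≤ (3*Qm)^2 + Qm^2 := by
      intro n
      have b1 := abs_le.1 (hq' n)
      have b2 := abs_le.1 (hq' (n+1))
      have hQ0 : (0:ℤ) ≤ (Qm:ℤ) := Int.natCast_nonneg _
      have key : Φ n ≤ ((3*Qm)^2 + Qm^2 : ℕ) := by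
        rw [hΦn]
        push_cast
        nlinarith [sq_nonneg (q (n+1) + 2*q n)]
      have := hΦ0 n
      omega
    set S : Set ℕ := Set.range (fun n => (Φ n).toNat) with hS
    have hSne : S.Nonempty := ⟨(Φ 0).toNat, ⟨0, rfl⟩⟩
    have hSbdd : BddAbove S := ⟨(3*Qm)^2 + Qm^2, by rintro _ ⟨n, rfl⟩; exact hΦbdd n⟩
    obtain ⟨n₀, hn₀⟩ := Nat.sSup_mem hSne hSbdd
    have hn₀' : (Φ n₀).toNat = sSup S := hn₀
    have hub : ∀ n, Φ n ≤ Φ n₀ := by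
      intro n
      have h := le_csSup hSbdd (Set.mem_range_self (f := fun n => (Φ n).toNat) n)
      have h' : (Φ n).toNat ≤ sSup S := h
      have := hΦ0 n; have := hΦ0 n₀
      omega
    have h12 : Φ n₀ ≤ 11 := by
      by_contra hcon
      push_neg at hcon
      have hgrow : Φ n₀ < Φ (n₀ + 1) := by
        rw [hΦid n₀]
        have h16 : (e n₀)^2 ≤ 16 := by
          have h' := abs_le.1 (he n₀)
          nlinarith [h'.1, h'.2]
        have hPhi : 12 ≤ (q (n₀+1) + 2*q n₀)^2 + (q n₀)^2 := by rw [← hΦn]; omega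
        by_contra hle
        push_neg at hle
        rw [hΦn n₀] at hle
        exact growth4 (q (n₀+1) + 2*q n₀) (q n₀) (e n₀) h16 hPhi (by linarith)
      have := hub (n₀+1); omega
    have h11 : Φ n₀ ≠ 11 := by
      intro hcon
      rw [hΦn] at hcon
      exact not_eleven _ _ hcon
    have hΦle : ∀ n, Φ n ≤ 10 := fun n => by have := hub n; omega
    have hq3 : ∀ n, -3 ≤ q n ∧ q n ≤ 3 := by
      intro n
      have h' := hΦle n
      rw [hΦn] at h'
      have hsq : (q n)^2 ≤ 10 := by nlinarith [sq_nonneg (q (n+1) + 2*q n)]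
      constructor <;> nlinarith
    have hr0 := hrec 0
    rw [h0] at hr0
    have hr0' : q 2 + 4 * q 1 = - e 0 := by
      have : (0:ℕ) + 2 = 2 := rfl
      have : (0:ℕ) + 1 = 1 := rfl
      simpa using hr0
    have he0 := abs_le.1 (he 0)
    have hq2 := hq3 2
    have hq1 : 2 ≤ q 1 ∨ q 1 ≤ -2 := by
      rcases abs_cases (q 1) with ⟨hh, _⟩ | ⟨hh, _⟩ <;> omega
    norm_num at he0
    omega
  · -- A ≥ 5
    have hA5' : 5 ≤ A := hA5
    set S : Set ℕ := Set.range (fun n => (q n).natAbs) with hS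
    have hSne : S.Nonempty := ⟨(q 0).natAbs, ⟨0, rfl⟩⟩
    have hSbdd : BddAbove S := ⟨Qm, by rintro _ ⟨n, rfl⟩; exact hq n⟩
    obtain ⟨n₀, hn₀⟩ := Nat.sSup_mem hSne hSbdd
    have hn₀' : (q n₀).natAbs = sSup S := hn₀
    set Q : ℤ := ((sSup S : ℕ) : ℤ) with hQdef
    have hub : ∀ n, |q n| ≤ Q := by
      intro n
      have h := le_csSup hSbdd (Set.mem_range_self (f := fun n => (q n).natAbs) n)
      have h' : (q n).natAbs ≤ sSup S := h
      rw [hQdef, Int.abs_eq_natAbs]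
      exact_mod_cast h'
    have hQ1 : |q n₀| = Q := by rw [hQdef, ← hn₀', Int.abs_eq_natAbs]
    have hQ2 : 2 ≤ Q := le_trans h1 (hub 1)
    have flip : ∀ n, |q n| = Q → q (n+1) = - q n ∧ |q (n+1)| = Q := by
      intro n hn
      rcases (abs_eq (by omega : (0:ℤ) ≤ Q)).1 hn with h | h
      · have hy := flip_pos A hA5' Q (q (n+1)) (q (n+2)) (e n) hQ2
          (by rw [← h]; linear_combination hrec n) (by simpa using he n) (hub (n+1)) (hub (n+2))
        refine ⟨by omega, by rw [hy, abs_neg, abs_of_nonneg (by omega)]⟩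
      · have hy := flip_pos A hA5' Q (- q (n+1)) (- q (n+2)) (- e n) hQ2
          (by have hq' : Q = - q n := by omega
              rw [hq']; linear_combination -(hrec n))
          (by rw [abs_neg]; simpa using he n)
          (by rw [abs_neg]; exact hub (n+1)) (by rw [abs_neg]; exact hub (n+2))
        have hy' : q (n+1) = Q := by omega
        refine ⟨by omega, by rw [hy', abs_of_nonneg (by omega)]⟩
    obtain ⟨hf1, hf2⟩ := flip n₀ hQ1
    obtain ⟨hg1, hg2⟩ := flip (n₀+1) hf2
    have h2 : q (n₀+1+1) = q n₀ := by rw [hg1, hf1, neg_neg]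
    have hkey : (A - 2) * q n₀ = - e n₀ := by
      have hr := hrec n₀
      have hidx : n₀ + 2 = n₀ + 1 + 1 := rfl
      rw [hidx, h2, hf1] at hr
      linear_combination hr
    have habs : (A-2) * Q ≤ 2*A - 4 := by
      have h' : |(A-2) * q n₀| ≤ 2*A - 4 := by
        rw [hkey, abs_neg]
        have := he n₀
        omega
      rwa [abs_mul, abs_of_nonneg (by omega : (0:ℤ) ≤ A - 2), hQ1] at h'
    have hQeq : Q = 2 := by
      by_contra hne
      have hQ3 : 3 ≤ Q := by omega
      have := mul_le_mul_of_nonneg_left hQ3 (by omega : (0:ℤ) ≤ A - 2)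
      nlinarith
    have hq1 : q 1 = 2 ∨ q 1 = -2 := by
      have hle : |q 1| ≤ 2 := hQeq ▸ hub 1
      rcases abs_cases (q 1) with ⟨hh, _⟩ | ⟨hh, _⟩ <;> omega
    have hr0 := hrec 0
    rw [h0] at hr0
    have hr0' : q 2 + A * q 1 = - e 0 := by simpa using hr0
    have hq2b := abs_le.1 (hQeq ▸ hub 2)
    have he0 := abs_le.1 (he 0)
    rcases hq1 with h | h <;> rw [h] at hr0' <;> linarith [he0.1, he0.2]

lemma Me1 (A B : ℤ) : (M' A B).mulVec e1 = e2 := by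
  funext i
  fin_cases i <;> simp [M', e1, e2, Matrix.mulVec, dotProduct, Fin.sum_univ_two]

lemma Me2 (A B : ℤ) : (M' A B).mulVec e2 = (-(B:ℝ)) • e1 + (-(A:ℝ)) • e2 := by
  funext i
  fin_cases i <;> simp [M', e1, e2, Matrix.mulVec, dotProduct, Fin.sum_univ_two]

lemma no_distant_touch (A B : ℤ) (hA4 : 4 ≤ A) (hB3 : B = 2*A - 3)
    (T : Set (Fin 2 → ℝ)) (hTcp : IsCompact T)
    (hT : (M' A B).mulVec '' T =
      ⋃ j ∈ Set.Icc (0 : ℤ) (B - 1), (fun x => x + (j : ℝ) • e1) '' T)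
    (k : ℤ) (hk : 2 ≤ |k|)
    (x₀ : Fin 2 → ℝ) (hx₀ : x₀ ∈ T) (hy₀ : x₀ + (k:ℝ) • e1 ∈ T) : False := by
  classical
  have step : ∀ x, x ∈ T → ∃ d : ℤ, (0 ≤ d ∧ d ≤ B-1) ∧
      (M' A B).mulVec x - (d:ℝ) • e1 ∈ T := by
    intro x hx
    have hmem : (M' A B).mulVec x ∈ (M' A B).mulVec '' T := ⟨x, hx, rfl⟩
    rw [hT] at hmem
    simp only [Set.mem_iUnion, Set.mem_image, Set.mem_Icc] at hmem
    obtain ⟨j, hj, t, ht, heq⟩ := hmem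
    refine ⟨j, hj, ?_⟩
    rw [← heq]
    simpa using ht
  set Dg : (Fin 2 → ℝ) → ℤ := fun x => if h : x ∈ T then (step x h).choose else 0 with hDgdef
  have hDg : ∀ x (h : x ∈ T), (0 ≤ Dg x ∧ Dg x ≤ B-1) ∧
      (M' A B).mulVec x - ((Dg x : ℝ)) • e1 ∈ T := by
    intro x h
    have : Dg x = (step x h).choose := by rw [hDgdef]; simp [h]
    rw [this]
    exact (step x h).choose_spec
  set Fx : (Fin 2 → ℝ) → (Fin 2 → ℝ) := fun x => (M' A B).mulVec x - ((Dg x : ℝ)) • e1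
    with hFxdef
  set xs : ℕ → (Fin 2 → ℝ) := fun n => Fx^[n] x₀ with hxs
  set ys : ℕ → (Fin 2 → ℝ) := fun n => Fx^[n] (x₀ + (k:ℝ) • e1) with hys
  have hxsT : ∀ n, xs n ∈ T := by
    intro n
    induction n with
    | zero => simpa [hxs] using hx₀
    | succ n ih =>
      have h' : xs (n+1) = Fx (xs n) := Function.iterate_succ_apply' Fx n x₀
      rw [h']
      exact (hDg _ ih).2
  have hysT : ∀ n, ys n ∈ T := by
    intro n
    induction n with
    | zero => simpa [hys] using hy₀
    | succ n ih =>
      have h' : ys (n+1) = Fx (ys n) := Function.iterate_succ_apply' Fx n _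
      rw [h']
      exact (hDg _ ih).2
  set ev : ℕ → ℤ := fun n => Dg (ys n) - Dg (xs n) with hev
  set pq : ℕ → ℤ × ℤ := fun n => Nat.rec (motive := fun _ => ℤ × ℤ) (k, 0)
    (fun m pr => (-B * pr.2 - ev m, pr.1 - A * pr.2)) n with hpq
  have hpq0 : pq 0 = (k, 0) := rfl
  have hpqs : ∀ n, pq (n+1) = (-B * (pq n).2 - ev n, (pq n).1 - A * (pq n).2) := fun n => rfl
  have hinv : ∀ n, ys n = xs n + ((pq n).1 : ℝ) • e1 + ((pq n).2 : ℝ) • e2 := by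
    intro n
    induction n with
    | zero =>
      have h1 : (pq 0).1 = k := rfl
      have h2 : (pq 0).2 = 0 := rfl
      simp [hxs, hys, h1, h2]
    | succ n ih =>
      have hy : ys (n+1) = Fx (ys n) := Function.iterate_succ_apply' Fx n _
      have hx : xs (n+1) = Fx (xs n) := Function.iterate_succ_apply' Fx n _
      have hcast1 : ((pq (n+1)).1 : ℝ) = -(B:ℝ) * ((pq n).2 : ℝ) - ((ev n : ℤ) : ℝ) := by
        have h' : (pq (n+1)).1 = -B * (pq n).2 - ev n := rfl
        rw [h']; push_cast; ring
      have hcast2 : ((pq (n+1)).2 : ℝ) = ((pq n).1 : ℝ) - (A:ℝ) * ((pq n).2 : ℝ) := by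
        have h' : (pq (n+1)).2 = (pq n).1 - A * (pq n).2 := rfl
        rw [h']; push_cast; ring
      have hFxv : ∀ v, Fx v = (M' A B).mulVec v - ((Dg v : ℝ)) • e1 := fun v => rfl
      rw [hy, hx, hFxv, hFxv, hcast1, hcast2]
      have hMy : (M' A B).mulVec (ys n) = (M' A B).mulVec (xs n)
          + ((pq n).1 : ℝ) • e2 + ((pq n).2 : ℝ) • ((-(B:ℝ)) • e1 + (-(A:ℝ)) • e2) := by
        rw [ih, Matrix.mulVec_add, Matrix.mulVec_add, Matrix.mulVec_smul, Matrix.mulVec_smul,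
          Me1, Me2]
      rw [hMy]
      have hevn : ((ev n : ℤ) : ℝ) = (Dg (ys n) : ℝ) - (Dg (xs n) : ℝ) := by
        have h' : ev n = Dg (ys n) - Dg (xs n) := rfl
        rw [h']; push_cast; ring
      rw [hevn]
      module
  -- boundedness
  obtain ⟨r, hr⟩ := hTcp.isBounded.subset_closedBall 0
  have hnorm : ∀ v ∈ T, ‖v‖ ≤ r := by
    intro v hv
    have := hr hv
    rwa [Metric.mem_closedBall, dist_zero_right] at this
  have hqR : ∀ n, |(((pq n).2 : ℤ) : ℝ)| ≤ 2 * r := by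
    intro n
    have he1_1 : e1 1 = 0 := rfl
    have he2_1 : e2 1 = 1 := rfl
    have hcomp : (((pq n).2 : ℤ) : ℝ) = ys n 1 - xs n 1 := by
      rw [hinv n]
      simp only [Pi.add_apply, Pi.smul_apply, he1_1, he2_1, smul_eq_mul, mul_zero, mul_one]
      ring
    rw [hcomp]
    have h1 : |ys n 1| ≤ r := le_trans (norm_le_pi_norm (ys n) 1) (hnorm _ (hysT n))
    have h2 : |xs n 1| ≤ r := le_trans (norm_le_pi_norm (xs n) 1) (hnorm _ (hxsT n))
    calc |ys n 1 - xs n 1| ≤ |ys n 1| + |xs n 1| := abs_sub _ _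
      _ ≤ 2 * r := by linarith
  set Qm : ℕ := ⌈2*r⌉₊ with hQm
  have hq : ∀ n, ((pq n).2).natAbs ≤ Qm := by
    intro n
    have h1 := hqR n
    have h2 : ((((pq n).2).natAbs : ℕ) : ℝ) ≤ ((Qm : ℕ) : ℝ) := by
      calc ((((pq n).2).natAbs : ℕ) : ℝ) = |(((pq n).2 : ℤ) : ℝ)| := by
            rw [Nat.cast_natAbs, Int.cast_abs]
        _ ≤ 2*r := h1
        _ ≤ Qm := Nat.le_ceil _
    exact_mod_cast h2
  have hrecq : ∀ n, (pq (n+2)).2 + A * (pq (n+1)).2 + B * (pq n).2 = - ev n := by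
    intro n
    have ha : (pq (n+2)).2 = (pq (n+1)).1 - A * (pq (n+1)).2 := rfl
    have hb : (pq (n+1)).1 = -B * (pq n).2 - ev n := rfl
    rw [ha, hb]
    ring
  have heb : ∀ n, |ev n| ≤ B - 1 := by
    intro n
    have h1 := (hDg _ (hxsT n)).1
    have h2 := (hDg _ (hysT n)).1
    have h' : ev n = Dg (ys n) - Dg (xs n) := rfl
    rw [h', abs_le]
    omega
  have h0 : (pq 0).2 = 0 := rfl
  have h1' : (pq 1).2 = k := by
    have ha : (pq 1).2 = (pq 0).1 - A * (pq 0).2 := rfl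
    have hb : (pq 0).1 = k := rfl
    have hc : (pq 0).2 = 0 := rfl
    rw [ha, hb, hc]; ring
  exact no_bounded_walk A B hA4 hB3 (fun n => (pq n).2) ev Qm hq hrecq heb h0
    (by show 2 ≤ |(pq 1).2|; rw [h1']; exact hk)

lemma exists_touch (A B : ℤ) (hA4 : 4 ≤ A) (hB3 : B = 2*A - 3)
    (T : Set (Fin 2 → ℝ)) (hTne : T.Nonempty) (hTcp : IsCompact T)
    (hT : (M' A B).mulVec '' T =
      ⋃ j ∈ Set.Icc (0 : ℤ) (B - 1), (fun x => x + (j : ℝ) • e1) '' T) :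
    ∃ x, x ∈ T ∧ x + e1 ∈ T := by
  have hB2 : 2 ≤ B := by omega
  have hB0 : (B:ℝ) ≠ 0 := by
    have : (0:ℝ) < B := by exact_mod_cast (by omega : (0:ℤ) < B)
    linarith
  obtain ⟨t₀, ht₀⟩ := hTne
  set f : ℤ → (Fin 2 → ℝ) → (Fin 2 → ℝ) := fun d v => (Nv A B).mulVec (v + (d:ℝ) • e1) with hf
  set FF : (Fin 2 → ℝ) → (Fin 2 → ℝ) := fun v => f (A-1) (f (A-3) (f 0 v)) with hFF
  set GG : (Fin 2 → ℝ) → (Fin 2 → ℝ) := fun v => f 0 (f 0 (f (B-1) v)) with hGG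
  -- membership
  have hmem : ∀ d ∈ Set.Icc (0:ℤ) (B-1), ∀ v ∈ T, f d v ∈ T := fun d hd v hv =>
    mem_piece A B hB0 T hT d hd v hv
  have hFFT : ∀ v ∈ T, FF v ∈ T := by
    intro v hv
    exact hmem _ (by constructor <;> omega) _
      (hmem _ (by constructor <;> omega) _ (hmem _ (by constructor <;> omega) _ hv))
  have hGGT : ∀ v ∈ T, GG v ∈ T := by
    intro v hv
    exact hmem _ (by constructor <;> omega) _
      (hmem _ (by constructor <;> omega) _ (hmem _ (by constructor <;> omega) _ hv))
  -- affine forms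
  have hf_aff : ∀ (d : ℤ) v, f d v = (Nv A B).mulVec v + (d:ℝ) • (Nv A B).mulVec e1 := by
    intro d v
    rw [hf]
    simp only [Matrix.mulVec_add, Matrix.mulVec_smul]
  have hFF_aff : ∀ v, FF v = ((Nv A B)^3).mulVec v
      + (((A:ℝ)-3) • ((Nv A B)^2).mulVec e1 + ((A:ℝ)-1) • (Nv A B).mulVec e1) := by
    intro v
    rw [hFF]
    simp only [hf_aff, Matrix.mulVec_add, Matrix.mulVec_smul, Matrix.mulVec_mulVec]
    push_cast
    rw [show Nv A B * (Nv A B * Nv A B) = (Nv A B)^3 by rw [pow_succ', pow_two],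
        show Nv A B * Nv A B = (Nv A B)^2 by rw [pow_two]]
    module
  have hGG_aff : ∀ v, GG v = ((Nv A B)^3).mulVec v + ((B:ℝ)-1) • ((Nv A B)^3).mulVec e1 := by
    intro v
    rw [hGG]
    simp only [hf_aff, Matrix.mulVec_add, Matrix.mulVec_smul, Matrix.mulVec_mulVec]
    push_cast
    rw [show Nv A B * (Nv A B * Nv A B) = (Nv A B)^3 by rw [pow_succ', pow_two]]
    module
  -- sequences
  set xs : ℕ → (Fin 2 → ℝ) := fun n => FF^[n] t₀ with hxs
  set ys : ℕ → (Fin 2 → ℝ) := fun n => GG^[n] t₀ with hys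
  have hxsT : ∀ n, xs n ∈ T := by
    intro n
    induction n with
    | zero => simpa [hxs] using ht₀
    | succ n ih =>
      have h' : xs (n+1) = FF (xs n) := Function.iterate_succ_apply' FF n t₀
      rw [h']; exact hFFT _ ih
  have hysT : ∀ n, ys n ∈ T := by
    intro n
    induction n with
    | zero => simpa [hys] using ht₀
    | succ n ih =>
      have h' : ys (n+1) = GG (ys n) := Function.iterate_succ_apply' GG n t₀
      rw [h']; exact hGGT _ ih
  -- difference identity
  have hdiff : ∀ n, ys n = xs n + (e1 - ((Nv A B)^(3*n)).mulVec e1) := by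
    intro n
    induction n with
    | zero => simp [hxs, hys]
    | succ n ih =>
      have hy : ys (n+1) = GG (ys n) := Function.iterate_succ_apply' GG n t₀
      have hx : xs (n+1) = FF (xs n) := Function.iterate_succ_apply' FF n t₀
      rw [hy, hx, hGG_aff, ih, hFF_aff]
      have hpow : ((Nv A B)^3).mulVec (((Nv A B)^(3*n)).mulVec e1)
          = ((Nv A B)^(3*(n+1))).mulVec e1 := by
        rw [Matrix.mulVec_mulVec, ← pow_add]
        congr 2
        ring
      rw [Matrix.mulVec_add, Matrix.mulVec_sub, hpow]
      linear_combination (norm := module) cycle_id A B hA4 hB3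
  -- compactness and limits
  obtain ⟨x, hxT, φ, hφ, hconv⟩ := hTcp.tendsto_subseq hxsT
  have hzero : Tendsto (fun k => ((Nv A B)^(3 * φ k)).mulVec e1) atTop (𝓝 0) := by
    apply (tendsto_Npow A B hA4 hB3 e1).comp
    apply tendsto_atTop_mono (fun k => ?_) (hφ.tendsto_atTop)
    omega
  have hy_lim : Tendsto (fun k => ys (φ k)) atTop (𝓝 (x + e1)) := by
    have : (fun k => ys (φ k)) = fun k => xs (φ k) + (e1 - ((Nv A B)^(3 * φ k)).mulVec e1) := by
      funext k; exact hdiff (φ k)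
    rw [this]
    have h2 : Tendsto (fun k => e1 - ((Nv A B)^(3 * φ k)).mulVec e1) atTop (𝓝 e1) := by
      have := (tendsto_const_nhds (x := e1) (f := atTop (α := ℕ))).sub hzero
      simpa using this
    simpa using hconv.add h2
  have hxe : x + e1 ∈ T := hTcp.isClosed.mem_of_tendsto hy_lim
    (Filter.Eventually.of_forall fun k => hysT (φ k))
  exact ⟨x, hxT, hxe⟩

/-- For `0 < A ≤ B`, `B ≥ 2`, `2A - B = 3`, `A ≠ B`, and distinct
digits `a₁, a₁' ∈ {0,…,B-1}`, the pieces `T_{a₁}` and `T_{a₁'}` intersect iff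
`a₁ - a₁' = ±1`. -/
theorem subPiece_one_inter
    (A B : ℤ) (hA : 0 < A) (hAB : A ≤ B) (hB : 2 ≤ B)
    (h3 : 2 * A - B = 3) (hABne : A ≠ B)
    (T : Set (Fin 2 → ℝ)) (hTne : T.Nonempty) (hTcp : IsCompact T)
    (hT : (M' A B).mulVec '' T =
      ⋃ j ∈ Set.Icc (0 : ℤ) (B - 1), (fun x => x + (j : ℝ) • e1) '' T)
    (a₁ a₁' : ℤ) (ha₁ : a₁ ∈ Set.Icc (0 : ℤ) (B - 1))
    (ha₁' : a₁' ∈ Set.Icc (0 : ℤ) (B - 1)) (hd : a₁ ≠ a₁') :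
    (subPiece A B T ![a₁] ∩ subPiece A B T ![a₁']).Nonempty ↔
      a₁ - a₁' = 1 ∨ a₁ - a₁' = -1 := by
  have hA4 : 4 ≤ A := by omega
  have hB3 : B = 2*A - 3 := by omega
  have hB0 : (B:ℝ) ≠ 0 := by
    have : (0:ℝ) < B := by exact_mod_cast (by omega : (0:ℤ) < B)
    linarith
  have hsp : ∀ a : ℤ, subPiece A B T ![a]
      = (fun x => (Nv A B).mulVec ((a:ℝ) • e1 + x)) '' T := by
    intro a
    have hfun : (fun x => (∑ i : Fin 1, ((M' A B)⁻¹ ^ ((i : ℕ) + 1)).mulVec ((![a] i : ℝ) • e1))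
        + ((M' A B)⁻¹ ^ (1:ℕ)).mulVec x) = (fun x => (Nv A B).mulVec ((a:ℝ) • e1 + x)) := by
      funext x
      rw [hinv A B hB0, Fin.sum_univ_one]
      simp only [Fin.val_zero, zero_add, pow_one, Matrix.cons_val_zero]
      rw [Matrix.mulVec_add]
    rw [subPiece, hfun]
  rw [hsp a₁, hsp a₁']
  constructor
  · rintro ⟨z, ⟨s, hs, hzs⟩, ⟨t, ht, hzt⟩⟩
    have heq : (a₁:ℝ) • e1 + s = (a₁':ℝ) • e1 + t :=
      N_mulVec_inj A B hB0 (hzs.trans hzt.symm)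
    have hts : t = s + (((a₁ - a₁' : ℤ)) : ℝ) • e1 := by
      push_cast
      linear_combination (norm := module) -heq
    by_contra hcon
    push_neg at hcon
    have hk0 : a₁ - a₁' ≠ 0 := sub_ne_zero.2 hd
    have hk2 : 2 ≤ |a₁ - a₁'| := by
      rcases abs_cases (a₁ - a₁') with ⟨hh, _⟩ | ⟨hh, _⟩ <;> omega
    exact no_distant_touch A B hA4 hB3 T hTcp hT (a₁ - a₁') hk2 s hs (hts ▸ ht)
  · intro h
    obtain ⟨x, hx, hxe⟩ := exists_touch A B hA4 hB3 T hTne hTcp hT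
    rcases h with h | h
    · refine ⟨(Nv A B).mulVec ((a₁:ℝ) • e1 + x), ⟨x, hx, rfl⟩, ⟨x + e1, hxe, ?_⟩⟩
      have hcast : (a₁:ℝ) = (a₁':ℝ) + 1 := by
        have : a₁ = a₁' + 1 := by omega
        exact_mod_cast congrArg (Int.cast : ℤ → ℝ) this
      show (Nv A B).mulVec ((a₁':ℝ) • e1 + (x + e1)) = (Nv A B).mulVec ((a₁:ℝ) • e1 + x)
      refine congrArg _ ?_
      rw [hcast]
      module
    · refine ⟨(Nv A B).mulVec ((a₁':ℝ) • e1 + x), ⟨x + e1, hxe, ?_⟩, ⟨x, hx, rfl⟩⟩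
      have hcast : (a₁':ℝ) = (a₁:ℝ) + 1 := by
        have : a₁' = a₁ + 1 := by omega
        exact_mod_cast congrArg (Int.cast : ℤ → ℝ) this
      show (Nv A B).mulVec ((a₁:ℝ) • e1 + (x + e1)) = (Nv A B).mulVec ((a₁':ℝ) • e1 + x)
      refine congrArg _ ?_
      rw [hcast]
      module
end
end

section
/- Let A, B ∈ ℤ with 0 < A ≤ B, B ≥ 2, 2A − B = 3 and A ≠ B, let M = [[0, −B], [1, −A]] acting on ℝ², and let T be the tile for M and digits {0, …, B−1}·e₁. For digits a₁, a₂, a₁', a₂' ∈ {0, …, B−1} with a₁ − a₁' = 1, the subdivision pieces T_{a₁a₂} and T_{a₁'a₂'} have nonempty intersection if and only if a₂ − a₂' ∈ {A, A−1, A−2}. -/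
noncomputable section

open Matrix


lemma mulVec_M' (A B : ℤ) (v : Fin 2 → ℝ) :
    (M' A B).mulVec v = ![-(B:ℝ) * v 1, v 0 - (A:ℝ) * v 1] := by
  funext i
  fin_cases i <;>
    simp [M', Matrix.mulVec, dotProduct, Fin.sum_univ_two] <;> ring

lemma det_M' (A B : ℤ) : (M' A B).det = (B : ℝ) := by
  simp [M', Matrix.det_fin_two]

lemma inv_M' (A B : ℤ) (hB : (B:ℝ) ≠ 0) :
    (M' A B)⁻¹ = !![-(A:ℝ)/B, 1; -1/B, 0] := by
  apply Matrix.inv_eq_right_inv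
  ext i j
  fin_cases i <;> fin_cases j <;>
    simp [M', Matrix.mul_apply, Fin.sum_univ_two] <;> field_simp <;> ring

lemma cayley (A B : ℤ) :
    (M' A B) ^ 2 + (A:ℝ) • (M' A B) + (B:ℝ) • (1 : Matrix (Fin 2) (Fin 2) ℝ) = 0 := by
  ext i j
  fin_cases i <;> fin_cases j <;>
    simp [M', pow_two, Matrix.mul_apply, Fin.sum_univ_two, Matrix.one_apply] <;> ring

lemma mul_inv_M' (A B : ℤ) (hB : (B:ℝ) ≠ 0) : (M' A B) * (M' A B)⁻¹ = 1 :=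
  Matrix.mul_nonsing_inv _ (by rw [det_M']; exact hB.isUnit)

lemma inv_mul_M' (A B : ℤ) (hB : (B:ℝ) ≠ 0) : (M' A B)⁻¹ * (M' A B) = 1 :=
  Matrix.nonsing_inv_mul _ (by rw [det_M']; exact hB.isUnit)

lemma commute_inv_M' (A B : ℤ) (hB : (B:ℝ) ≠ 0) : Commute (M' A B) (M' A B)⁻¹ := by
  unfold Commute SemiconjBy
  rw [mul_inv_M' A B hB, inv_mul_M' A B hB]

lemma pow_mul_invpow (A B : ℤ) (hB : (B:ℝ) ≠ 0) (p : ℕ) :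
    (M' A B) ^ p * ((M' A B)⁻¹) ^ p = 1 := by
  rw [← (commute_inv_M' A B hB).mul_pow, mul_inv_M' A B hB, one_pow]

lemma invpow_mul_pow (A B : ℤ) (hB : (B:ℝ) ≠ 0) (p : ℕ) :
    ((M' A B)⁻¹) ^ p * (M' A B) ^ p = 1 := by
  rw [← ((commute_inv_M' A B hB).symm).mul_pow, inv_mul_M' A B hB, one_pow]

lemma cancel_vec (A B : ℤ) (hB : (B:ℝ) ≠ 0) (p : ℕ) (v : Fin 2 → ℝ) :
    ((M' A B) ^ p).mulVec ((((M' A B)⁻¹) ^ p).mulVec v) = v := by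
  rw [Matrix.mulVec_mulVec, pow_mul_invpow A B hB, Matrix.one_mulVec]

lemma cancel_vec' (A B : ℤ) (hB : (B:ℝ) ≠ 0) (p : ℕ) (v : Fin 2 → ℝ) :
    (((M' A B)⁻¹) ^ p).mulVec (((M' A B) ^ p).mulVec v) = v := by
  rw [Matrix.mulVec_mulVec, invpow_mul_pow A B hB, Matrix.one_mulVec]



lemma int_seq_lemma (A : ℤ) (hA : 4 ≤ A) (y : ℕ → ℤ) (C : ℤ)
    (hb : ∀ n, |y n| ≤ C)
    (hc : ∀ n, |y (n+2) + A * y (n+1) + (2*A-3) * y n| ≤ 2*A - 4) :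
    (∀ n, |y (n+1) + 2 * y n| ≤ 2) ∧ (∀ n, |y n| ≤ 2) := by
  set u : ℕ → ℤ := fun n => y (n+1) + 2 * y n with hu
  have hbu : ∀ n, |u n| ≤ 3 * C := by
    intro n
    have h1 := hb (n+1); have h2 := hb n
    have : |u n| ≤ |y (n+1)| + |2 * y n| := abs_add_le _ _
    rw [abs_mul] at this
    simp only [abs_of_nonneg (by norm_num : (0:ℤ) ≤ 2)] at this
    omega
  obtain ⟨U, ⟨nU, hnU⟩, hUmax⟩ := Int.exists_greatest_of_bdd
    (P := fun z => ∃ n, |u n| = z)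
    ⟨3*C, by rintro z ⟨n, rfl⟩; exact hbu n⟩ ⟨|u 0|, 0, rfl⟩
  obtain ⟨Y, ⟨nY, hnY⟩, hYmax⟩ := Int.exists_greatest_of_bdd
    (P := fun z => ∃ n, |y n| = z)
    ⟨C, by rintro z ⟨n, rfl⟩; exact hb n⟩ ⟨|y 0|, 0, rfl⟩
  have hUn : ∀ n, |u n| ≤ U := fun n => hUmax _ ⟨n, rfl⟩
  have hYn : ∀ n, |y n| ≤ Y := fun n => hYmax _ ⟨n, rfl⟩
  have hYU : Y ≤ U := by
    have heq : 2 * y nY = u nY - y (nY + 1) := by simp only [hu]; ring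
    have h1 : |2 * y nY| ≤ |u nY| + |y (nY + 1)| := by rw [heq]; exact abs_sub _ _
    have h2 := hUn nY
    have h3 := hYn (nY + 1)
    rw [abs_mul] at h1
    simp only [abs_of_nonneg (by norm_num : (0:ℤ) ≤ 2)] at h1
    omega
  have key : (4*A - 6) * |u nU| ≤ 4 * (2*A-4) + 3 * U + Y := by
    have hid : (4*A-6) * u nU = 4 * (y (nU+2) + A * y (nU+1) + (2*A-3) * y nU)
        - 3 * u (nU+1) - y (nU+2) := by simp only [hu]; ring
    have h1 : |(4*A-6) * u nU| ≤ 4 * (2*A-4) + 3 * U + Y := by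
      rw [hid]
      have e1 := abs_sub (4 * (y (nU+2) + A * y (nU+1) + (2*A-3) * y nU) - 3 * u (nU+1)) (y (nU+2))
      have e2 := abs_sub (4 * (y (nU+2) + A * y (nU+1) + (2*A-3) * y nU)) (3 * u (nU+1))
      have h2 := hc nU; have h3 := hUn (nU+1); have h4 := hYn (nU+2)
      rw [abs_mul, abs_mul (3:ℤ)] at e2
      norm_num at e2
      omega
    rwa [abs_mul, abs_of_nonneg (by omega : (0:ℤ) ≤ 4*A-6)] at h1
  have hU2 : U ≤ 2 := by
    rw [hnU] at key
    by_contra h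
    push_neg at h
    nlinarith
  exact ⟨fun n => le_trans (hUn n) hU2, fun n => le_trans (hYn n) (le_trans hYU hU2)⟩

lemma real_seq_lemma (A : ℤ) (hA : 4 ≤ A)
    (v : ℕ → (Fin 2 → ℝ)) (C : ℝ)
    (hb : ∀ n, ‖v n‖ ≤ C)
    (hrec : ∀ n, v (n+2) + (A:ℝ) • v (n+1) + ((2*A-3 : ℤ):ℝ) • v n = 0) :
    v 0 = 0 := by
  have hAr : (4:ℝ) ≤ (A:ℝ) := by exact_mod_cast hA
  set u : ℕ → (Fin 2 → ℝ) := fun n => v (n+1) + (2:ℝ) • v n with hu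
  have hC : 0 ≤ C := le_trans (norm_nonneg _) (hb 0)
  have hbu : ∀ n, ‖u n‖ ≤ 3 * C := by
    intro n
    calc ‖u n‖ ≤ ‖v (n+1)‖ + ‖(2:ℝ) • v n‖ := norm_add_le _ _
      _ ≤ C + 2 * C := by
          rw [norm_smul]
          have := hb (n+1); have := hb n
          simp only [Real.norm_ofNat]
          nlinarith
      _ = 3 * C := by ring
  have hbddU : BddAbove (Set.range fun n => ‖u n‖) := ⟨3*C, by rintro z ⟨n, rfl⟩; exact hbu n⟩
  have hbddY : BddAbove (Set.range fun n => ‖v n‖) := ⟨C, by rintro z ⟨n, rfl⟩; exact hb n⟩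
  set U := ⨆ n, ‖u n‖ with hU
  set Y := ⨆ n, ‖v n‖ with hY
  have hUn : ∀ n, ‖u n‖ ≤ U := fun n => le_ciSup hbddU n
  have hYn : ∀ n, ‖v n‖ ≤ Y := fun n => le_ciSup hbddY n
  have hU0 : 0 ≤ U := le_trans (norm_nonneg _) (hUn 0)
  have hYU : Y ≤ U := by
    have h1 : ∀ n, ‖v n‖ ≤ (U + Y) / 2 := by
      intro n
      have h2 : (2:ℝ) • v n = u n - v (n+1) := by simp only [hu]; abel
      have h3 : ‖(2:ℝ) • v n‖ ≤ ‖u n‖ + ‖v (n+1)‖ := by rw [h2]; exact norm_sub_le _ _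
      rw [norm_smul] at h3
      simp only [Real.norm_ofNat] at h3
      have := hUn n; have := hYn (n+1)
      linarith
    have h4 : Y ≤ (U + Y) / 2 := ciSup_le h1
    linarith
  have hkey : ∀ n, (4*(A:ℝ)-6) * ‖u n‖ ≤ 3 * U + Y := by
    intro n
    have h5 := hrec n
    have hid : (4*(A:ℝ)-6) • u n = -((3:ℝ) • u (n+1)) - v (n+2) := by
      simp only [hu]
      have hc : ((2*A-3 : ℤ):ℝ) = 2*(A:ℝ) - 3 := by push_cast; ring
      rw [hc] at h5
      linear_combination (norm := module) (4 : ℝ) • h5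
    have h7 : ‖(4*(A:ℝ)-6) • u n‖ ≤ 3 * U + Y := by
      rw [hid]
      calc ‖-((3:ℝ) • u (n+1)) - v (n+2)‖
          ≤ ‖-((3:ℝ) • u (n+1))‖ + ‖v (n+2)‖ := norm_sub_le _ _
        _ ≤ 3 * U + Y := by
            rw [norm_neg, norm_smul]
            simp only [Real.norm_ofNat]
            have := hUn (n+1); have := hYn (n+2)
            nlinarith
    rwa [norm_smul, Real.norm_eq_abs, abs_of_nonneg (by linarith : (0:ℝ) ≤ 4*(A:ℝ)-6)] at h7
  have hU2 : U ≤ 0 := by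
    have h8 : ∀ n, ‖u n‖ ≤ (3 * U + Y) / (4*(A:ℝ)-6) := by
      intro n
      rw [le_div_iff₀ (by linarith : (0:ℝ) < 4*(A:ℝ)-6)]
      have := hkey n; linarith
    have h9 : U ≤ (3 * U + Y) / (4*(A:ℝ)-6) := ciSup_le h8
    rw [le_div_iff₀ (by linarith : (0:ℝ) < 4*(A:ℝ)-6)] at h9
    nlinarith
  have hUeq : U = 0 := le_antisymm hU2 hU0
  have huz : ∀ n, u n = 0 := by
    intro n
    have := hUn n
    rw [hUeq] at this
    exact norm_le_zero_iff.mp this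
  have hdbl : ∀ n, ‖v n‖ = 2^n * ‖v 0‖ := by
    intro n
    induction n with
    | zero => simp
    | succ k ih =>
      have h10 : v (k+1) = -((2:ℝ) • v k) := by
        have h11 := huz k
        simp only [hu] at h11
        rw [eq_neg_iff_add_eq_zero]
        exact h11
      rw [h10, norm_neg, norm_smul]
      simp only [Real.norm_ofNat]
      rw [ih]; ring
  by_contra hv0
  have hpos : 0 < ‖v 0‖ := norm_pos_iff.mpr hv0
  obtain ⟨n, hn⟩ := pow_unbounded_of_one_lt (C / ‖v 0‖) (by norm_num : (1:ℝ) < 2)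
  have h12 := hb n
  rw [hdbl n] at h12
  have h13 : (2:ℝ)^n ≤ C / ‖v 0‖ := by
    rw [le_div_iff₀ hpos]; linarith
  linarith

lemma forward_lemma (A B : ℤ) (hA4 : 4 ≤ A) (h3 : B = 2*A - 3)
    (T : Set (Fin 2 → ℝ)) (hTcp : IsCompact T)
    (hT : (M' A B).mulVec '' T =
      ⋃ j ∈ Set.Icc (0 : ℤ) (B - 1), (fun x => x + (j : ℝ) • e1) '' T)
    (x x' : Fin 2 → ℝ) (hx : x ∈ T) (hx' : x' ∈ T) (d : ℤ)
    (hdiff : x' - x = ![(d:ℝ), 1]) :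
    d = A ∨ d = A - 1 ∨ d = A - 2 := by
  -- digit extraction
  have hdig : ∀ z, z ∈ T → ∃ j ∈ Set.Icc (0:ℤ) (B-1), ∃ t ∈ T,
      (M' A B).mulVec z = t + (j:ℝ) • e1 := by
    intro z hz
    have h1 : (M' A B).mulVec z ∈ (M' A B).mulVec '' T := ⟨z, hz, rfl⟩
    rw [hT] at h1
    simp only [Set.mem_iUnion, Set.mem_image] at h1
    obtain ⟨j, hj, t, ht, heq⟩ := h1
    exact ⟨j, hj, t, ht, heq.symm⟩
  choose jf hjf tf htf heqf using hdig
  -- orbits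
  let S : ℕ → {z : Fin 2 → ℝ // z ∈ T} := fun n =>
    Nat.rec ⟨x, hx⟩ (fun _ p => ⟨tf p.1 p.2, htf p.1 p.2⟩) n
  let S' : ℕ → {z : Fin 2 → ℝ // z ∈ T} := fun n =>
    Nat.rec ⟨x', hx'⟩ (fun _ p => ⟨tf p.1 p.2, htf p.1 p.2⟩) n
  have hSstep : ∀ n, (M' A B).mulVec (S n).1
      = (S (n+1)).1 + ((jf (S n).1 (S n).2 : ℤ):ℝ) • e1 := fun n => heqf _ _
  have hS'step : ∀ n, (M' A B).mulVec (S' n).1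
      = (S' (n+1)).1 + ((jf (S' n).1 (S' n).2 : ℤ):ℝ) • e1 := fun n => heqf _ _
  set j : ℕ → ℤ := fun n => jf (S n).1 (S n).2 with hjdef
  set j' : ℕ → ℤ := fun n => jf (S' n).1 (S' n).2 with hj'def
  set c : ℕ → ℤ := fun n => j' n - j n with hcdef
  set P : ℕ → ℤ × ℤ := fun n =>
    Nat.rec (d, 1) (fun k pq => (-B * pq.2 - c k, pq.1 - A * pq.2)) n with hPdef
  -- difference tracking
  have hD : ∀ n, (S' n).1 - (S n).1 = ![(((P n).1 : ℤ):ℝ), (((P n).2 : ℤ):ℝ)] := by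
    intro n
    induction n with
    | zero =>
      rw [show (S' 0).1 = x' from rfl, show (S 0).1 = x from rfl, hdiff,
        show P 0 = (d, 1) from rfl]
      norm_num
    | succ k ih =>
      have e1q := hSstep k
      have e2q := hS'step k
      have hstep1 : (S (k+1)).1 = (M' A B).mulVec (S k).1 - ((j k : ℤ):ℝ) • e1 := by
        rw [e1q]; abel
      have hstep2 : (S' (k+1)).1 = (M' A B).mulVec (S' k).1 - ((j' k : ℤ):ℝ) • e1 := by
        rw [e2q]; abel
      have hPk1 : (P (k+1)).1 = -B * (P k).2 - c k := rfl
      have hPk2 : (P (k+1)).2 = (P k).1 - A * (P k).2 := rfl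
      have hkey : (S' (k+1)).1 - (S (k+1)).1
          = (M' A B).mulVec (![(((P k).1 : ℤ):ℝ), (((P k).2 : ℤ):ℝ)])
            + ((j k - j' k : ℤ):ℝ) • e1 := by
        rw [hstep1, hstep2, ← ih, Matrix.mulVec_sub]
        push_cast
        module
      rw [hkey, mulVec_M']
      have hck : ((c k : ℤ):ℝ) = (j' k : ℝ) - (j k : ℝ) := by
        rw [show c k = j' k - j k from rfl]; push_cast; ring
      have hcast1 : (((P (k+1)).1 : ℤ):ℝ)
          = -(B:ℝ) * (((P k).2 : ℤ):ℝ) - ((c k : ℤ):ℝ) := by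
        rw [hPk1]; push_cast; ring
      have hcast2 : (((P (k+1)).2 : ℤ):ℝ)
          = (((P k).1 : ℤ):ℝ) - (A:ℝ) * (((P k).2 : ℤ):ℝ) := by
        rw [hPk2]; push_cast; ring
      funext i
      fin_cases i
      · simp only [Pi.add_apply, Pi.smul_apply, smul_eq_mul, e1,
          Matrix.cons_val_zero, Matrix.cons_val', Matrix.cons_val_fin_one,
          Matrix.empty_val', Fin.isValue]
        rw [show ((⟨0, by norm_num⟩ : Fin 2)) = (0 : Fin 2) from rfl]
        simp only [Matrix.cons_val_zero]
        simp only [Matrix.cons_val_one, Matrix.head_cons]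
        rw [hcast1, hck]
        push_cast
        ring
      · simp only [Pi.add_apply, Pi.smul_apply, smul_eq_mul, e1, Fin.isValue]
        rw [show ((⟨1, by norm_num⟩ : Fin 2)) = (1 : Fin 2) from rfl]
        simp only [Matrix.cons_val_one, Matrix.head_cons]
        simp only [Matrix.cons_val_zero]
        rw [hcast2]
        push_cast
        ring
  -- bound
  obtain ⟨C, hC⟩ := isBounded_iff_forall_norm_le.mp hTcp.isBounded
  have hbreal : ∀ n, |(((P n).2 : ℤ):ℝ)| ≤ 2 * C := by
    intro n
    have h1 : ((S' n).1 - (S n).1) 1 = (((P n).2 : ℤ):ℝ) := by rw [hD n]; norm_num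
    rw [← h1]
    have h2 : |(S' n).1 1 - (S n).1 1| ≤ |(S' n).1 1| + |(S n).1 1| := abs_sub _ _
    have h3 : |(S' n).1 1| ≤ ‖(S' n).1‖ := by
      rw [← Real.norm_eq_abs]; exact norm_le_pi_norm ((S' n).1) 1
    have h4 : |(S n).1 1| ≤ ‖(S n).1‖ := by
      rw [← Real.norm_eq_abs]; exact norm_le_pi_norm ((S n).1) 1
    have h5 := hC _ (S' n).2
    have h6 := hC _ (S n).2
    simp only [Pi.sub_apply]
    calc |(S' n).1 1 - (S n).1 1| ≤ |(S' n).1 1| + |(S n).1 1| := h2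
      _ ≤ 2 * C := by linarith
  have hbint : ∀ n, |(P n).2| ≤ ⌈2*C⌉ := by
    intro n
    have h0 := hbreal n
    have h7 : ((|(P n).2| : ℤ) : ℝ) ≤ (⌈2*C⌉ : ℝ) := by
      rw [Int.cast_abs]; exact h0.trans (Int.le_ceil _)
    exact_mod_cast h7
  -- constraints
  have hcon : ∀ n, |(P (n+2)).2 + A * (P (n+1)).2 + (2*A-3) * (P n).2| ≤ 2*A - 4 := by
    intro n
    have hPk1 : (P (n+1)).1 = -B * (P n).2 - c n := rfl
    have hPk2 : (P (n+2)).2 = (P (n+1)).1 - A * (P (n+1)).2 := rfl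
    have hj1 := hjf (S n).1 (S n).2
    have hj2 := hjf (S' n).1 (S' n).2
    simp only [Set.mem_Icc] at hj1 hj2
    have hcb : |c n| ≤ B - 1 := by
      simp only [hcdef, hj'def, hjdef]
      rw [abs_le]
      omega
    rw [hPk2, hPk1]
    have : -B * (P n).2 - c n - A * (P (n+1)).2 + A * (P (n+1)).2 + (2*A-3) * (P n).2
        = -c n + (2*A - 3 - B) * (P n).2 := by ring
    rw [this, h3]
    simp only [sub_self, zero_mul, add_zero, abs_neg]
    omega
  -- apply the key lemma
  obtain ⟨hu2, hy2⟩ := int_seq_lemma A hA4 (fun n => (P n).2) ⌈2*C⌉ hbint hcon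
  have h8 := hu2 0
  have h9 := hy2 1
  have hQ0 : (P 0).2 = 1 := rfl
  have hQ1 : (P 1).2 = d - A := by
    show (P 0).1 - A * (P 0).2 = d - A
    show d - A * 1 = d - A
    ring
  rw [show (0:ℕ)+1 = 1 from rfl] at h8
  rw [hQ1, hQ0] at h8
  rw [hQ1] at h9
  rw [abs_le] at h8 h9
  omega

/-- One two-sided subdivision step. -/
def stepc (A B : ℤ) (c : ℤ) (z : (Fin 2 → ℝ) × (Fin 2 → ℝ)) :
    (Fin 2 → ℝ) × (Fin 2 → ℝ) :=
  ((M' A B)⁻¹.mulVec (z.1 + ((max (-c) 0 : ℤ) : ℝ) • e1),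
   (M' A B)⁻¹.mulVec (z.2 + ((max c 0 : ℤ) : ℝ) • e1))

/-- Composite of steps `c 0, c 1, …, c (j-1)` with `c (j-1)` applied first. -/
def Gc (A B : ℤ) (c : ℕ → ℤ) : ℕ → ((Fin 2 → ℝ) × (Fin 2 → ℝ)) → ((Fin 2 → ℝ) × (Fin 2 → ℝ))
  | 0 => id
  | (j+1) => (Gc A B c j) ∘ (stepc A B (c j))

def dev (w : Fin 2 → ℝ) (z : (Fin 2 → ℝ) × (Fin 2 → ℝ)) : Fin 2 → ℝ := z.2 - z.1 - w

lemma continuous_mulVec (N : Matrix (Fin 2) (Fin 2) ℝ) :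
    Continuous fun v : Fin 2 → ℝ => N.mulVec v := by
  unfold Matrix.mulVec dotProduct
  exact continuous_pi fun i => continuous_finset_sum _ fun j _ =>
    continuous_const.mul (continuous_apply j)

lemma continuous_stepc (A B c : ℤ) : Continuous (stepc A B c) := by
  unfold stepc
  exact Continuous.prodMk
    ((continuous_mulVec _).comp (continuous_fst.add continuous_const))
    ((continuous_mulVec _).comp (continuous_snd.add continuous_const))

lemma continuous_Gc (A B : ℤ) (c : ℕ → ℤ) (j : ℕ) : Continuous (Gc A B c j) := by
  induction j with
  | zero => exact continuous_id
  | succ k ih => exact ih.comp (continuous_stepc A B (c k))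

/-- The backward (construction) lemma. -/
lemma backward_lemma (A B : ℤ) (hA4 : 4 ≤ A) (h3 : B = 2*A - 3)
    (T : Set (Fin 2 → ℝ)) (hTne : T.Nonempty) (hTcp : IsCompact T)
    (hT : (M' A B).mulVec '' T =
      ⋃ j ∈ Set.Icc (0 : ℤ) (B - 1), (fun x => x + (j : ℝ) • e1) '' T)
    (p : ℕ) (hp : 0 < p) (W : ℕ → Fin 2 → ℝ) (c : ℕ → ℤ)
    (hrel : ∀ k, W (k+1) = (M' A B).mulVec (W k) - ((c k : ℤ):ℝ) • e1)
    (hWp : W p = W 0) (hc : ∀ k, |c k| ≤ B - 1) :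
    ∃ x ∈ T, ∃ x' ∈ T, x' - x = W 0 := by
  have hB5 : (5:ℤ) ≤ B := by omega
  have hBne : (B:ℝ) ≠ 0 := by
    have : (0:ℝ) < (B:ℝ) := by exact_mod_cast (by omega : (0:ℤ) < B)
    linarith
  -- digit maps send T into T
  have hstep : ∀ z ∈ T, ∀ j : ℤ, 0 ≤ j → j ≤ B - 1 →
      (M' A B)⁻¹.mulVec (z + (j:ℝ) • e1) ∈ T := by
    intro z hz j hj0 hj1
    have h1 : z + (j:ℝ) • e1 ∈ (M' A B).mulVec '' T := by
      rw [hT]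
      simp only [Set.mem_iUnion, Set.mem_image]
      exact ⟨j, Set.mem_Icc.mpr ⟨hj0, hj1⟩, z, hz, rfl⟩
    obtain ⟨t, ht, heq⟩ := h1
    have : (M' A B)⁻¹.mulVec (z + (j:ℝ) • e1) = t := by
      rw [← heq, Matrix.mulVec_mulVec, inv_mul_M' A B hBne, Matrix.one_mulVec]
    rw [this]; exact ht
  -- stepc maps T×T into itself
  have hstepc_mem : ∀ k : ℕ, ∀ z ∈ T ×ˢ T, stepc A B (c k) z ∈ T ×ˢ T := by
    intro k z hz
    obtain ⟨hz1, hz2⟩ := hz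
    constructor
    · exact hstep z.1 hz1 _ (le_max_right _ _) (by have := hc k; rw [abs_le] at this; omega)
    · exact hstep z.2 hz2 _ (le_max_right _ _) (by have := hc k; rw [abs_le] at this; omega)
  -- dev transformation under stepc
  have hdev_step : ∀ k : ℕ, ∀ z : (Fin 2 → ℝ) × (Fin 2 → ℝ),
      dev (W k) (stepc A B (c k) z) = (M' A B)⁻¹.mulVec (dev (W (k+1)) z) := by
    intro k z
    unfold dev stepc
    simp only
    have hWk : W k = (M' A B)⁻¹.mulVec (W (k+1) + ((c k : ℤ):ℝ) • e1) := by
      have h21 : W (k+1) + ((c k : ℤ):ℝ) • e1 = (M' A B).mulVec (W k) := by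
        rw [hrel k]; abel
      rw [h21, Matrix.mulVec_mulVec, inv_mul_M' A B hBne, Matrix.one_mulVec]
    rw [hWk]
    rw [show (M' A B)⁻¹.mulVec (z.2 + ((max (c k) 0 : ℤ):ℝ) • e1)
          - (M' A B)⁻¹.mulVec (z.1 + ((max (-(c k)) 0 : ℤ):ℝ) • e1)
        = (M' A B)⁻¹.mulVec (z.2 + ((max (c k) 0 : ℤ):ℝ) • e1
          - (z.1 + ((max (-(c k)) 0 : ℤ):ℝ) • e1)) from (Matrix.mulVec_sub _ _ _).symm]
    rw [show (M' A B)⁻¹.mulVec (z.2 + ((max (c k) 0 : ℤ):ℝ) • e1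
          - (z.1 + ((max (-(c k)) 0 : ℤ):ℝ) • e1))
          - (M' A B)⁻¹.mulVec (W (k+1) + ((c k : ℤ):ℝ) • e1)
        = (M' A B)⁻¹.mulVec (z.2 + ((max (c k) 0 : ℤ):ℝ) • e1
          - (z.1 + ((max (-(c k)) 0 : ℤ):ℝ) • e1)
          - (W (k+1) + ((c k : ℤ):ℝ) • e1)) from (Matrix.mulVec_sub _ _ _).symm]
    have h0 : ((max (c k) 0 : ℤ):ℝ) - ((max (-(c k)) 0 : ℤ):ℝ) - ((c k : ℤ):ℝ) = 0 := by
      have h00 : (max (c k) 0 : ℤ) - (max (-(c k)) 0 : ℤ) - c k = 0 := by omega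
      exact_mod_cast h00
    refine congrArg _ ?_
    rw [show ((max (c k) 0 : ℤ):ℝ) = ((max (-(c k)) 0 : ℤ):ℝ) + ((c k : ℤ):ℝ) by linarith]
    module
  -- dev transformation under Gc
  have hdev_Gc : ∀ j : ℕ, ∀ z : (Fin 2 → ℝ) × (Fin 2 → ℝ),
      dev (W 0) (Gc A B c j z) = (((M' A B)⁻¹)^j).mulVec (dev (W j) z) := by
    intro j
    induction j with
    | zero => intro z; simp [Gc, Matrix.one_mulVec]
    | succ k ih =>
      intro z
      show dev (W 0) (Gc A B c k (stepc A B (c k) z)) = _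
      rw [ih (stepc A B (c k) z), hdev_step k z, Matrix.mulVec_mulVec, ← pow_succ]
  -- Gc maps T×T into itself
  have hGc_mem : ∀ j : ℕ, ∀ z ∈ T ×ˢ T, Gc A B c j z ∈ T ×ˢ T := by
    intro j
    induction j with
    | zero => intro z hz; exact hz
    | succ k ih =>
      intro z hz
      exact ih _ (hstepc_mem k z hz)
  -- the composite map over one period
  set G := Gc A B c p with hG
  set S : Set ((Fin 2 → ℝ) × (Fin 2 → ℝ)) := T ×ˢ T with hS
  have hGS : ∀ z ∈ S, G z ∈ S := hGc_mem p
  have hGn_mem : ∀ n : ℕ, ∀ z ∈ S, G^[n] z ∈ S := by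
    intro n
    induction n with
    | zero => intro z hz; exact hz
    | succ k ih => intro z hz; rw [Function.iterate_succ_apply]; exact ih _ (hGS z hz)
  have hdev_iter : ∀ n : ℕ, ∀ z : (Fin 2 → ℝ) × (Fin 2 → ℝ),
      dev (W 0) (G^[n] z) = (((M' A B)⁻¹)^(p*n)).mulVec (dev (W 0) z) := by
    intro n
    induction n with
    | zero => intro z; simp [Matrix.one_mulVec]
    | succ k ih =>
      intro z
      rw [Function.iterate_succ_apply', hG, hdev_Gc p (G^[k] z), hWp, ih z,
        Matrix.mulVec_mulVec, ← pow_add]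
      ring_nf
  -- nested compact sets
  have hScp : IsCompact S := hTcp.prod hTcp
  have hSne : S.Nonempty := hTne.prod hTne
  set K : ℕ → Set ((Fin 2 → ℝ) × (Fin 2 → ℝ)) := fun n => G^[n] '' S with hK
  have hKsub : ∀ n, K (n+1) ⊆ K n := by
    intro n
    rw [hK]
    simp only
    intro w hw
    obtain ⟨z, hz, rfl⟩ := hw
    rw [Function.iterate_succ_apply]
    exact ⟨G z, hGS z hz, rfl⟩
  have hKne : ∀ n, (K n).Nonempty := fun n => hSne.image _
  have hKcp : ∀ n, IsCompact (K n) := fun n =>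
    hScp.image ((continuous_Gc A B c p).iterate n)
  have hKcl : ∀ n, IsClosed (K n) := fun n => (hKcp n).isClosed
  obtain ⟨ζ, hζ⟩ := IsCompact.nonempty_iInter_of_sequence_nonempty_isCompact_isClosed
    K hKsub hKne (hKcp 0) hKcl
  simp only [Set.mem_iInter] at hζ
  -- the deviation vector
  set v : Fin 2 → ℝ := dev (W 0) ζ with hv
  obtain ⟨C, hC⟩ := isBounded_iff_forall_norm_le.mp hTcp.isBounded
  have hC0 : 0 ≤ C := le_trans (norm_nonneg _) (hC _ hTne.some_mem)
  set C0 : ℝ := 2*C + ‖W 0‖ with hC0def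
  have hpow_bound : ∀ n : ℕ, ‖((M' A B)^(p*n)).mulVec v‖ ≤ C0 := by
    intro n
    have h1 := hζ n
    rw [hK] at h1
    obtain ⟨z, hz, hzeq⟩ := h1
    have h2 : v = (((M' A B)⁻¹)^(p*n)).mulVec (dev (W 0) z) := by
      rw [hv, ← hzeq, hdev_iter n z]
    have h3 : ((M' A B)^(p*n)).mulVec v = dev (W 0) z := by
      rw [h2, Matrix.mulVec_mulVec, pow_mul_invpow A B hBne, Matrix.one_mulVec]
    rw [h3]
    have hz1 : ‖z.1‖ ≤ C := hC _ hz.1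
    have hz2 : ‖z.2‖ ≤ C := hC _ hz.2
    calc ‖dev (W 0) z‖ = ‖z.2 - z.1 - W 0‖ := rfl
      _ ≤ ‖z.2 - z.1‖ + ‖W 0‖ := norm_sub_le _ _
      _ ≤ ‖z.2‖ + ‖z.1‖ + ‖W 0‖ := by have := norm_sub_le z.2 z.1; linarith
      _ ≤ C0 := by rw [hC0def]; linarith
  -- operator bound for the inverse
  have hkappa : ∀ u : Fin 2 → ℝ, ‖(M' A B)⁻¹.mulVec u‖ ≤ ((A:ℝ)+2) * ‖u‖ := by
    intro u
    have hA0 : (0:ℝ) < (A:ℝ) := by exact_mod_cast (by omega : (0:ℤ) < A)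
    have hB1 : (1:ℝ) ≤ (B:ℝ) := by exact_mod_cast (by omega : (1:ℤ) ≤ B)
    rw [inv_M' A B hBne]
    have hu0 : |u 0| ≤ ‖u‖ := by rw [← Real.norm_eq_abs]; exact norm_le_pi_norm u 0
    have hu1 : |u 1| ≤ ‖u‖ := by rw [← Real.norm_eq_abs]; exact norm_le_pi_norm u 1
    have hnn : (0:ℝ) ≤ ((A:ℝ)+2) * ‖u‖ := by positivity
    rw [pi_norm_le_iff_of_nonneg hnn]
    intro i
    fin_cases i <;>
      simp only [Matrix.mulVec, dotProduct, Fin.sum_univ_two, Matrix.cons_val',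
        Matrix.cons_val_zero, Matrix.cons_val_one, Matrix.head_cons, Matrix.empty_val',
        Matrix.cons_val_fin_one, Matrix.head_fin_const, Real.norm_eq_abs]
    · -- |(-A/B) * u 0 + 1 * u 1| ≤ (A+2)‖u‖
      have hAB : |(-(A:ℝ)/B)| ≤ (A:ℝ) + 1 := by
        rw [abs_div, abs_neg, abs_of_pos hA0, abs_of_pos (by linarith : (0:ℝ) < (B:ℝ))]
        rw [div_le_iff₀ (by linarith : (0:ℝ) < (B:ℝ))]
        nlinarith
      calc |(-(A:ℝ)/B) * u 0 + 1 * u 1| ≤ |(-(A:ℝ)/B) * u 0| + |1 * u 1| := abs_add_le _ _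
        _ = |(-(A:ℝ)/B)| * |u 0| + |u 1| := by rw [abs_mul, one_mul]
        _ ≤ ((A:ℝ)+1) * ‖u‖ + ‖u‖ := by
            have h4 : |(-(A:ℝ)/B)| * |u 0| ≤ ((A:ℝ)+1) * ‖u‖ := by
              apply mul_le_mul hAB hu0 (abs_nonneg _) (by linarith)
            linarith
        _ = ((A:ℝ)+2) * ‖u‖ := by ring
    · -- |(-1/B) * u 0 + 0 * u 1| ≤ (A+2)‖u‖
      have h5 : |(-1/(B:ℝ))| ≤ 1 := by
        rw [abs_div, abs_neg, abs_one, abs_of_pos (by linarith : (0:ℝ) < (B:ℝ))]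
        rw [div_le_one (by linarith : (0:ℝ) < (B:ℝ))]
        linarith
      calc |(-1/(B:ℝ)) * u 0 + 0 * u 1| = |(-1/(B:ℝ))| * |u 0| := by
            rw [zero_mul, add_zero, abs_mul]
        _ ≤ 1 * ‖u‖ := mul_le_mul h5 hu0 (abs_nonneg _) zero_le_one
        _ ≤ ((A:ℝ)+2) * ‖u‖ := by nlinarith [norm_nonneg u]
  have hkap1 : (1:ℝ) ≤ (A:ℝ)+2 := by
    have : (0:ℝ) < (A:ℝ) := by exact_mod_cast (by omega : (0:ℤ) < A)
    linarith
  have hkappaj : ∀ j : ℕ, ∀ u : Fin 2 → ℝ,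
      ‖(((M' A B)⁻¹)^j).mulVec u‖ ≤ ((A:ℝ)+2)^j * ‖u‖ := by
    intro j
    induction j with
    | zero => intro u; simp [Matrix.one_mulVec]
    | succ k ih =>
      intro u
      have h6 : (((M' A B)⁻¹)^(k+1)).mulVec u
          = (M' A B)⁻¹.mulVec ((((M' A B)⁻¹)^k).mulVec u) := by
        rw [Matrix.mulVec_mulVec, ← pow_succ']
      rw [h6]
      calc ‖(M' A B)⁻¹.mulVec ((((M' A B)⁻¹)^k).mulVec u)‖
          ≤ ((A:ℝ)+2) * ‖(((M' A B)⁻¹)^k).mulVec u‖ := hkappa _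
        _ ≤ ((A:ℝ)+2) * (((A:ℝ)+2)^k * ‖u‖) := by
            apply mul_le_mul_of_nonneg_left (ih u) (by linarith)
        _ = ((A:ℝ)+2)^(k+1) * ‖u‖ := by ring
  -- all powers bounded
  have hall : ∀ m : ℕ, ‖((M' A B)^m).mulVec v‖ ≤ ((A:ℝ)+2)^p * C0 := by
    intro m
    set n : ℕ := m / p + 1 with hn
    have hdm := Nat.div_add_mod m p
    have hmod := Nat.mod_lt m hp
    have hpn : p * n = p * (m / p) + p := by rw [hn, Nat.mul_add, Nat.mul_one]
    have h7 : m < p * n := by omega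
    have h8 : p * n ≤ m + p := by omega
    set jj : ℕ := p * n - m with hjj
    have hjp : jj ≤ p := by omega
    have h9 : ((M' A B)^m).mulVec v = (((M' A B)⁻¹)^jj).mulVec (((M' A B)^(p*n)).mulVec v) := by
      rw [Matrix.mulVec_mulVec]
      congr 1
      have h10 : (M' A B)^(p*n) = (M' A B)^jj * (M' A B)^m := by
        rw [← pow_add]
        congr 1
        omega
      rw [h10, ← mul_assoc, invpow_mul_pow A B hBne, one_mul]
    rw [h9]
    calc ‖(((M' A B)⁻¹)^jj).mulVec (((M' A B)^(p*n)).mulVec v)‖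
        ≤ ((A:ℝ)+2)^jj * ‖((M' A B)^(p*n)).mulVec v‖ := hkappaj jj _
      _ ≤ ((A:ℝ)+2)^p * C0 := by
          have h11 := hpow_bound n
          have h12 : ((A:ℝ)+2)^jj ≤ ((A:ℝ)+2)^p := pow_le_pow_right₀ hkap1 hjp
          have h13 : (0:ℝ) ≤ ((A:ℝ)+2)^jj := by positivity
          have h14 : (0:ℝ) ≤ ‖((M' A B)^(p*n)).mulVec v‖ := norm_nonneg _
          nlinarith
  -- apply the real sequence lemma
  have hrec : ∀ m : ℕ, ((M' A B)^(m+2)).mulVec v + (A:ℝ) • ((M' A B)^(m+1)).mulVec v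
      + ((2*A-3 : ℤ):ℝ) • ((M' A B)^m).mulVec v = 0 := by
    intro m
    have h15 : ((2*A-3 : ℤ):ℝ) = (B:ℝ) := by rw [h3]
    rw [h15]
    have h16 : (M' A B)^(m+2) = (M' A B)^2 * (M' A B)^m := by rw [← pow_add, Nat.add_comm]
    have h17 : (M' A B)^(m+1) = (M' A B) * (M' A B)^m := by rw [← pow_succ']
    rw [h16, h17, ← Matrix.mulVec_mulVec, ← Matrix.mulVec_mulVec]
    have h18 : (A:ℝ) • (M' A B).mulVec (((M' A B)^m).mulVec v)
        = ((A:ℝ) • (M' A B)).mulVec (((M' A B)^m).mulVec v) := by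
      rw [Matrix.smul_mulVec]
    have h19 : (B:ℝ) • ((M' A B)^m).mulVec v
        = ((B:ℝ) • (1 : Matrix (Fin 2) (Fin 2) ℝ)).mulVec (((M' A B)^m).mulVec v) := by
      rw [Matrix.smul_mulVec, Matrix.one_mulVec]
    rw [h18, h19, ← Matrix.add_mulVec, ← Matrix.add_mulVec, cayley A B,
      Matrix.zero_mulVec]
  have hv0 : v = 0 := by
    have := real_seq_lemma A hA4 (fun m => ((M' A B)^m).mulVec v) (((A:ℝ)+2)^p * C0)
      hall hrec
    simpa [Matrix.one_mulVec] using this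
  -- extract the pair
  have hζS : ζ ∈ S := by
    have := hζ 0
    rw [hK] at this
    simpa using this
  refine ⟨ζ.1, hζS.1, ζ.2, hζS.2, ?_⟩
  have : ζ.2 - ζ.1 - W 0 = 0 := hv0
  have h20 := congrArg (· + W 0) this
  simpa [sub_add_cancel] using h20

lemma construct_pair (A B : ℤ) (hA4 : 4 ≤ A) (h3 : B = 2*A - 3)
    (T : Set (Fin 2 → ℝ)) (hTne : T.Nonempty) (hTcp : IsCompact T)
    (hT : (M' A B).mulVec '' T =
      ⋃ j ∈ Set.Icc (0 : ℤ) (B - 1), (fun x => x + (j : ℝ) • e1) '' T)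
    (d : ℤ) (hd : d = A ∨ d = A - 1 ∨ d = A - 2) :
    ∃ x ∈ T, ∃ x' ∈ T, x' - x = ![(d:ℝ), 1] := by
  have hBne : (B:ℝ) ≠ 0 := by
    have h00 : (0:ℤ) < B := by omega
    have h01 : (0:ℝ) < (B:ℝ) := by exact_mod_cast h00
    linarith
  rcases hd with h | h | h
  · -- d = A : cycle (A,1) → (-1,0) → (-A,-1) → (1,0) → (A,1)
    obtain ⟨x, hx, x', hx', hxx⟩ := backward_lemma A B hA4 h3 T hTne hTcp hT 4 (by norm_num)
      (fun k => if k % 4 = 0 then ![(A:ℝ), 1] else if k % 4 = 1 then ![-1, 0]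
        else if k % 4 = 2 then ![-(A:ℝ), -1] else ![1, 0])
      (fun k => if k % 4 = 0 then 1 - B else if k % 4 = 1 then A
        else if k % 4 = 2 then B - 1 else -A)
      (by
        intro k
        have h1 : (k+1) % 4 = (k % 4 + 1) % 4 := by omega
        rcases (by omega : k % 4 = 0 ∨ k % 4 = 1 ∨ k % 4 = 2 ∨ k % 4 = 3) with h0|h0|h0|h0 <;>
          · simp only [h1, h0]
            funext i
            fin_cases i <;> simp [mulVec_M', e1, M'] <;> (push_cast [h3]; try ring))
      (by norm_num)
      (by
        intro k
        rcases (by omega : k % 4 = 0 ∨ k % 4 = 1 ∨ k % 4 = 2 ∨ k % 4 = 3) with h0|h0|h0|h0 <;>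
          (simp only [h0]; norm_num [abs_le, abs_lt]; try omega))
    refine ⟨x, hx, x', hx', ?_⟩
    have hxx2 : x' - x = ![(A:ℝ), 1] := by rw [hxx]; norm_num
    rw [hxx2, h]
  · -- d = A - 1
    obtain ⟨x, hx, x', hx', hxx⟩ := backward_lemma A B hA4 h3 T hTne hTcp hT 4 (by norm_num)
      (fun k => if k % 2 = 0 then ![(A:ℝ)-1, 1] else ![1-(A:ℝ), -1])
      (fun k => if k % 2 = 0 then A - 1 - B else B + 1 - A)
      (by
        intro k
        have h1 : (k+1) % 2 = (k % 2 + 1) % 2 := by omega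
        rcases (by omega : k % 2 = 0 ∨ k % 2 = 1) with h0|h0 <;>
          · simp only [h1, h0]
            funext i
            fin_cases i <;> simp [mulVec_M', e1, M'] <;> (push_cast [h3]; try ring))
      (by norm_num)
      (by
        intro k
        rcases (by omega : k % 2 = 0 ∨ k % 2 = 1) with h0|h0 <;>
          (simp only [h0]; norm_num [abs_le, abs_lt]; try omega))
    refine ⟨x, hx, x', hx', ?_⟩
    have hxx2 : x' - x = ![(A:ℝ)-1, 1] := by rw [hxx]; norm_num
    rw [hxx2, h]
    funext i
    fin_cases i <;> simp <;> (push_cast; try ring)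
  · -- d = A - 2 : preperiodic
    obtain ⟨x, hx, x', hx', hxx⟩ := backward_lemma A B hA4 h3 T hTne hTcp hT 4 (by norm_num)
      (fun k => if k % 2 = 0 then ![2-2*(A:ℝ), -2] else ![2*(A:ℝ)-2, 2])
      (fun k => if k % 2 = 0 then B - 1 else 1 - B)
      (by
        intro k
        have h1 : (k+1) % 2 = (k % 2 + 1) % 2 := by omega
        rcases (by omega : k % 2 = 0 ∨ k % 2 = 1) with h0|h0 <;>
          · simp only [h1, h0]
            funext i
            fin_cases i <;> simp [mulVec_M', e1, M'] <;> (push_cast [h3]; try ring))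
      (by norm_num)
      (by
        intro k
        rcases (by omega : k % 2 = 0 ∨ k % 2 = 1) with h0|h0 <;>
          (simp only [h0]; norm_num [abs_le, abs_lt]; try omega))
    have hxx2 : x' - x = ![2-2*(A:ℝ), -2] := by rw [hxx]; norm_num
    -- one more preperiod step with digit difference c = 1
    have hstep : ∀ z ∈ T, ∀ j : ℤ, 0 ≤ j → j ≤ B - 1 →
        (M' A B)⁻¹.mulVec (z + (j:ℝ) • e1) ∈ T := by
      intro z hz j hj0 hj1
      have h1 : z + (j:ℝ) • e1 ∈ (M' A B).mulVec '' T := by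
        rw [hT]
        simp only [Set.mem_iUnion, Set.mem_image]
        exact ⟨j, Set.mem_Icc.mpr ⟨hj0, hj1⟩, z, hz, rfl⟩
      obtain ⟨t, ht, heq⟩ := h1
      have h2 : (M' A B)⁻¹.mulVec (z + (j:ℝ) • e1) = t := by
        rw [← heq, Matrix.mulVec_mulVec, inv_mul_M' A B hBne, Matrix.one_mulVec]
      rw [h2]; exact ht
    refine ⟨(M' A B)⁻¹.mulVec (x + ((0:ℤ):ℝ) • e1), hstep x hx 0 le_rfl (by omega),
      (M' A B)⁻¹.mulVec (x' + ((1:ℤ):ℝ) • e1), hstep x' hx' 1 (by norm_num) (by omega), ?_⟩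
    rw [show (M' A B)⁻¹.mulVec (x' + ((1:ℤ):ℝ) • e1)
          - (M' A B)⁻¹.mulVec (x + ((0:ℤ):ℝ) • e1)
        = (M' A B)⁻¹.mulVec (x' + ((1:ℤ):ℝ) • e1 - (x + ((0:ℤ):ℝ) • e1))
        from (Matrix.mulVec_sub _ _ _).symm]
    have h7 := congrFun hxx2
    have h70 := h7 0
    have h71 := h7 1
    simp only [Pi.sub_apply, Matrix.cons_val_zero, Matrix.cons_val_one,
      Matrix.head_cons] at h70 h71
    have h5 : x' + ((1:ℤ):ℝ) • e1 - (x + ((0:ℤ):ℝ) • e1)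
        = (M' A B).mulVec ![(d:ℝ), 1] := by
      rw [mulVec_M']
      funext i
      fin_cases i
      · simp only [Pi.add_apply, Pi.sub_apply, Pi.smul_apply, smul_eq_mul, e1,
          Matrix.cons_val_zero, Matrix.cons_val_one, Matrix.head_cons]
        norm_num
        push_cast [h3]
        linarith
      · simp only [Pi.add_apply, Pi.sub_apply, Pi.smul_apply, smul_eq_mul, e1,
          Matrix.cons_val_zero, Matrix.cons_val_one, Matrix.head_cons]
        norm_num
        rw [h]
        push_cast [h3]
        linarith
    rw [h5, Matrix.mulVec_mulVec, inv_mul_M' A B hBne, Matrix.one_mulVec]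

/-- For `0 < A ≤ B`, `B ≥ 2`, `2A - B = 3`, `A ≠ B`, and digits
with `a₁ - a₁' = 1`, the pieces `T_{a₁a₂}` and `T_{a₁'a₂'}` intersect iff
`a₂ - a₂' ∈ {A, A-1, A-2}`. -/
theorem subPiece_two_inter
    (A B : ℤ) (hA : 0 < A) (hAB : A ≤ B) (hB : 2 ≤ B)
    (h3 : 2 * A - B = 3) (hABne : A ≠ B)
    (T : Set (Fin 2 → ℝ)) (hTne : T.Nonempty) (hTcp : IsCompact T)
    (hT : (M' A B).mulVec '' T =
      ⋃ j ∈ Set.Icc (0 : ℤ) (B - 1), (fun x => x + (j : ℝ) • e1) '' T)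
    (a₁ a₂ a₁' a₂' : ℤ)
    (ha₁ : a₁ ∈ Set.Icc (0 : ℤ) (B - 1)) (ha₂ : a₂ ∈ Set.Icc (0 : ℤ) (B - 1))
    (ha₁' : a₁' ∈ Set.Icc (0 : ℤ) (B - 1)) (ha₂' : a₂' ∈ Set.Icc (0 : ℤ) (B - 1))
    (hd : a₁ - a₁' = 1) :
    (subPiece A B T ![a₁, a₂] ∩ subPiece A B T ![a₁', a₂']).Nonempty ↔
      a₂ - a₂' = A ∨ a₂ - a₂' = A - 1 ∨ a₂ - a₂' = A - 2 := by
  have hA4 : 4 ≤ A := by omega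
  have hB3 : B = 2 * A - 3 := by omega
  have hBne : (B:ℝ) ≠ 0 := by
    have h00 : (0:ℤ) < B := by omega
    have h01 : (0:ℝ) < (B:ℝ) := by exact_mod_cast h00
    linarith
  set D : ℤ := a₂ - a₂' with hD
  -- the sum in subPiece for a two-digit word
  have hsum : ∀ b₁ b₂ : ℤ,
      (∑ i : Fin 2, ((M' A B)⁻¹ ^ ((i : ℕ) + 1)).mulVec (((![b₁, b₂] i : ℤ) : ℝ) • e1))
      = ((M' A B)⁻¹).mulVec ((b₁:ℝ) • e1) + ((M' A B)⁻¹^2).mulVec ((b₂:ℝ) • e1) := by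
    intro b₁ b₂
    rw [Fin.sum_univ_two]
    norm_num
  -- key identity: s₁ - s₂ = (M⁻¹)^2 *ᵥ ![D, 1]
  have hiden :
      (((M' A B)⁻¹).mulVec ((a₁:ℝ) • e1) + ((M' A B)⁻¹^2).mulVec ((a₂:ℝ) • e1))
      - (((M' A B)⁻¹).mulVec ((a₁':ℝ) • e1) + ((M' A B)⁻¹^2).mulVec ((a₂':ℝ) • e1))
      = ((M' A B)⁻¹^2).mulVec ![(D:ℝ), 1] := by
    have h1 : ![(D:ℝ), 1] = (D:ℝ) • e1 + (M' A B).mulVec e1 := by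
      rw [mulVec_M']
      funext i
      fin_cases i <;> simp [e1]
    rw [h1, Matrix.mulVec_add, Matrix.mulVec_mulVec]
    have h2 : (M' A B)⁻¹^2 * (M' A B) = (M' A B)⁻¹ := by
      rw [pow_two, mul_assoc, inv_mul_M' A B hBne, mul_one]
    rw [h2]
    have h3' : ((a₁:ℝ)) • e1 - ((a₁':ℝ)) • e1 = (1:ℝ) • e1 := by
      have : (a₁:ℝ) - (a₁':ℝ) = 1 := by exact_mod_cast hd
      rw [← sub_smul, this]
    have h4 : ((a₂:ℝ)) • e1 - ((a₂':ℝ)) • e1 = (D:ℝ) • e1 := by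
      have hh : (a₂:ℝ) - (a₂':ℝ) = (D:ℝ) := by rw [hD]; push_cast; ring
      rw [← sub_smul, hh]
    calc ((M' A B)⁻¹).mulVec ((a₁:ℝ) • e1) + ((M' A B)⁻¹^2).mulVec ((a₂:ℝ) • e1)
        - (((M' A B)⁻¹).mulVec ((a₁':ℝ) • e1) + ((M' A B)⁻¹^2).mulVec ((a₂':ℝ) • e1))
        = ((M' A B)⁻¹).mulVec ((a₁:ℝ) • e1 - (a₁':ℝ) • e1)
          + ((M' A B)⁻¹^2).mulVec ((a₂:ℝ) • e1 - (a₂':ℝ) • e1) := by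
          rw [Matrix.mulVec_sub, Matrix.mulVec_sub]
          abel
      _ = ((M' A B)⁻¹^2).mulVec ((D:ℝ) • e1) + ((M' A B)⁻¹).mulVec e1 := by
          rw [h3', h4]
          simp only [one_smul]
          abel
  constructor
  · -- forward
    rintro ⟨q, hq1, hq2⟩
    obtain ⟨x, hx, hxe⟩ := hq1
    obtain ⟨x', hx', hxe'⟩ := hq2
    simp only at hxe hxe'
    -- equation: s₁ + P2 x = s₂ + P2 x'
    have heq : (((M' A B)⁻¹).mulVec ((a₁:ℝ) • e1) + ((M' A B)⁻¹^2).mulVec ((a₂:ℝ) • e1))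
        + ((M' A B)⁻¹^2).mulVec x
        = (((M' A B)⁻¹).mulVec ((a₁':ℝ) • e1) + ((M' A B)⁻¹^2).mulVec ((a₂':ℝ) • e1))
        + ((M' A B)⁻¹^2).mulVec x' := by
      rw [← hsum a₁ a₂, ← hsum a₁' a₂']
      rw [hxe, hxe']
    have hdiff : x' - x = ![(D:ℝ), 1] := by
      have h5 : ((M' A B)⁻¹^2).mulVec (x' - x) = ((M' A B)⁻¹^2).mulVec ![(D:ℝ), 1] := by
        rw [Matrix.mulVec_sub, ← hiden]
        have h6 := heq
        -- rearrange
        have h7 : ((M' A B)⁻¹^2).mulVec x' - ((M' A B)⁻¹^2).mulVec x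
            = (((M' A B)⁻¹).mulVec ((a₁:ℝ) • e1) + ((M' A B)⁻¹^2).mulVec ((a₂:ℝ) • e1))
            - (((M' A B)⁻¹).mulVec ((a₁':ℝ) • e1) + ((M' A B)⁻¹^2).mulVec ((a₂':ℝ) • e1)) := by
          linear_combination (norm := module) (-1:ℝ) • h6
        rw [h7]
      have h9 := congrArg (fun z => ((M' A B)^2).mulVec z) h5
      simp only [Matrix.mulVec_mulVec, pow_mul_invpow A B hBne, Matrix.one_mulVec] at h9
      exact h9
    exact forward_lemma A B hA4 hB3 T hTcp hT x x' hx hx' D hdiff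
  · -- backward
    intro hcase
    obtain ⟨x, hx, x', hx', hdiff⟩ := construct_pair A B hA4 hB3 T hTne hTcp hT D hcase
    refine ⟨(∑ i : Fin 2, ((M' A B)⁻¹ ^ ((i : ℕ) + 1)).mulVec (((![a₁, a₂] i : ℤ) : ℝ) • e1))
      + ((M' A B)⁻¹^2).mulVec x, ⟨x, hx, rfl⟩, ⟨x', hx', ?_⟩⟩
    show (∑ i : Fin 2, ((M' A B)⁻¹ ^ ((i : ℕ) + 1)).mulVec (((![a₁', a₂'] i : ℤ) : ℝ) • e1))
      + ((M' A B)⁻¹^2).mulVec x'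
      = (∑ i : Fin 2, ((M' A B)⁻¹ ^ ((i : ℕ) + 1)).mulVec (((![a₁, a₂] i : ℤ) : ℝ) • e1))
      + ((M' A B)⁻¹^2).mulVec x
    rw [hsum a₁ a₂, hsum a₁' a₂']
    have h10 : ((M' A B)⁻¹^2).mulVec x' - ((M' A B)⁻¹^2).mulVec x
        = ((M' A B)⁻¹^2).mulVec ![(D:ℝ), 1] := by
      rw [← Matrix.mulVec_sub, hdiff]
    rw [← hiden] at h10
    linear_combination (norm := module) h10
end
end
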